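/- arXiv:2102.10257 — 7 statements merged into one kernel-verified Lean document; each statement's English description precedes it below -/
import Mathlib

section
/- Let λ₀ > 0, λ ∈ (0, λ₀], δ₀ ∈ (0,1), ε > 0, y₀ > 0. Let K : [ελ₀^{-1}, ∞) → ℝ with δ₀ < K(r) < δ₀^{-1}, K continuously differentiable with ‖K′‖_{L¹([ελ₀^{-1},∞))} ≤ δ₀^{-1}, and let G satisfy ‖G‖_{L¹([ελ^{-1},∞))} ≤ δ₀^{-1}λ for all λ ∈ (0,λ₀]. Consider the ODE y″ − λ²K²(r)y + G(r)y = 0 for r > ελ^{-1} with y(ελ^{-1}) = y₀ and y′(ελ^{-1}) = y₁ ∈ (0, δ₀^{-1}λy₀). Then: (i) for any solution y with y > 0 and y′ > 0 on its domain, there exist constants 0 < c < C depending only on δ₀ and ε (independent of λ ∈ (0,λ₀]) such that c y₀ e^{λ∫_{ε/λ}^{r} K(τ)dτ} ≤ y(r) ≤ C y₀ e^{λ∫_{ε/λ}^{r} K(τ)dτ} for all r ≥ ελ^{-1}; (ii) if in addition δ₀ < 1 − λ^{-2}K^{-2}(r)G(r) < δ₀^{-1} for all r, then the solution satisfies y >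 0, y′ > 0, and c(y₁ + y₀λ(e^{λ∫_{ε/λ}^{r}K(τ)dτ} − 1)) ≤ y′(r) ≤ C(y₁ + y₀λ(e^{λ∫_{ε/λ}^{r}K(τ)dτ} − 1)) for constants 0 < c < C independent of λ. -/
open MeasureTheory Set Real Filter
open scoped NNReal ENNReal

noncomputable section


private lemma expint_le {a b c : ℝ} (hc : 0 < c) :
    ∫ t in a..b, Real.exp (-c * (t - a)) ≤ c⁻¹ := by
  have key : ∀ t : ℝ, HasDerivAt (fun s => -c⁻¹ * Real.exp (-c * (s - a)))
      (Real.exp (-c * (t - a))) t := by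
    intro t
    have h1 : HasDerivAt (fun s => -c * (s - a)) (-c) t := by
      simpa using ((hasDerivAt_id t).sub_const a).const_mul (-c)
    have := (h1.exp).const_mul (-c⁻¹)
    refine this.congr_deriv ?_
    have hc' : c ≠ 0 := hc.ne'
    field_simp
  rw [intervalIntegral.integral_eq_sub_of_hasDerivAt (fun t _ => key t)
    (Continuous.intervalIntegrable (by continuity) a b)]
  have h2 : 0 ≤ Real.exp (-c * (b - a)) := (Real.exp_pos _).le
  have h3 : Real.exp (-c * (a - a)) = 1 := by simp
  rw [h3]
  nlinarith [inv_pos.mpr hc]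

private lemma myMono {f f' : ℝ → ℝ} {a b : ℝ}
    (hc : ContinuousOn f (Icc a b))
    (hd : ∀ x ∈ Ioo a b, HasDerivAt f (f' x) x)
    (h0 : ∀ x ∈ Ioo a b, 0 ≤ f' x) : MonotoneOn f (Icc a b) := by
  apply monotoneOn_of_deriv_nonneg (convex_Icc a b) hc
  · intro x hx; rw [interior_Icc] at hx
    exact (hd x hx).differentiableAt.differentiableWithinAt
  · intro x hx; rw [interior_Icc] at hx
    rw [(hd x hx).deriv]; exact h0 x hx

private lemma myStrictMono {f f' : ℝ → ℝ} {a b : ℝ}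
    (hc : ContinuousOn f (Icc a b))
    (hd : ∀ x ∈ Ioo a b, HasDerivAt f (f' x) x)
    (h0 : ∀ x ∈ Ioo a b, 0 < f' x) : StrictMonoOn f (Icc a b) := by
  apply strictMonoOn_of_deriv_pos (convex_Icc a b) hc
  intro x hx; rw [interior_Icc] at hx
  rw [(hd x hx).deriv]; exact h0 x hx

set_option maxHeartbeats 1000000 in
private lemma aux_sandwich
    (δ0 ε a0 lam lam0 : ℝ) (hδ0 : δ0 ∈ Ioo (0:ℝ) 1) (hε : 0 < ε)
    (hlam : lam ∈ Ioc (0:ℝ) lam0) (hlam0 : 0 < lam0) (ha0 : a0 = ε / lam0)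
    (K K' G y y' : ℝ → ℝ) (y₀ y₁ : ℝ)
    (hK : ∀ r ∈ Ici a0, δ0 < K r ∧ K r < δ0⁻¹)
    (hKd : ∀ r ∈ Ici a0, HasDerivWithinAt K (K' r) (Ici a0) r)
    (hK'c : ContinuousOn K' (Ici a0))
    (hK'i : IntegrableOn K' (Ici a0))
    (hK'n : (∫ r in Ici a0, |K' r|) ≤ δ0⁻¹)
    (hGi : IntegrableOn G (Ici (ε/lam)))
    (hGn : (∫ r in Ici (ε/lam), |G r|) ≤ δ0⁻¹ * lam)
    (hy₀ : 0 < y₀) (hy₁ : y₁ ∈ Ioo (0:ℝ) (δ0⁻¹ * lam * y₀))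
    (hya : y (ε/lam) = y₀) (hy'a : y' (ε/lam) = y₁)
    (hyd : ∀ r ∈ Ici (ε/lam), HasDerivWithinAt y (y' r) (Ici (ε/lam)) r)
    (hy'd : ∀ r ∈ Ici (ε/lam), HasDerivWithinAt y'
      (lam^2 * K r^2 * y r - G r * y r) (Ici (ε/lam)) r)
    (hpos : ∀ r ∈ Ici (ε/lam), 0 < y r ∧ 0 < y' r) :
    ∀ R ∈ Ici (ε/lam),
      Real.exp (-(3*δ0⁻¹*δ0⁻¹)) * y₀ * Real.exp (lam * ∫ τ in Ioc (ε/lam) R, K τ) ≤ y R ∧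
      y R ≤ Real.exp (3*δ0⁻¹*δ0⁻¹) * y₀ * Real.exp (lam * ∫ τ in Ioc (ε/lam) R, K τ) := by
  intro R hR
  obtain ⟨hlamp, hlaml⟩ := hlam
  obtain ⟨hδp, hδ1⟩ := hδ0
  set a := ε / lam with ha
  have hap : 0 < a := div_pos hε hlamp
  have ha0p : 0 < a0 := ha0 ▸ div_pos hε hlam0
  have ha0a : a0 ≤ a := by
    rw [ha0, ha]; exact div_le_div_of_nonneg_left hε.le hlamp hlaml
  have haR : a ≤ R := hR
  have hIciIci : Ici a ⊆ Ici a0 := Ici_subset_Ici.mpr ha0a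
  have hIccIci : Icc a R ⊆ Ici a := Icc_subset_Ici_self
  have hIccIci0 : Icc a R ⊆ Ici a0 := hIccIci.trans hIciIci
  -- interior membership facts
  have hmemIoo : ∀ r ∈ Ioo a R, r ∈ Ici a ∧ Ici a ∈ nhds r ∧ Ici a0 ∈ nhds r := by
    intro r hr
    exact ⟨le_of_lt hr.1, Ici_mem_nhds hr.1, Ici_mem_nhds (lt_of_le_of_lt ha0a hr.1)⟩
  -- continuity
  have hKc : ContinuousOn K (Ici a0) := fun r hr => (hKd r hr).continuousWithinAt
  have hyc : ContinuousOn y (Icc a R) :=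
    fun r hr => ((hyd r (hIccIci hr)).continuousWithinAt).mono hIccIci
  have hy'c : ContinuousOn y' (Icc a R) :=
    fun r hr => ((hy'd r (hIccIci hr)).continuousWithinAt).mono hIccIci
  have hKcI : ContinuousOn K (Icc a R) := hKc.mono hIccIci0
  -- HasDerivAt at interior points
  have hyA : ∀ r ∈ Ioo a R, HasDerivAt y (y' r) r := by
    intro r hr
    exact (hyd r (hmemIoo r hr).1).hasDerivAt (hmemIoo r hr).2.1
  have hy'A : ∀ r ∈ Ioo a R, HasDerivAt y' (lam^2 * K r^2 * y r - G r * y r) r := by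
    intro r hr
    exact (hy'd r (hmemIoo r hr).1).hasDerivAt (hmemIoo r hr).2.1
  have hKA : ∀ r ∈ Ioo a R, HasDerivAt K (K' r) r := by
    intro r hr
    exact (hKd r (hIciIci (hmemIoo r hr).1)).hasDerivAt (hmemIoo r hr).2.2
  -- positivity on Icc
  have hypos : ∀ r ∈ Icc a R, 0 < y r := fun r hr => (hpos r (hIccIci hr)).1
  have hy'pos : ∀ r ∈ Icc a R, 0 < y' r := fun r hr => (hpos r (hIccIci hr)).2
  have hyne : ∀ r ∈ Icc a R, y r ≠ 0 := fun r hr => (hypos r hr).ne'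
  -- K integrable on Icc a R
  have hKint : IntervalIntegrable K volume a R := by
    apply ContinuousOn.intervalIntegrable
    rwa [uIcc_of_le haR]  -- K continuous on Icc a R
  -- primitive of K
  set φ : ℝ → ℝ := fun r => ∫ t in a..r, K t with hφ
  have hφd : ∀ r ∈ Ioo a R, HasDerivAt φ (K r) r := by
    intro r hr
    apply intervalIntegral.integral_hasDerivAt_right
      ((hKint.mono_set (by rw [uIcc_of_le haR, uIcc_of_le hr.1.le]; exact Icc_subset_Icc le_rfl hr.2.le)))
    · exact (hKc.mono (Ioi_subset_Ici le_rfl : Ioi a0 ⊆ Ici a0)).stronglyMeasurableAtFilter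
        isOpen_Ioi r (lt_of_le_of_lt ha0a hr.1)
    · exact (hKc r (hIciIci hr.1.le)).continuousAt (Ici_mem_nhds (lt_of_le_of_lt ha0a hr.1))
  have hφc : ContinuousOn φ (Icc a R) := by
    have h1 : IntegrableOn K (uIcc a R) volume :=
      hKcI.integrableOn_Icc.mono_set (uIcc_of_le haR).subset
    have := intervalIntegral.continuousOn_primitive_interval h1
    rwa [uIcc_of_le haR] at this
  have hφa : φ a = 0 := intervalIntegral.integral_same
  -- P, D
  set P : ℝ → ℝ := fun r => Real.log (y r) - Real.log y₀ + lam * φ r with hP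
  set D : ℝ → ℝ := fun r => Real.log (y r) - Real.log y₀ - lam * φ r with hD
  have hPc : ContinuousOn P (Icc a R) :=
    ((hyc.log hyne).sub continuousOn_const).add (continuousOn_const.mul hφc)
  have hDc : ContinuousOn D (Icc a R) :=
    ((hyc.log hyne).sub continuousOn_const).sub (continuousOn_const.mul hφc)
  have hPd : ∀ r ∈ Ioo a R, HasDerivAt P (y' r / y r + lam * K r) r := by
    intro r hr
    exact (((hyA r hr).log (hyne r (Ioo_subset_Icc_self hr))).sub_const
      (Real.log y₀)).add ((hφd r hr).const_mul lam)
  have hDd : ∀ r ∈ Ioo a R, HasDerivAt D (y' r / y r - lam * K r) r := by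
    intro r hr
    exact (((hyA r hr).log (hyne r (Ioo_subset_Icc_self hr))).sub_const
      (Real.log y₀)).sub ((hφd r hr).const_mul lam)
  have hPa : P a = 0 := by simp [hP, hφa, hya]
  have hDa : D a = 0 := by simp [hD, hφa, hya]
  -- J : primitive of exp (-P)
  have hePc : ContinuousOn (fun t => Real.exp (-P t)) (Icc a R) :=
    (Real.continuous_exp.comp_continuousOn hPc.neg)
  have hePint : IntegrableOn (fun t => Real.exp (-P t)) (uIcc a R) volume :=
    hePc.integrableOn_Icc.mono_set (uIcc_of_le haR).subset
  set J : ℝ → ℝ := fun r => ∫ t in a..r, Real.exp (-P t) with hJ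
  have hJc : ContinuousOn J (Icc a R) := by
    have := intervalIntegral.continuousOn_primitive_interval hePint
    rwa [uIcc_of_le haR] at this
  have hJd : ∀ r ∈ Ioo a R, HasDerivAt J (Real.exp (-P r)) r := by
    intro r hr
    apply intervalIntegral.integral_hasDerivAt_right
      (ContinuousOn.intervalIntegrable (by rw [uIcc_of_le hr.1.le]; exact hePc.mono (Icc_subset_Icc le_rfl hr.2.le)))
    · exact ((Real.continuous_exp.comp_continuousOn
        ((hPc.mono Ioo_subset_Icc_self).neg)).stronglyMeasurableAtFilter isOpen_Ioo r hr)
    · exact (hePc r (Ioo_subset_Icc_self hr)).continuousAt (Icc_mem_nhds hr.1 hr.2)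
  -- n
  set n : ℝ → ℝ := fun r => Real.exp (P r) * (J R - J r) with hn
  have hnc : ContinuousOn n (Icc a R) :=
    (Real.continuous_exp.comp_continuousOn hPc).mul (continuousOn_const.sub hJc)
  have hnd : ∀ r ∈ Ioo a R, HasDerivAt n
      ((y' r / y r + lam * K r) * n r - 1) r := by
    intro r hr
    have h1 := ((hPd r hr).exp).mul ((hJd r hr).const_sub (J R))
    refine h1.congr_deriv ?_
    rw [hn]
    have : Real.exp (P r) * Real.exp (-P r) = 1 := by
      rw [← Real.exp_add]; simp
    nlinarith [this]
  -- w
  set w : ℝ → ℝ := fun r => y' r / y r - lam * K r with hw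
  have hwc : ContinuousOn w (Icc a R) :=
    ((hy'c.div hyc hyne)).sub (continuousOn_const.mul hKcI)
  have hwd : ∀ r ∈ Ioo a R, HasDerivAt w
      (lam^2 * K r^2 - G r - (y' r / y r)^2 - lam * K' r) r := by
    intro r hr
    have hne := hyne r (Ioo_subset_Icc_self hr)
    have h1 := ((hy'A r hr).div (hyA r hr) hne).sub ((hKA r hr).const_mul lam)
    refine h1.congr_deriv ?_
    field_simp
  -- F and its derivative
  set F : ℝ → ℝ := fun r => D r + n r * w r with hF
  have hFc : ContinuousOn F (Icc a R) := hDc.add (hnc.mul hwc)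
  have hFd : ∀ r ∈ Ioo a R, HasDerivAt F (-(n r * (G r + lam * K' r))) r := by
    intro r hr
    have hne := hyne r (Ioo_subset_Icc_self hr)
    have h1 := (hDd r hr).add ((hnd r hr).mul (hwd r hr))
    refine h1.congr_deriv ?_
    rw [hw]
    ring
  -- linear growth of P
  have hPlin : ∀ r ∈ Icc a R, ∀ t ∈ Icc a R, r ≤ t → lam * δ0 * (t - r) ≤ P t - P r := by
    have hd' : ∀ x ∈ Ioo a R, HasDerivAt (fun s => P s - lam * δ0 * s)
        (y' x / y x + lam * K x - lam * δ0) x := by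
      intro x hx
      have h1 := (hPd x hx).sub ((hasDerivAt_id x).const_mul (lam * δ0))
      exact h1.congr_deriv (by ring)
    have hm : MonotoneOn (fun s => P s - lam * δ0 * s) (Icc a R) := by
      apply myMono (hPc.sub (continuousOn_const.mul continuousOn_id)) hd'
      intro x hx
      have hKx := hK x (hIccIci0 (Ioo_subset_Icc_self hx))
      have hyx := hypos x (Ioo_subset_Icc_self hx)
      have hy'x := hy'pos x (Ioo_subset_Icc_self hx)
      have hu : 0 < y' x / y x := div_pos hy'x hyx
      nlinarith
    intro r hr t ht hrt
    have := hm hr ht hrt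
    simp only at this
    nlinarith
  -- representation and bounds for n
  have hJsub : ∀ r ∈ Icc a R, J R - J r = ∫ t in r..R, Real.exp (-P t) := by
    intro r hr
    exact intervalIntegral.integral_interval_sub_left
      (hePint.intervalIntegrable)
      (ContinuousOn.intervalIntegrable (by rw [uIcc_of_le hr.1]; exact hePc.mono (Icc_subset_Icc le_rfl hr.2)))
  have hn_repr : ∀ r ∈ Icc a R, n r = ∫ t in r..R, Real.exp (P r - P t) := by
    intro r hr
    rw [hn]
    simp only
    rw [hJsub r hr, ← intervalIntegral.integral_const_mul]
    refine intervalIntegral.integral_congr fun t _ => ?_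
    show Real.exp (P r) * Real.exp (-P t) = Real.exp (P r - P t)
    rw [← Real.exp_add]
    congr 1
  have hn_nonneg : ∀ r ∈ Icc a R, 0 ≤ n r := by
    intro r hr
    rw [hn_repr r hr]
    exact intervalIntegral.integral_nonneg hr.2 (fun u _ => (Real.exp_pos _).le)
  have hn_le : ∀ r ∈ Icc a R, n r ≤ (lam * δ0)⁻¹ := by
    intro r hr
    rw [hn_repr r hr]
    calc (∫ t in r..R, Real.exp (P r - P t))
        ≤ ∫ t in r..R, Real.exp (-(lam * δ0) * (t - r)) := by
          apply intervalIntegral.integral_mono_on hr.2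
          · exact ContinuousOn.intervalIntegrable (by
              rw [uIcc_of_le hr.2]
              exact Real.continuous_exp.comp_continuousOn
                (continuousOn_const.sub (hPc.mono (Icc_subset_Icc hr.1 le_rfl))))
          · exact Continuous.intervalIntegrable
              (by fun_prop) _ _
          · intro t ht
            apply Real.exp_le_exp.mpr
            have := hPlin r hr t ⟨hr.1.trans ht.1, ht.2⟩ ht.1
            nlinarith
      _ ≤ (lam * δ0)⁻¹ := expint_le (mul_pos hlamp hδp)
  -- integrability of the forcing term
  have hGicc : IntegrableOn G (Icc a R) volume := hGi.mono_set hIccIci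
  have hK'icc : IntegrableOn K' (Icc a R) volume := hK'i.mono_set hIccIci0
  have hg_int : IntegrableOn (fun t => G t + lam * K' t) (Icc a R) volume :=
    hGicc.add (hK'icc.const_mul lam)
  have hng_int : IntegrableOn (fun t => n t * (G t + lam * K' t)) (Icc a R) volume :=
    IntegrableOn.continuousOn_mul hnc hg_int isCompact_Icc
  have hng_ii : IntervalIntegrable (fun t => -(n t * (G t + lam * K' t))) volume a R :=
    IntegrableOn.intervalIntegrable (by rw [uIcc_of_le haR]; exact hng_int.neg)
  -- FTC
  have hFTC : ∫ t in a..R, -(n t * (G t + lam * K' t)) = F R - F a :=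
    intervalIntegral.integral_eq_sub_of_hasDeriv_right_of_le haR hFc
      (fun x hx => (hFd x hx).hasDerivWithinAt) hng_ii
  have hnR : n R = 0 := by rw [hn]; simp
  have hDR : D R = n a * w a + ∫ t in a..R, -(n t * (G t + lam * K' t)) := by
    have h1 : F R = D R := by rw [hF]; simp [hnR]
    have h2 : F a = n a * w a := by rw [hF]; simp [hDa]
    rw [hFTC, h1, h2]; ring
  -- bound |w a|
  have haM : a ∈ Icc a R := ⟨le_rfl, haR⟩
  have hwa : |w a| ≤ lam * δ0⁻¹ := by
    have hwav : w a = y₁ / y₀ - lam * K a := by rw [hw]; simp [hya, hy'a]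
    have hKa := hK a (hIciIci self_mem_Ici)
    have h1 : 0 < y₁ / y₀ := div_pos hy₁.1 hy₀
    have h2 : y₁ / y₀ < δ0⁻¹ * lam := (div_lt_iff₀ hy₀).mpr (by linarith [hy₁.2])
    have hδinv : 0 < δ0⁻¹ := inv_pos.mpr hδp
    rw [hwav, abs_le]
    constructor <;> nlinarith [hKa.1, hKa.2, mul_pos hlamp hδp]
  -- bound the integral term
  have hintb : |∫ t in a..R, -(n t * (G t + lam * K' t))| ≤ (lam * δ0)⁻¹ * (δ0⁻¹ * lam + lam * δ0⁻¹) := by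
    have step1 : |∫ t in a..R, -(n t * (G t + lam * K' t))| ≤
        ∫ t in a..R, |(-(n t * (G t + lam * K' t)))| :=
      intervalIntegral.abs_integral_le_integral_abs haR
    have step2 : ∫ t in a..R, |(-(n t * (G t + lam * K' t)))| ≤
        ∫ t in a..R, (lam * δ0)⁻¹ * (|G t| + lam * |K' t|) := by
      apply intervalIntegral.integral_mono_on haR
      · exact IntegrableOn.intervalIntegrable (by rw [uIcc_of_le haR]; exact hng_int.neg.abs)
      · exact IntegrableOn.intervalIntegrable (by
          rw [uIcc_of_le haR]
          exact ((hGicc.abs.add ((hK'icc.abs).const_mul lam)).const_mul ((lam * δ0)⁻¹)))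
      · intro t ht
        have h1 : |(-(n t * (G t + lam * K' t)))| = n t * |G t + lam * K' t| := by
          rw [abs_neg, abs_mul, abs_of_nonneg (hn_nonneg t ht)]
        rw [h1]
        have h2 : |G t + lam * K' t| ≤ |G t| + lam * |K' t| := by
          calc |G t + lam * K' t| ≤ |G t| + |lam * K' t| := abs_add_le _ _
            _ = |G t| + lam * |K' t| := by rw [abs_mul, abs_of_pos hlamp]
        have h3 : 0 ≤ |G t| + lam * |K' t| := by positivity
        have := hn_le t ht
        have := hn_nonneg t ht
        nlinarith
    have step3 : ∫ t in a..R, (lam * δ0)⁻¹ * (|G t| + lam * |K' t|) =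
        (lam * δ0)⁻¹ * ((∫ t in a..R, |G t|) + lam * ∫ t in a..R, |K' t|) := by
      rw [intervalIntegral.integral_const_mul]
      congr 1
      rw [← intervalIntegral.integral_const_mul, ← intervalIntegral.integral_add]
      · exact IntegrableOn.intervalIntegrable (by rw [uIcc_of_le haR]; exact hGicc.abs)
      · exact IntegrableOn.intervalIntegrable (by rw [uIcc_of_le haR]; exact hK'icc.abs.const_mul lam)
    have hGb : ∫ t in a..R, |G t| ≤ δ0⁻¹ * lam := by
      refine le_trans ?_ hGn
      rw [intervalIntegral.integral_of_le haR]
      exact setIntegral_mono_set hGi.abs (Eventually.of_forall fun x => abs_nonneg _)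
        (HasSubset.Subset.eventuallyLE (Ioc_subset_Icc_self.trans Icc_subset_Ici_self))
    have hK'b : ∫ t in a..R, |K' t| ≤ δ0⁻¹ := by
      refine le_trans ?_ hK'n
      rw [intervalIntegral.integral_of_le haR]
      exact setIntegral_mono_set hK'i.abs (Eventually.of_forall fun x => abs_nonneg _)
        (HasSubset.Subset.eventuallyLE ((Ioc_subset_Icc_self.trans Icc_subset_Ici_self).trans hIciIci))
    have hGabs : 0 ≤ ∫ t in a..R, |G t| := by
      rw [intervalIntegral.integral_of_le haR]
      positivity
    have hK'abs : 0 ≤ ∫ t in a..R, |K' t| := by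
      rw [intervalIntegral.integral_of_le haR]
      positivity
    have hld : 0 < (lam * δ0)⁻¹ := inv_pos.mpr (mul_pos hlamp hδp)
    calc |∫ t in a..R, -(n t * (G t + lam * K' t))| ≤
        ∫ t in a..R, (lam * δ0)⁻¹ * (|G t| + lam * |K' t|) := le_trans step1 step2
      _ = (lam * δ0)⁻¹ * ((∫ t in a..R, |G t|) + lam * ∫ t in a..R, |K' t|) := step3
      _ ≤ (lam * δ0)⁻¹ * (δ0⁻¹ * lam + lam * δ0⁻¹) := by
          apply mul_le_mul_of_nonneg_left _ hld.le
          have h5 : lam * (∫ t in a..R, |K' t|) ≤ lam * δ0⁻¹ :=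
            mul_le_mul_of_nonneg_left hK'b hlamp.le
          linarith
  -- |D R| ≤ 3 δ0⁻²
  have hDabs : |D R| ≤ 3 * δ0⁻¹ * δ0⁻¹ := by
    have h1 : |D R| ≤ |n a * w a| + |∫ t in a..R, -(n t * (G t + lam * K' t))| := by
      rw [hDR]; exact abs_add_le _ _
    have h2 : |n a * w a| ≤ (lam * δ0)⁻¹ * (lam * δ0⁻¹) := by
      rw [abs_mul, abs_of_nonneg (hn_nonneg a haM)]
      have := hn_le a haM
      have h3 : 0 < (lam * δ0)⁻¹ := inv_pos.mpr (mul_pos hlamp hδp)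
      exact mul_le_mul this hwa (abs_nonneg _) (inv_pos.mpr (mul_pos hlamp hδp)).le
    have hlne : lam ≠ 0 := hlamp.ne'
    have hδne : δ0 ≠ 0 := hδp.ne'
    have hsimp : (lam * δ0)⁻¹ * (lam * δ0⁻¹) = δ0⁻¹ * δ0⁻¹ := by
      field_simp
    have hsimp2 : (lam * δ0)⁻¹ * (δ0⁻¹ * lam + lam * δ0⁻¹) = 2 * (δ0⁻¹ * δ0⁻¹) := by
      field_simp
      ring
    rw [hsimp] at h2
    rw [hsimp2] at hintb
    linarith
  -- conclusion
  have hyRpos : 0 < y R := hypos R ⟨haR, le_rfl⟩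
  have hyR : y R = Real.exp (D R) * y₀ * Real.exp (lam * φ R) := by
    rw [← Real.exp_log hy₀, ← Real.exp_add, ← Real.exp_add]
    rw [← Real.exp_log hyRpos]
    congr 1
    rw [hD]
    simp only
    ring
  have hφIoc : (∫ τ in Ioc a R, K τ) = φ R := by
    rw [hφ]
    simp only
    rw [intervalIntegral.integral_of_le haR]
  rw [hφIoc, hyR]
  have hepos : 0 < y₀ * Real.exp (lam * φ R) := by positivity
  obtain ⟨hDl, hDu⟩ := abs_le.mp hDabs
  constructor
  · have := Real.exp_le_exp.mpr hDl
    nlinarith [Real.exp_pos (D R), Real.exp_pos (-(3*δ0⁻¹*δ0⁻¹))]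
  · have := Real.exp_le_exp.mpr hDu
    nlinarith [Real.exp_pos (D R), Real.exp_pos (3*δ0⁻¹*δ0⁻¹)]

set_option maxHeartbeats 1000000 in
private lemma aux_pos
    (δ0 ε lam : ℝ) (hδp : 0 < δ0) (hδ1 : δ0 < 1) (hε : 0 < ε) (hlamp : 0 < lam)
    (K G y y' : ℝ → ℝ) (y₀ y₁ : ℝ)
    (hK : ∀ r ∈ Ici (ε/lam), 0 < K r)
    (hii : ∀ r ∈ Ici (ε/lam), δ0 < 1 - G r / (lam^2 * K r^2))
    (hy₀ : 0 < y₀) (hy₁ : 0 < y₁)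
    (hya : y (ε/lam) = y₀) (hy'a : y' (ε/lam) = y₁)
    (hyd : ∀ r ∈ Ici (ε/lam), HasDerivWithinAt y (y' r) (Ici (ε/lam)) r)
    (hy'd : ∀ r ∈ Ici (ε/lam), HasDerivWithinAt y'
      (lam^2 * K r^2 * y r - G r * y r) (Ici (ε/lam)) r) :
    ∀ r ∈ Ici (ε/lam), 0 < y r ∧ 0 < y' r := by
  set a := ε / lam with ha
  have hap : 0 < a := div_pos hε hlamp
  -- q > 0
  have hq : ∀ r ∈ Ici a, 0 < lam^2 * K r^2 - G r := by
    intro r hr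
    have h := hii r hr
    have hKp := hK r hr
    have hK2 : 0 < lam^2 * K r^2 := by positivity
    have h2 : G r / (lam^2 * K r^2) < 1 - δ0 := by linarith
    have h3 : G r < (1 - δ0) * (lam^2 * K r^2) := (div_lt_iff₀ hK2).mp h2
    nlinarith
  have hyc : ContinuousOn y (Ici a) := fun r hr => (hyd r hr).continuousWithinAt
  have hy'c : ContinuousOn y' (Ici a) := fun r hr => (hy'd r hr).continuousWithinAt
  have hyA : ∀ r, a < r → HasDerivAt y (y' r) r :=
    fun r hr => (hyd r hr.le).hasDerivAt (Ici_mem_nhds hr)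
  have hy'A : ∀ r, a < r → HasDerivAt y' (lam^2 * K r^2 * y r - G r * y r) r :=
    fun r hr => (hy'd r hr.le).hasDerivAt (Ici_mem_nhds hr)
  -- y' > 0 everywhere
  have hy'pos : ∀ r ∈ Ici a, 0 < y' r := by
    by_contra hcon
    push_neg at hcon
    obtain ⟨r₀, hr₀, hr₀le⟩ := hcon
    set B := Ici a ∩ y' ⁻¹' (Iic 0) with hB
    have hBne : B.Nonempty := ⟨r₀, hr₀, hr₀le⟩
    have hBbdd : BddBelow B := ⟨a, fun x hx => hx.1⟩
    have hBclosed : IsClosed B :=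
      hy'c.preimage_isClosed_of_isClosed isClosed_Ici isClosed_Iic
    set t₀ := sInf B with ht₀
    have ht₀B : t₀ ∈ B := hBclosed.csInf_mem hBne hBbdd
    have hat₀ : a ≤ t₀ := ht₀B.1
    have ht₀le : y' t₀ ≤ 0 := ht₀B.2
    have hane : a ≠ t₀ := by
      intro h
      rw [← h, hy'a] at ht₀le
      linarith
    have hat₀' : a < t₀ := lt_of_le_of_ne hat₀ hane
    have hpre : ∀ s ∈ Ico a t₀, 0 < y' s := by
      intro s hs
      by_contra hcon2
      push_neg at hcon2
      have : s ∈ B := ⟨hs.1, hcon2⟩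
      have := csInf_le hBbdd this
      exact absurd hs.2 (not_lt.mpr this)
    have hIccsub : Icc a t₀ ⊆ Ici a := Icc_subset_Ici_self
    have hyMono : MonotoneOn y (Icc a t₀) := by
      apply myMono (hyc.mono hIccsub) (fun x hx => hyA x hx.1)
      exact fun x hx => (hpre x ⟨hx.1.le, hx.2⟩).le
    have hyge : ∀ s ∈ Icc a t₀, y₀ ≤ y s := by
      intro s hs
      have := hyMono (left_mem_Icc.mpr hat₀'.le) hs hs.1
      rwa [hya] at this
    have hy'Strict : StrictMonoOn y' (Icc a t₀) := by
      apply myStrictMono (hy'c.mono hIccsub) (fun x hx => hy'A x hx.1)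
      intro x hx
      have h1 := hq x (hIccsub (Ioo_subset_Icc_self hx))
      have h2 := hyge x (Ioo_subset_Icc_self hx)
      nlinarith
    have := hy'Strict (left_mem_Icc.mpr hat₀'.le) (right_mem_Icc.mpr hat₀'.le) hat₀'
    rw [hy'a] at this
    linarith
  intro r hr
  refine ⟨?_, hy'pos r hr⟩
  have hyMono : MonotoneOn y (Icc a r) := by
    apply myMono (hyc.mono Icc_subset_Ici_self) (fun x hx => hyA x hx.1)
    exact fun x hx => (hy'pos x (Icc_subset_Ici_self (Ioo_subset_Icc_self hx))).le
  have := hyMono (left_mem_Icc.mpr hr) (right_mem_Icc.mpr hr) hr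
  rw [hya] at this
  linarith

set_option maxHeartbeats 1000000 in
private lemma aux_deriv
    (δ0 ε a0 lam lam0 : ℝ) (hδp : 0 < δ0) (hδ1 : δ0 < 1) (hε : 0 < ε)
    (hlamp : 0 < lam) (hlaml : lam ≤ lam0) (hlam0 : 0 < lam0) (ha0 : a0 = ε / lam0)
    (K G y y' : ℝ → ℝ) (y₀ y₁ ci Ci : ℝ) (hci : 0 < ci) (hCi : 0 < Ci)
    (hK : ∀ r ∈ Ici a0, δ0 < K r ∧ K r < δ0⁻¹)
    (hKc : ContinuousOn K (Ici a0))
    (hGi : IntegrableOn G (Ici (ε/lam)))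
    (hii : ∀ r ∈ Ici (ε/lam), δ0 < 1 - G r / (lam^2 * K r^2) ∧
      1 - G r / (lam^2 * K r^2) < δ0⁻¹)
    (hy₀ : 0 < y₀) (hy'a : y' (ε/lam) = y₁)
    (hyd : ∀ r ∈ Ici (ε/lam), HasDerivWithinAt y (y' r) (Ici (ε/lam)) r)
    (hy'd : ∀ r ∈ Ici (ε/lam), HasDerivWithinAt y'
      (lam^2 * K r^2 * y r - G r * y r) (Ici (ε/lam)) r)
    (hsand : ∀ r ∈ Ici (ε/lam),
      ci * y₀ * Real.exp (lam * ∫ τ in Ioc (ε/lam) r, K τ) ≤ y r ∧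
      y r ≤ Ci * y₀ * Real.exp (lam * ∫ τ in Ioc (ε/lam) r, K τ)) :
    ∀ R ∈ Ici (ε/lam),
      y₁ + δ0^4 * ci * y₀ * lam * (Real.exp (lam * ∫ τ in Ioc (ε/lam) R, K τ) - 1) ≤ y' R ∧
      y' R ≤ y₁ + δ0⁻¹^4 * Ci * y₀ * lam *
        (Real.exp (lam * ∫ τ in Ioc (ε/lam) R, K τ) - 1) := by
  intro R hR
  set a := ε / lam with ha
  have hap : 0 < a := div_pos hε hlamp
  have ha0p : 0 < a0 := ha0 ▸ div_pos hε hlam0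
  have ha0a : a0 ≤ a := by
    rw [ha0, ha]; exact div_le_div_of_nonneg_left hε.le hlamp hlaml
  have haR : a ≤ R := hR
  have hIciIci : Ici a ⊆ Ici a0 := Ici_subset_Ici.mpr ha0a
  have hIccIci : Icc a R ⊆ Ici a := Icc_subset_Ici_self
  have hIccIci0 : Icc a R ⊆ Ici a0 := hIccIci.trans hIciIci
  have hKcIcc : ContinuousOn K (Icc a R) := hKc.mono hIccIci0
  have hyc : ContinuousOn y (Icc a R) :=
    fun r hr => ((hyd r (hIccIci hr)).continuousWithinAt).mono hIccIci
  have hy'c : ContinuousOn y' (Icc a R) :=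
    fun r hr => ((hy'd r (hIccIci hr)).continuousWithinAt).mono hIccIci
  have hKint : IntervalIntegrable K volume a R :=
    ContinuousOn.intervalIntegrable (by rwa [uIcc_of_le haR])
  -- primitive of K
  set φ : ℝ → ℝ := fun r => ∫ t in a..r, K t with hφ
  have hφd : ∀ r ∈ Ioo a R, HasDerivAt φ (K r) r := by
    intro r hr
    apply intervalIntegral.integral_hasDerivAt_right
      ((hKint.mono_set (by rw [uIcc_of_le haR, uIcc_of_le hr.1.le]; exact Icc_subset_Icc le_rfl hr.2.le)))
    · exact (hKc.mono (Ioi_subset_Ici le_rfl : Ioi a0 ⊆ Ici a0)).stronglyMeasurableAtFilter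
        isOpen_Ioi r (lt_of_le_of_lt ha0a hr.1)
    · exact (hKc r (hIciIci hr.1.le)).continuousAt (Ici_mem_nhds (lt_of_le_of_lt ha0a hr.1))
  have hφc : ContinuousOn φ (Icc a R) := by
    have h1 : IntegrableOn K (uIcc a R) volume :=
      hKcIcc.integrableOn_Icc.mono_set (uIcc_of_le haR).subset
    have := intervalIntegral.continuousOn_primitive_interval h1
    rwa [uIcc_of_le haR] at this
  have hφa : φ a = 0 := intervalIntegral.integral_same
  have hφIoc : ∀ t, a ≤ t → (∫ τ in Ioc a t, K τ) = φ t := by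
    intro t ht
    rw [hφ]
    simp only
    rw [intervalIntegral.integral_of_le ht]
  -- E
  set E : ℝ → ℝ := fun t => Real.exp (lam * φ t) with hE
  have hEc : ContinuousOn E (Icc a R) :=
    Real.continuous_exp.comp_continuousOn (continuousOn_const.mul hφc)
  have hEpos : ∀ t, 0 < E t := fun t => Real.exp_pos _
  have hEa : E a = 1 := by rw [hE]; simp [hφa]
  have hEd : ∀ t ∈ Ioo a R, HasDerivAt E (E t * (lam * K t)) t := by
    intro t ht
    exact ((hφd t ht).const_mul lam).exp
  have hEKint : IntervalIntegrable (fun t => E t * (lam * K t)) volume a R :=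
    ContinuousOn.intervalIntegrable (by
      rw [uIcc_of_le haR]
      exact hEc.mul (continuousOn_const.mul hKcIcc))
  have hEint : IntervalIntegrable E volume a R :=
    ContinuousOn.intervalIntegrable (by rw [uIcc_of_le haR]; exact hEc)
  have hEFTC : ∫ t in a..R, E t * (lam * K t) = E R - 1 := by
    rw [← hEa]
    exact intervalIntegral.integral_eq_sub_of_hasDeriv_right_of_le haR hEc
      (fun x hx => (hEd x hx).hasDerivWithinAt) hEKint
  set IE := ∫ t in a..R, E t with hIE
  have hIEnn : 0 ≤ IE :=
    intervalIntegral.integral_nonneg haR (fun u _ => (hEpos u).le)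
  have hX1 : lam * δ0 * IE ≤ E R - 1 := by
    rw [← hEFTC, hIE, ← intervalIntegral.integral_const_mul]
    apply intervalIntegral.integral_mono_on haR
      (ContinuousOn.intervalIntegrable (by
        rw [uIcc_of_le haR]; exact continuousOn_const.mul hEc)) hEKint
    intro t ht
    have hKt := hK t (hIccIci0 ht)
    have h := mul_le_mul_of_nonneg_left hKt.1.le (mul_pos hlamp (hEpos t)).le
    nlinarith [h]
  have hX2 : E R - 1 ≤ lam * δ0⁻¹ * IE := by
    rw [← hEFTC, hIE, ← intervalIntegral.integral_const_mul]
    apply intervalIntegral.integral_mono_on haR hEKint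
      (ContinuousOn.intervalIntegrable (by
        rw [uIcc_of_le haR]; exact continuousOn_const.mul hEc))
    intro t ht
    have hKt := hK t (hIccIci0 ht)
    have h := mul_le_mul_of_nonneg_left hKt.2.le (mul_pos hlamp (hEpos t)).le
    nlinarith [h]
  -- FTC for y'
  have hblow : ∀ t ∈ Icc a R,
      δ0^3 * lam^2 * (ci * y₀ * E t) ≤ lam^2 * K t^2 * y t - G t * y t ∧
      lam^2 * K t^2 * y t - G t * y t ≤ δ0⁻¹^3 * lam^2 * (Ci * y₀ * E t) := by
    intro t ht
    have hiit := hii t (hIccIci ht)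
    have hKt := hK t (hIccIci0 ht)
    have hKtp : 0 < K t := lt_trans hδp hKt.1
    have hK2 : 0 < lam^2 * K t^2 := by positivity
    have hq_eq : lam^2 * K t^2 - G t = (lam^2 * K t^2) * (1 - G t / (lam^2 * K t^2)) := by
      field_simp
    have hδinv : 1 < δ0⁻¹ := (one_lt_inv_iff₀).mpr ⟨hδp, hδ1⟩
    have hsq1 : δ0^2 ≤ K t^2 := by nlinarith [hKt.1, hδp]
    have hsq2 : K t^2 ≤ δ0⁻¹^2 := by nlinarith [hKt.1, hKt.2, hδp]
    have hA1 : lam^2 * δ0^2 ≤ lam^2 * K t^2 := by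
      exact mul_le_mul_of_nonneg_left hsq1 (sq_nonneg lam)
    have hA2 : lam^2 * K t^2 ≤ lam^2 * δ0⁻¹^2 := by
      exact mul_le_mul_of_nonneg_left hsq2 (sq_nonneg lam)
    have hqlow : δ0^3 * lam^2 ≤ lam^2 * K t^2 - G t := by
      rw [hq_eq]
      calc δ0^3 * lam^2 = (lam^2 * δ0^2) * δ0 := by ring
        _ ≤ (lam^2 * K t^2) * (1 - G t / (lam^2 * K t^2)) :=
            mul_le_mul hA1 hiit.1.le hδp.le (by positivity)
    have hqhigh : lam^2 * K t^2 - G t ≤ δ0⁻¹^3 * lam^2 := by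
      rw [hq_eq]
      calc (lam^2 * K t^2) * (1 - G t / (lam^2 * K t^2))
          ≤ (lam^2 * δ0⁻¹^2) * δ0⁻¹ :=
            mul_le_mul hA2 hiit.2.le (by linarith [hiit.1]) (by positivity)
        _ = δ0⁻¹^3 * lam^2 := by ring
    have hst := hsand t (hIccIci ht)
    rw [hφIoc t ht.1] at hst
    have hyE : ci * y₀ * E t ≤ y t := hst.1
    have hyE2 : y t ≤ Ci * y₀ * E t := hst.2
    have hytnn : 0 ≤ y t := le_trans (by positivity) hyE
    have heq : lam^2 * K t^2 * y t - G t * y t = (lam^2 * K t^2 - G t) * y t := by ring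
    constructor
    · rw [heq]
      calc δ0^3 * lam^2 * (ci * y₀ * E t) ≤ (lam^2 * K t^2 - G t) * (ci * y₀ * E t) := by
            apply mul_le_mul_of_nonneg_right hqlow (by positivity)
        _ ≤ (lam^2 * K t^2 - G t) * y t := by
            apply mul_le_mul_of_nonneg_left hyE (le_trans (by positivity) hqlow)
    · rw [heq]
      calc (lam^2 * K t^2 - G t) * y t ≤ (lam^2 * K t^2 - G t) * (Ci * y₀ * E t) := by
            apply mul_le_mul_of_nonneg_left hyE2 (le_trans (by positivity) hqlow)
        _ ≤ δ0⁻¹^3 * lam^2 * (Ci * y₀ * E t) := by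
            apply mul_le_mul_of_nonneg_right hqhigh (by positivity)
  have hQint : IntervalIntegrable (fun t => lam^2 * K t^2 * y t - G t * y t) volume a R := by
    apply IntervalIntegrable.sub
    · exact ContinuousOn.intervalIntegrable (by
        rw [uIcc_of_le haR]
        exact (continuousOn_const.mul (hKcIcc.pow 2)).mul hyc)
    · exact IntegrableOn.intervalIntegrable (by
        rw [uIcc_of_le haR]
        exact (hGi.mono_set hIccIci).mul_continuousOn hyc isCompact_Icc)
  have hYFTC : ∫ t in a..R, (lam^2 * K t^2 * y t - G t * y t) = y' R - y₁ := by
    rw [← hy'a]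
    exact intervalIntegral.integral_eq_sub_of_hasDeriv_right_of_le haR hy'c
      (fun x hx => ((hy'd x (hIccIci (Ioo_subset_Icc_self hx))).hasDerivAt
        (Ici_mem_nhds hx.1)).hasDerivWithinAt) hQint
  have hlow : δ0^3 * lam^2 * (ci * y₀ * IE) ≤ y' R - y₁ := by
    rw [← hYFTC, hIE]
    have : δ0^3 * lam^2 * (ci * y₀ * IE) = ∫ t in a..R, δ0^3*lam^2*(ci*y₀*E t) := by
      rw [intervalIntegral.integral_const_mul, intervalIntegral.integral_const_mul]
    rw [this]
    apply intervalIntegral.integral_mono_on haR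
      (ContinuousOn.intervalIntegrable (by
        rw [uIcc_of_le haR]
        exact continuousOn_const.mul (continuousOn_const.mul hEc))) hQint
    exact fun t ht => (hblow t ht).1
  have hhigh : y' R - y₁ ≤ δ0⁻¹^3 * lam^2 * (Ci * y₀ * IE) := by
    rw [← hYFTC, hIE]
    have : δ0⁻¹^3 * lam^2 * (Ci * y₀ * IE) = ∫ t in a..R, δ0⁻¹^3*lam^2*(Ci*y₀*E t) := by
      rw [intervalIntegral.integral_const_mul, intervalIntegral.integral_const_mul]
    rw [this]
    apply intervalIntegral.integral_mono_on haR hQint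
      (ContinuousOn.intervalIntegrable (by
        rw [uIcc_of_le haR]
        exact continuousOn_const.mul (continuousOn_const.mul hEc)))
    exact fun t ht => (hblow t ht).2
  -- convert IE bounds
  rw [hφIoc R haR]
  have h6 : δ0 * (E R - 1) ≤ lam * IE := by
    have h7 := mul_le_mul_of_nonneg_left hX2 hδp.le
    have h8 : δ0 * (lam * δ0⁻¹ * IE) = lam * IE := by
      field_simp
    linarith [h8 ▸ h7]
  have h6' : lam * IE ≤ δ0⁻¹ * (E R - 1) := by
    have h7 := mul_le_mul_of_nonneg_left hX1 (inv_pos.mpr hδp).le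
    have h8 : δ0⁻¹ * (lam * δ0 * IE) = lam * IE := by
      field_simp
    linarith [h8 ▸ h7]
  constructor
  · have h9 := mul_le_mul_of_nonneg_left h6
      (show (0:ℝ) ≤ δ0^3 * lam * ci * y₀ by positivity)
    have hfin : y₁ + δ0^4 * ci * y₀ * lam * (E R - 1) ≤ y' R := by nlinarith [h9, hlow]
    exact hfin
  · have h9 := mul_le_mul_of_nonneg_left h6'
      (show (0:ℝ) ≤ δ0⁻¹^3 * lam * Ci * y₀ by positivity)
    have hfin : y' R ≤ y₁ + δ0⁻¹^4 * Ci * y₀ * lam * (E R - 1) := by nlinarith [h9, hhigh]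
    exact hfin

set_option maxHeartbeats 1000000 in
/-- Lemma 3.1 of Liu–Wang: uniform estimates for solutions of
`y″ − λ²K²(r)y + G(r)y = 0` on `[ε/λ, ∞)`, with constants independent of `λ ∈ (0, λ₀]`. -/
theorem ode_uniform_estimates
    (lam0 δ0 ε : ℝ) (hlam0 : 0 < lam0) (hδ0 : δ0 ∈ Ioo (0 : ℝ) 1) (hε : 0 < ε) :
    ∃ c C : ℝ, 0 < c ∧ c < C ∧
      ∀ lam : ℝ, lam ∈ Ioc (0 : ℝ) lam0 →
      ∀ K K' G y y' : ℝ → ℝ, ∀ y₀ y₁ : ℝ,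
        -- hypotheses on `K`
        (∀ r ∈ Ici (ε / lam0), δ0 < K r ∧ K r < δ0⁻¹) →
        (∀ r ∈ Ici (ε / lam0), HasDerivWithinAt K (K' r) (Ici (ε / lam0)) r) →
        ContinuousOn K' (Ici (ε / lam0)) →
        IntegrableOn K' (Ici (ε / lam0)) →
        (∫ r in Ici (ε / lam0), |K' r|) ≤ δ0⁻¹ →
        -- hypothesis on `G`
        IntegrableOn G (Ici (ε / lam)) →
        (∫ r in Ici (ε / lam), |G r|) ≤ δ0⁻¹ * lam →
        -- the ODE with its initial conditions
        0 < y₀ → y₁ ∈ Ioo (0 : ℝ) (δ0⁻¹ * lam * y₀) →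
        y (ε / lam) = y₀ → y' (ε / lam) = y₁ →
        (∀ r ∈ Ici (ε / lam), HasDerivWithinAt y (y' r) (Ici (ε / lam)) r) →
        (∀ r ∈ Ici (ε / lam), HasDerivWithinAt y'
          (lam ^ 2 * K r ^ 2 * y r - G r * y r) (Ici (ε / lam)) r) →
        -- (i): uniform two-sided bound for positive increasing solutions
        ((∀ r ∈ Ici (ε / lam), 0 < y r ∧ 0 < y' r) →
          ∀ r ∈ Ici (ε / lam),
            c * y₀ * Real.exp (lam * ∫ τ in Ioc (ε / lam) r, K τ) ≤ y r ∧
            y r ≤ C * y₀ * Real.exp (lam * ∫ τ in Ioc (ε / lam) r, K τ)) ∧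
        -- (ii): positivity and derivative bounds under the extra assumption on `G/(λK)²`
        ((∀ r ∈ Ici (ε / lam), δ0 < 1 - G r / (lam ^ 2 * K r ^ 2) ∧
            1 - G r / (lam ^ 2 * K r ^ 2) < δ0⁻¹) →
          (∀ r ∈ Ici (ε / lam), 0 < y r ∧ 0 < y' r) ∧
          (∀ r ∈ Ici (ε / lam),
            c * (y₁ + y₀ * lam * (Real.exp (lam * ∫ τ in Ioc (ε / lam) r, K τ) - 1))
              ≤ y' r ∧
            y' r ≤
              C * (y₁ + y₀ * lam *
                (Real.exp (lam * ∫ τ in Ioc (ε / lam) r, K τ) - 1)))) := by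
  have hδp := hδ0.1
  have hδ1 := hδ0.2
  have hδINV : 1 < δ0⁻¹ := (one_lt_inv_iff₀).mpr ⟨hδp, hδ1⟩
  set ci := Real.exp (-(3*δ0⁻¹*δ0⁻¹)) with hci
  set Ci := Real.exp (3*δ0⁻¹*δ0⁻¹) with hCi
  have hcip : 0 < ci := Real.exp_pos _
  have hCip : 0 < Ci := Real.exp_pos _
  have hM : 0 < 3*δ0⁻¹*δ0⁻¹ := by positivity
  have hcilt : ci < 1 := by
    rw [hci]
    calc Real.exp (-(3*δ0⁻¹*δ0⁻¹)) < Real.exp 0 := Real.exp_lt_exp.mpr (by linarith)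
      _ = 1 := Real.exp_zero
  have hCigt : 1 < Ci := by
    rw [hCi]
    calc (1:ℝ) = Real.exp 0 := Real.exp_zero.symm
      _ < Real.exp (3*δ0⁻¹*δ0⁻¹) := Real.exp_lt_exp.mpr hM
  have hδ4 : δ0^4 ≤ 1 := pow_le_one₀ hδp.le hδ1.le
  have hδi4 : 1 ≤ δ0⁻¹^4 := one_le_pow₀ hδINV.le
  refine ⟨δ0^4 * ci, δ0⁻¹^4 * Ci, by positivity, ?_, ?_⟩
  · nlinarith
  intro lam hlam K K' G y y' y₀ y₁ hK hKd hK'c hK'i hK'n hGi hGn hy₀ hy₁ hya hy'a hyd hy'd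
  have hle : Ici (ε / lam) ⊆ Ici (ε / lam0) :=
    Ici_subset_Ici.mpr (div_le_div_of_nonneg_left hε.le hlam.1 hlam.2)
  have hsandgen : (∀ r ∈ Ici (ε / lam), 0 < y r ∧ 0 < y' r) →
      ∀ r ∈ Ici (ε / lam),
        ci * y₀ * Real.exp (lam * ∫ τ in Ioc (ε / lam) r, K τ) ≤ y r ∧
        y r ≤ Ci * y₀ * Real.exp (lam * ∫ τ in Ioc (ε / lam) r, K τ) := by
    intro hpos
    exact aux_sandwich δ0 ε (ε / lam0) lam lam0 hδ0 hε hlam hlam0 rfl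
      K K' G y y' y₀ y₁ hK hKd hK'c hK'i hK'n hGi hGn hy₀ hy₁ hya hy'a hyd hy'd hpos
  constructor
  · -- part (i)
    intro hpos r hr
    have hs := hsandgen hpos r hr
    set e := Real.exp (lam * ∫ τ in Ioc (ε / lam) r, K τ) with he
    have hepos : 0 < e := Real.exp_pos _
    constructor
    · have h2 : δ0^4 * (ci * y₀ * e) ≤ 1 * (ci * y₀ * e) :=
        mul_le_mul_of_nonneg_right hδ4 (by positivity)
      nlinarith [hs.1]
    · have h2 : 1 * (Ci * y₀ * e) ≤ δ0⁻¹^4 * (Ci * y₀ * e) :=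
        mul_le_mul_of_nonneg_right hδi4 (by positivity)
      nlinarith [hs.2]
  · -- part (ii)
    intro hii
    have hpos : ∀ r ∈ Ici (ε / lam), 0 < y r ∧ 0 < y' r := by
      apply aux_pos δ0 ε lam hδp hδ1 hε hlam.1 K G y y' y₀ y₁
        (fun r hr => lt_trans hδp (hK r (hle hr)).1)
        (fun r hr => (hii r hr).1) hy₀ hy₁.1 hya hy'a hyd hy'd
    refine ⟨hpos, ?_⟩
    intro r hr
    have hd := aux_deriv δ0 ε (ε / lam0) lam lam0 hδp hδ1 hε hlam.1 hlam.2 hlam0 rfl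
      K G y y' y₀ y₁ ci Ci hcip hCip hK
      (fun r hr => (hKd r hr).continuousWithinAt) hGi hii hy₀ hy'a hyd hy'd
      (hsandgen hpos) r hr
    set e := Real.exp (lam * ∫ τ in Ioc (ε / lam) r, K τ) with he
    constructor
    · have h2 : δ0^4 * ci ≤ 1 := by nlinarith
      have h3 : (δ0^4 * ci) * y₁ ≤ y₁ :=
        le_trans (mul_le_mul_of_nonneg_right h2 hy₁.1.le) (by linarith)
      nlinarith [hd.1]
    · have h2 : 1 ≤ δ0⁻¹^4 * Ci := by nlinarith
      have h3 : y₁ ≤ (δ0⁻¹^4 * Ci) * y₁ :=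
        le_trans (by linarith) (mul_le_mul_of_nonneg_right h2 hy₁.1.le)
      nlinarith [hd.2]
end
end

section
/- Let β > 0, α, γ ∈ ℝ and R > 0. Then there exists a constant C, independent of t, such that for all t > 2: ∫₀^{t+R} (1+r)^α (ln(1+r))^γ e^{−β(t−r)} dr ≤ C (t+R)^α (ln(t+R))^γ. -/
open MeasureTheory Set Real Filter

noncomputable section

set_option maxHeartbeats 2000000 in
/-- Lemma 4.2: `∫₀^{t+R} (1+r)^α ln^γ(1+r) e^{−β(t−r)} dr ≲ (t+R)^α ln^γ(t+R)`,
uniformly for `t > 2`. -/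
theorem integral_weighted_exp_bound
    (β α γ R : ℝ) (hβ : 0 < β) (hR : 0 < R) :
    ∃ C > (0 : ℝ), ∀ t : ℝ, 2 < t →
      (∫ r in Ioc (0 : ℝ) (t + R),
          (1 + r) ^ α * Real.log (1 + r) ^ γ * Real.exp (-β * (t - r)))
        ≤ C * (t + R) ^ α * Real.log (t + R) ^ γ := by
  have hl2 : (0:ℝ) < Real.log 2 := Real.log_pos (by norm_num)
  have hl2' : Real.log 2 ≤ 1 := by
    have := Real.log_two_lt_d9; linarith
  obtain ⟨K, hKdef⟩ : ∃ x : ℝ, x = |α| + |γ| := ⟨_, rfl⟩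
  have hK0 : 0 ≤ K := by rw [hKdef]; positivity
  obtain ⟨n, hndef⟩ : ∃ n : ℕ, n = ⌈2 * K + 1⌉₊ := ⟨_, rfl⟩
  have hnK : 2 * K + 1 ≤ (n:ℝ) := by rw [hndef]; exact Nat.le_ceil _
  obtain ⟨J, hJdef⟩ : ∃ x : ℝ, x = ∫ r in Ioc (0:ℝ) 1, Real.log (1 + r) ^ γ := ⟨_, rfl⟩
  have hJ0 : 0 ≤ J := by
    rw [hJdef]
    apply setIntegral_nonneg measurableSet_Ioc
    intro r hr
    have h1 : (0:ℝ) ≤ Real.log (1 + r) := Real.log_nonneg (by linarith [hr.1])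
    positivity
  obtain ⟨A, hAdef⟩ : ∃ x : ℝ, x = Real.log 2 ^ (-|γ|) := ⟨_, rfl⟩
  have hA0 : 0 < A := hAdef ▸ Real.rpow_pos_of_pos hl2 _
  have hA1 : 1 ≤ A := hAdef ▸
    Real.one_le_rpow_of_pos_of_le_one_of_nonpos hl2 hl2' (neg_nonpos.mpr (abs_nonneg _))
  obtain ⟨C₃, hC3def⟩ : ∃ x : ℝ, x = (2 + R) ^ n * (n.factorial * (2 / β) ^ n) := ⟨_, rfl⟩
  have hC₃ : 0 < C₃ := by rw [hC3def]; positivity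
  have h2J : 0 ≤ (2:ℝ) ^ |α| * J := mul_nonneg (Real.rpow_nonneg (by norm_num) _) hJ0
  obtain ⟨C, hCdef⟩ : ∃ x : ℝ, x = (2:ℝ) ^ K * Real.exp (β * R) / β
      + Real.exp (β * R / 2) * ((2:ℝ) ^ |α| * J + A) * C₃ := ⟨_, rfl⟩
  have hCoef : 0 < (2:ℝ) ^ |α| * J + A := by linarith
  have hCpos : 0 < C := by
    have h1 : 0 < (2:ℝ) ^ K * Real.exp (β * R) / β := by positivity
    have h2 : 0 < Real.exp (β * R / 2) * ((2:ℝ) ^ |α| * J + A) * C₃ :=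
      mul_pos (mul_pos (Real.exp_pos _) hCoef) hC₃
    rw [hCdef]; linarith
  refine ⟨C, hCpos, ?_⟩
  intro t ht
  have ht0 : 0 < t := by linarith
  set T : ℝ := t + R with hTdef
  have hT2 : 2 < T := by rw [hTdef]; linarith
  have hT0 : 0 < T := by linarith
  have hT1 : 1 < T := by linarith
  have h1T : (0:ℝ) < 1 + T := by linarith
  have h1T1 : (1:ℝ) ≤ 1 + T := by linarith
  have hlogT : 0 < Real.log T := Real.log_pos hT1
  have hRHS : 0 < T ^ α * Real.log T ^ γ := by positivity
  set g : ℝ → ℝ := fun r => (1 + r) ^ α * Real.log (1 + r) ^ γ * Real.exp (-β * (t - r))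
    with hgdef
  by_cases hint : IntegrableOn g (Ioc 0 T) volume
  · -- subsets and integrability
    have hsub1 : Ioc (0:ℝ) 1 ⊆ Ioc 0 T := Ioc_subset_Ioc_right (by linarith)
    have hsub2 : Ioc (1:ℝ) (T/2) ⊆ Ioc 0 T := Ioc_subset_Ioc (by norm_num) (by linarith)
    have hsub12 : Ioc (0:ℝ) (T/2) ⊆ Ioc 0 T := Ioc_subset_Ioc_right (by linarith)
    have hsub3 : Ioc (T/2) T ⊆ Ioc 0 T := Ioc_subset_Ioc_left (by linarith)
    have hi1 := hint.mono_set hsub1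
    have hi2 := hint.mono_set hsub2
    have hi12 := hint.mono_set hsub12
    have hi3 := hint.mono_set hsub3
    have hsplitA : (∫ r in Ioc (0:ℝ) T, g r)
        = (∫ r in Ioc (0:ℝ) (T/2), g r) + ∫ r in Ioc (T/2) T, g r := by
      rw [← setIntegral_union (Ioc_disjoint_Ioc_of_le le_rfl) measurableSet_Ioc hi12 hi3,
        Ioc_union_Ioc_eq_Ioc (by linarith) (by linarith)]
    have hsplitB : (∫ r in Ioc (0:ℝ) (T/2), g r)
        = (∫ r in Ioc (0:ℝ) 1, g r) + ∫ r in Ioc (1:ℝ) (T/2), g r := by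
      rw [← setIntegral_union (Ioc_disjoint_Ioc_of_le le_rfl) measurableSet_Ioc hi1 hi2,
        Ioc_union_Ioc_eq_Ioc (by norm_num) (by linarith)]
    -- integrability of log power on (0,1]
    obtain ⟨m, hmdef⟩ : ∃ x : ℝ, x = min ((2:ℝ)^α) 1 * Real.exp (-β * t) := ⟨_, rfl⟩
    have hm0 : 0 < m := by
      rw [hmdef]
      exact mul_pos (lt_min (Real.rpow_pos_of_pos (by norm_num) α) one_pos) (Real.exp_pos _)
    have hgL : ∀ r ∈ Ioc (0:ℝ) 1, m * Real.log (1+r) ^ γ ≤ g r := by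
      intro r hr
      have h1r : (1:ℝ) ≤ 1 + r := by linarith [hr.1]
      have h2r : 1 + r ≤ 2 := by linarith [hr.2]
      have hL0 : 0 ≤ Real.log (1+r) ^ γ := Real.rpow_nonneg (Real.log_nonneg h1r) γ
      have hb : min ((2:ℝ)^α) 1 ≤ (1+r)^α := by
        rcases le_or_gt 0 α with h | h
        · exact le_trans (min_le_right _ _) (Real.one_le_rpow h1r h)
        · exact le_trans (min_le_left _ _) (Real.rpow_le_rpow_of_nonpos (by linarith) h2r h.le)
      have he : Real.exp (-β*t) ≤ Real.exp (-β*(t-r)) := by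
        apply Real.exp_le_exp.mpr
        have h9 : 0 ≤ β * r := mul_nonneg hβ.le hr.1.le
        linarith
      have s1 : min ((2:ℝ)^α) 1 * Real.log (1+r)^γ ≤ (1+r)^α * Real.log (1+r)^γ :=
        mul_le_mul_of_nonneg_right hb hL0
      have s2 : (min ((2:ℝ)^α) 1 * Real.log (1+r)^γ) * Real.exp (-β*t)
          ≤ ((1+r)^α * Real.log (1+r)^γ) * Real.exp (-β*(t-r)) :=
        mul_le_mul s1 he (Real.exp_pos _).le (by positivity)
      calc m * Real.log (1+r)^γ
          = (min ((2:ℝ)^α) 1 * Real.log (1+r)^γ) * Real.exp (-β*t) := by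
            rw [hmdef]; ring
        _ ≤ ((1+r)^α * Real.log (1+r)^γ) * Real.exp (-β*(t-r)) := s2
        _ = g r := rfl
    have hLmeas : Measurable fun r : ℝ => Real.log (1+r) ^ γ :=
      (Real.measurable_log.comp (measurable_const.add measurable_id)).pow_const γ
    have hLint : IntegrableOn (fun r => Real.log (1+r) ^ γ) (Ioc (0:ℝ) 1) := by
      have hql : IntegrableOn (fun r => m⁻¹ * g r) (Ioc (0:ℝ) 1) := hi1.const_mul _
      apply hql.mono' hLmeas.aestronglyMeasurable
      rw [ae_restrict_iff' measurableSet_Ioc]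
      refine ae_of_all _ fun r hr => ?_
      have h1r : (1:ℝ) ≤ 1 + r := by linarith [hr.1]
      have hL0 : 0 ≤ Real.log (1+r) ^ γ := Real.rpow_nonneg (Real.log_nonneg h1r) γ
      rw [Real.norm_eq_abs, abs_of_nonneg hL0]
      have h2 := mul_le_mul_of_nonneg_left (hgL r hr) (inv_nonneg.mpr hm0.le)
      rwa [← mul_assoc, inv_mul_cancel₀ hm0.ne', one_mul] at h2
    -- Piece 1
    obtain ⟨c₁, hc1def⟩ : ∃ x : ℝ, x = (2:ℝ)^|α| * Real.exp (β*(R-t)/2) := ⟨_, rfl⟩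
    have hp1 : (∫ r in Ioc (0:ℝ) 1, g r) ≤ c₁ * J := by
      have hmono : ∀ r ∈ Ioc (0:ℝ) 1, g r ≤ c₁ * Real.log (1+r)^γ := by
        intro r hr
        have h1r : (1:ℝ) ≤ 1 + r := by linarith [hr.1]
        have h2r : 1 + r ≤ 2 := by linarith [hr.2]
        have hL0 : 0 ≤ Real.log (1+r) ^ γ := Real.rpow_nonneg (Real.log_nonneg h1r) γ
        have hbase : (1+r)^α ≤ (2:ℝ)^|α| := by
          rcases le_or_gt 0 α with h | h
          · rw [abs_of_nonneg h]
            exact Real.rpow_le_rpow (by linarith) h2r h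
          · calc (1+r)^α ≤ 1 := Real.rpow_le_one_of_one_le_of_nonpos h1r h.le
              _ ≤ (2:ℝ)^|α| := Real.one_le_rpow one_le_two (abs_nonneg _)
        have hexp : Real.exp (-β*(t-r)) ≤ Real.exp (β*(R-t)/2) := by
          apply Real.exp_le_exp.mpr
          have h8 : β * r ≤ β * 1 := mul_le_mul_of_nonneg_left hr.2 hβ.le
          have h9 : β * 1 ≤ β * ((R+t)/2) :=
            mul_le_mul_of_nonneg_left (by linarith) hβ.le
          linarith
        calc g r = (1+r)^α * Real.log (1+r)^γ * Real.exp (-β*(t-r)) := rfl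
          _ ≤ ((2:ℝ)^|α| * Real.log (1+r)^γ) * Real.exp (β*(R-t)/2) :=
              mul_le_mul (mul_le_mul_of_nonneg_right hbase hL0) hexp (Real.exp_pos _).le
                (by positivity)
          _ = c₁ * Real.log (1+r)^γ := by rw [hc1def]; ring
      calc (∫ r in Ioc (0:ℝ) 1, g r)
          ≤ ∫ r in Ioc (0:ℝ) 1, c₁ * Real.log (1+r)^γ :=
            setIntegral_mono_on hi1 (hLint.const_mul _) measurableSet_Ioc hmono
        _ = c₁ * J := by rw [integral_const_mul, hJdef]
    -- Piece 2
    obtain ⟨c₂, hc2def⟩ : ∃ x : ℝ, x = A * (1+T)^K * Real.exp (β*(R-t)/2) := ⟨_, rfl⟩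
    have hc₂0 : 0 ≤ c₂ := by
      rw [hc2def]
      have : 0 ≤ (1+T)^K := Real.rpow_nonneg h1T.le _
      positivity
    have hp2 : (∫ r in Ioc (1:ℝ) (T/2), g r) ≤ (1+T) * c₂ := by
      have hmono : ∀ r ∈ Ioc (1:ℝ) (T/2), g r ≤ c₂ := by
        intro r hr
        have h1r : (1:ℝ) < r := hr.1
        have hrT : r ≤ T/2 := hr.2
        have h1r' : (1:ℝ) ≤ 1 + r := by linarith
        have hL0 : 0 ≤ Real.log (1+r) ^ γ := Real.rpow_nonneg (Real.log_nonneg h1r') γ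
        have hb1 : (1+r)^α ≤ (1+T)^|α| := by
          rcases le_or_gt 0 α with h | h
          · calc (1+r)^α ≤ (1+T)^α := Real.rpow_le_rpow (by linarith) (by linarith) h
              _ ≤ (1+T)^|α| :=
                Real.rpow_le_rpow_of_exponent_le h1T1 (le_abs_self α)
          · calc (1+r)^α ≤ 1 := Real.rpow_le_one_of_one_le_of_nonpos h1r' h.le
              _ ≤ (1+T)^|α| := Real.one_le_rpow h1T1 (abs_nonneg _)
        have hb2 : Real.log (1+r)^γ ≤ A * (1+T)^|γ| := by
          rcases le_or_gt 0 γ with h | h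
          · have hlr : Real.log (1+r) ≤ 1+T := by
              have := Real.log_le_sub_one_of_pos (show (0:ℝ) < 1+r by linarith)
              linarith
            calc Real.log (1+r)^γ ≤ (1+T)^γ :=
                Real.rpow_le_rpow (Real.log_nonneg h1r') hlr h
              _ ≤ (1+T)^|γ| := Real.rpow_le_rpow_of_exponent_le h1T1 (le_abs_self γ)
              _ ≤ A * (1+T)^|γ| := le_mul_of_one_le_left (Real.rpow_nonneg h1T.le _) hA1
          · have hlr : Real.log 2 ≤ Real.log (1+r) := Real.log_le_log (by norm_num) (by linarith)
            calc Real.log (1+r)^γ ≤ Real.log 2 ^ γ :=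
                Real.rpow_le_rpow_of_nonpos hl2 hlr h.le
              _ = A := by rw [hAdef, abs_of_neg h, neg_neg]
              _ ≤ A * (1+T)^|γ| :=
                le_mul_of_one_le_right hA0.le (Real.one_le_rpow h1T1 (abs_nonneg _))
        have hb3 : Real.exp (-β*(t-r)) ≤ Real.exp (β*(R-t)/2) := by
          apply Real.exp_le_exp.mpr
          have h8 : β * r ≤ β * (T/2) := mul_le_mul_of_nonneg_left hrT hβ.le
          rw [hTdef] at h8
          linarith
        calc g r = (1+r)^α * Real.log (1+r)^γ * Real.exp (-β*(t-r)) := rfl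
          _ ≤ ((1+T)^|α| * (A * (1+T)^|γ|)) * Real.exp (β*(R-t)/2) :=
            mul_le_mul (mul_le_mul hb1 hb2 hL0 (Real.rpow_nonneg h1T.le _)) hb3
              (Real.exp_pos _).le
              (mul_nonneg (Real.rpow_nonneg h1T.le _)
                (mul_nonneg hA0.le (Real.rpow_nonneg h1T.le _)))
          _ = c₂ := by
            rw [hc2def, hKdef, Real.rpow_add h1T]; ring
      calc (∫ r in Ioc (1:ℝ) (T/2), g r)
          ≤ ∫ _r in Ioc (1:ℝ) (T/2), c₂ :=
            setIntegral_mono_on hi2 (integrableOn_const measure_Ioc_lt_top.ne)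
              measurableSet_Ioc hmono
        _ = (T/2 - 1) * c₂ := by
            rw [setIntegral_const, Real.volume_real_Ioc_of_le (by linarith), smul_eq_mul]
        _ ≤ (1+T) * c₂ := mul_le_mul_of_nonneg_right (by linarith) hc₂0
    -- Piece 3
    obtain ⟨D, hDdef⟩ : ∃ x : ℝ, x = (2:ℝ)^K * T^α * Real.log T ^ γ := ⟨_, rfl⟩
    have hD0 : 0 ≤ D := by
      rw [hDdef]; positivity
    have hp3 : (∫ r in Ioc (T/2) T, g r) ≤ D * Real.exp (β*R) / β := by
      have hmono : ∀ r ∈ Ioc (T/2) T, g r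
          ≤ D * Real.exp (-β*t) * Real.exp (β*r) := by
        intro r hr
        have hrl : T/2 < r := hr.1
        have hru : r ≤ T := hr.2
        have h1r' : (1:ℝ) ≤ 1 + r := by linarith
        have hL0 : 0 ≤ Real.log (1+r) ^ γ := Real.rpow_nonneg (Real.log_nonneg h1r') γ
        have hb1 : (1+r)^α ≤ (2:ℝ)^|α| * T^α := by
          rcases le_or_gt 0 α with h | h
          · rw [abs_of_nonneg h]
            calc (1+r)^α ≤ (2*T)^α := Real.rpow_le_rpow (by linarith) (by linarith) h
              _ = (2:ℝ)^α * T^α := Real.mul_rpow (by norm_num) hT0.le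
          · have hTr : T/2 ≤ 1 + r := by linarith
            calc (1+r)^α ≤ (T/2)^α :=
                Real.rpow_le_rpow_of_nonpos (by linarith) hTr h.le
              _ = (2:ℝ)^|α| * T^α := by
                rw [Real.div_rpow hT0.le (by norm_num), abs_of_neg h,
                  Real.rpow_neg (by norm_num), div_eq_mul_inv]
                ring
        have hb2 : Real.log (1+r)^γ ≤ (2:ℝ)^|γ| * Real.log T ^ γ := by
          rcases le_or_gt 0 γ with h | h
          · have hup : Real.log (1+r) ≤ 2 * Real.log T := by
              have h1 : Real.log (1+r) ≤ Real.log (T*T) :=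
                Real.log_le_log (by linarith) (by nlinarith)
              rw [Real.log_mul hT0.ne' hT0.ne'] at h1
              linarith
            calc Real.log (1+r)^γ ≤ (2 * Real.log T)^γ :=
                Real.rpow_le_rpow (Real.log_nonneg h1r') hup h
              _ = (2:ℝ)^γ * Real.log T ^ γ := Real.mul_rpow (by norm_num) hlogT.le
              _ = (2:ℝ)^|γ| * Real.log T ^ γ := by rw [abs_of_nonneg h]
          · have hlow : Real.log T / 2 ≤ Real.log (1+r) := by
              have h1 : Real.log T ≤ Real.log ((1+T/2) * (1+T/2)) :=
                Real.log_le_log hT0 (by nlinarith)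
              rw [Real.log_mul (by linarith) (by linarith)] at h1
              have h2 : Real.log (1+T/2) ≤ Real.log (1+r) :=
                Real.log_le_log (by linarith) (by linarith)
              linarith
            calc Real.log (1+r)^γ ≤ (Real.log T / 2)^γ :=
                Real.rpow_le_rpow_of_nonpos (by positivity) hlow h.le
              _ = (2:ℝ)^|γ| * Real.log T ^ γ := by
                rw [Real.div_rpow hlogT.le (by norm_num), abs_of_neg h,
                  Real.rpow_neg (by norm_num), div_eq_mul_inv]
                ring
        have hb3 : Real.exp (-β*(t-r)) = Real.exp (-β*t) * Real.exp (β*r) := by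
          rw [← Real.exp_add]; congr 1; ring
        calc g r = (1+r)^α * Real.log (1+r)^γ * Real.exp (-β*(t-r)) := rfl
          _ ≤ (((2:ℝ)^|α| * T^α) * ((2:ℝ)^|γ| * Real.log T ^ γ)) * Real.exp (-β*(t-r)) :=
            mul_le_mul_of_nonneg_right
              (mul_le_mul hb1 hb2 hL0 (by positivity)) (Real.exp_pos _).le
          _ = D * Real.exp (-β*t) * Real.exp (β*r) := by
            rw [hb3, hDdef, hKdef, Real.rpow_add (by norm_num : (0:ℝ) < 2)]; ring
      have hcont : Continuous fun r : ℝ => D * Real.exp (-β*t) * Real.exp (β*r) := by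
        fun_prop
      have hIexp : (∫ r in Ioc (T/2) T, Real.exp (β*r))
          = β⁻¹ * (Real.exp (β*T) - Real.exp (β*(T/2))) := by
        rw [← intervalIntegral.integral_of_le (by linarith : T/2 ≤ T),
          intervalIntegral.integral_comp_mul_left (fun x => Real.exp x) hβ.ne',
          integral_exp, smul_eq_mul]
      calc (∫ r in Ioc (T/2) T, g r)
          ≤ ∫ r in Ioc (T/2) T, D * Real.exp (-β*t) * Real.exp (β*r) :=
            setIntegral_mono_on hi3 (hcont.integrableOn_Ioc) measurableSet_Ioc hmono
        _ = D * Real.exp (-β*t) * ∫ r in Ioc (T/2) T, Real.exp (β*r) := by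
            rw [← integral_const_mul]
        _ = D * Real.exp (-β*t) * (β⁻¹ * (Real.exp (β*T) - Real.exp (β*(T/2)))) := by
            rw [hIexp]
        _ ≤ D * Real.exp (-β*t) * (β⁻¹ * Real.exp (β*T)) := by
            apply mul_le_mul_of_nonneg_left _ (by positivity)
            apply mul_le_mul_of_nonneg_left _ (by positivity)
            linarith [Real.exp_pos (β*(T/2))]
        _ = D * Real.exp (β*R) / β := by
            have h9 : Real.exp (-β*t) * Real.exp (β*T) = Real.exp (β*R) := by
              rw [← Real.exp_add, hTdef]; congr 1; ring
            rw [div_eq_mul_inv, ← h9]; ring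
    -- the key exponential domination
    have hprod : T^(-α) * Real.log T ^ (-γ) ≤ (1+T)^K := by
      have ha : T ^ (-α) ≤ (1+T)^|α| :=
        le_trans (Real.rpow_le_rpow_of_exponent_le hT1.le (neg_le_abs α))
          (Real.rpow_le_rpow hT0.le (by linarith) (abs_nonneg α))
      have hloglog : |Real.log (Real.log T)| ≤ Real.log T := by
        rw [abs_le]
        constructor
        · rw [← Real.log_inv]
          apply Real.log_le_log (by positivity)
          have h2 : Real.log 2 ≤ Real.log T := Real.log_le_log (by norm_num) hT2.le
          have h3 : (0.6931471803:ℝ) < Real.log 2 := Real.log_two_gt_d9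
          have h4 : T⁻¹ ≤ 2⁻¹ := by
            rw [← one_div, ← one_div]
            exact one_div_le_one_div_of_le (by norm_num) hT2.le
          have h5 : (2:ℝ)⁻¹ = 1/2 := by norm_num
          linarith
        · apply Real.log_le_log hlogT
          have := Real.log_le_sub_one_of_pos hT0
          linarith
      have hg2 : Real.log T ^ (-γ) ≤ (1+T)^|γ| := by
        rw [Real.rpow_def_of_pos hlogT, Real.rpow_def_of_pos h1T]
        apply Real.exp_le_exp.mpr
        calc Real.log (Real.log T) * (-γ)
            ≤ |Real.log (Real.log T) * (-γ)| := le_abs_self _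
          _ = |Real.log (Real.log T)| * |γ| := by rw [abs_mul, abs_neg]
          _ ≤ Real.log T * |γ| := mul_le_mul_of_nonneg_right hloglog (abs_nonneg γ)
          _ ≤ Real.log (1+T) * |γ| :=
              mul_le_mul_of_nonneg_right (Real.log_le_log hT0 (by linarith)) (abs_nonneg γ)
      calc T^(-α) * Real.log T^(-γ) ≤ (1+T)^|α| * (1+T)^|γ| :=
          mul_le_mul ha hg2 (Real.rpow_nonneg hlogT.le _) (Real.rpow_nonneg h1T.le _)
        _ = (1+T)^K := by rw [hKdef, Real.rpow_add h1T]
    have hpow : ((1+T)^K)⁻¹ ≤ T^α * Real.log T ^ γ := by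
      have h1 : 0 < T^(-α) * Real.log T ^ (-γ) := by positivity
      have h2 : T^α * Real.log T ^ γ = (T^(-α) * Real.log T^(-γ))⁻¹ := by
        rw [Real.rpow_neg hT0.le, Real.rpow_neg hlogT.le, mul_inv, inv_inv, inv_inv]
      rw [h2]
      have h3 := one_div_le_one_div_of_le h1 hprod
      rwa [one_div, one_div] at h3
    have hstep : Real.exp (-(β*t)/2) * (1+T)^(K+1) * (1+T)^K ≤ C₃ := by
      have e1 : (1+T)^(K+1) * (1+T)^K = (1+T)^(2*K+1) := by
        rw [← Real.rpow_add h1T]; congr 1; ring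
      rw [mul_assoc, e1]
      have e2 : (1+T)^(2*K+1) ≤ ((2+R)*t)^n := by
        calc (1+T)^(2*K+1) ≤ (1+T)^((n:ℝ)) :=
            Real.rpow_le_rpow_of_exponent_le h1T1 hnK
          _ = (1+T)^n := Real.rpow_natCast _ n
          _ ≤ ((2+R)*t)^n := by
              apply pow_le_pow_left₀ (by linarith)
              have h8 : R * 1 ≤ R * t := mul_le_mul_of_nonneg_left (by linarith) hR.le
              rw [hTdef]; nlinarith
      have e3 : (β*t/2)^n / n.factorial ≤ Real.exp (β*t/2) :=
        Real.pow_div_factorial_le_exp (β*t/2) (by positivity) n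
      have e4 : t^n ≤ (n.factorial : ℝ) * (2/β)^n * Real.exp (β*t/2) := by
        have h5 : t^n = (2/β)^n * (β*t/2)^n := by
          rw [← mul_pow]; congr 1; field_simp
        rw [div_le_iff₀ (by positivity)] at e3
        calc t^n = (2/β)^n * (β*t/2)^n := h5
          _ ≤ (2/β)^n * (Real.exp (β*t/2) * n.factorial) :=
            mul_le_mul_of_nonneg_left e3 (by positivity)
          _ = (n.factorial:ℝ) * (2/β)^n * Real.exp (β*t/2) := by ring
      calc Real.exp (-(β*t)/2) * (1+T)^(2*K+1)
          ≤ Real.exp (-(β*t)/2) * ((2+R)*t)^n :=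
            mul_le_mul_of_nonneg_left e2 (Real.exp_pos _).le
        _ = (2+R)^n * (t^n * Real.exp (-(β*t)/2)) := by rw [mul_pow]; ring
        _ ≤ (2+R)^n * (((n.factorial : ℝ) * (2/β)^n * Real.exp (β*t/2)) * Real.exp (-(β*t)/2)) := by
            apply mul_le_mul_of_nonneg_left
              (mul_le_mul_of_nonneg_right e4 (Real.exp_pos _).le) (by positivity)
        _ = C₃ * (Real.exp (β*t/2) * Real.exp (-(β*t)/2)) := by rw [hC3def]; ring
        _ = C₃ := by
            rw [← Real.exp_add, show β*t/2 + -(β*t)/2 = 0 by ring, Real.exp_zero, mul_one]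
    have hKp : (0:ℝ) < (1+T)^K := Real.rpow_pos_of_pos h1T _
    have hfac : Real.exp (-(β*t)/2) * (1+T)^(K+1) ≤ C₃ * ((1+T)^K)⁻¹ := by
      have h6 := (le_div_iff₀ hKp).mpr hstep
      rwa [div_eq_mul_inv] at h6
    have hKey : Real.exp (β*(R-t)/2) * (1+T)^(K+1)
        ≤ Real.exp (β*R/2) * (C₃ * (T^α * Real.log T ^ γ)) := by
      have h7 : Real.exp (β*(R-t)/2) = Real.exp (β*R/2) * Real.exp (-(β*t)/2) := by
        rw [← Real.exp_add]; congr 1; ring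
      rw [h7, mul_assoc]
      apply mul_le_mul_of_nonneg_left _ (Real.exp_pos _).le
      calc Real.exp (-(β*t)/2) * (1+T)^(K+1) ≤ C₃ * ((1+T)^K)⁻¹ := hfac
        _ ≤ C₃ * (T^α * Real.log T ^ γ) := mul_le_mul_of_nonneg_left hpow hC₃.le
    -- assemble
    have hKp1 : (1:ℝ) ≤ (1+T)^(K+1) := Real.one_le_rpow h1T1 (by linarith)
    have hsum12 : c₁ * J + (1+T) * c₂
        ≤ ((2:ℝ)^|α| * J + A) * (Real.exp (β*(R-t)/2) * (1+T)^(K+1)) := by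
      have e8 : (1+T) * (1+T)^K = (1+T)^(K+1) := by
        nth_rewrite 1 [← Real.rpow_one (1+T)]
        rw [← Real.rpow_add h1T]; congr 1; ring
      have e9 : c₁ * J = ((2:ℝ)^|α| * J) * Real.exp (β*(R-t)/2) := by
        rw [hc1def]; ring
      have e10 : (1+T) * c₂ = A * Real.exp (β*(R-t)/2) * (1+T)^(K+1) := by
        rw [hc2def, ← e8]; ring
      rw [e9, e10]
      have e11 : ((2:ℝ)^|α| * J) * Real.exp (β*(R-t)/2)
          ≤ ((2:ℝ)^|α| * J) * Real.exp (β*(R-t)/2) * (1+T)^(K+1) :=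
        le_mul_of_one_le_right (mul_nonneg h2J (Real.exp_pos _).le) hKp1
      calc ((2:ℝ)^|α| * J) * Real.exp (β*(R-t)/2) + A * Real.exp (β*(R-t)/2) * (1+T)^(K+1)
          ≤ ((2:ℝ)^|α| * J) * Real.exp (β*(R-t)/2) * (1+T)^(K+1)
            + A * Real.exp (β*(R-t)/2) * (1+T)^(K+1) := add_le_add e11 le_rfl
        _ = ((2:ℝ)^|α| * J + A) * (Real.exp (β*(R-t)/2) * (1+T)^(K+1)) := by ring
    calc (∫ r in Ioc (0:ℝ) T, g r)
        = ((∫ r in Ioc (0:ℝ) 1, g r) + ∫ r in Ioc (1:ℝ) (T/2), g r)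
            + ∫ r in Ioc (T/2) T, g r := by rw [hsplitA, hsplitB]
      _ ≤ (c₁ * J + (1+T) * c₂) + D * Real.exp (β*R) / β := by
          have h30 := add_le_add (add_le_add hp1 hp2) hp3
          linarith
      _ ≤ ((2:ℝ)^|α| * J + A) * (Real.exp (β*(R-t)/2) * (1+T)^(K+1))
            + D * Real.exp (β*R) / β := by linarith
      _ ≤ ((2:ℝ)^|α| * J + A) * (Real.exp (β*R/2) * (C₃ * (T^α * Real.log T ^ γ)))
            + D * Real.exp (β*R) / β :=
          add_le_add (mul_le_mul_of_nonneg_left hKey hCoef.le) le_rfl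
      _ = C * T ^ α * Real.log T ^ γ := by
          rw [hCdef, hDdef]; ring
  · rw [integral_undef hint]
    rw [mul_assoc]
    exact (mul_pos hCpos hRHS).le
end
end

section
/- Let n ≥ 2, R > 0, c₁ ∈ (0,1), q > 0, and for each λ ∈ (0,1] let φ_λ : ℝⁿ → ℝ satisfy c₁⟨λ|x|⟩^{−(n−1)/2} e^{λ|x|} < φ_λ(x) < c₁^{−1}⟨λ|x|⟩^{−(n−1)/2} e^{λ|x|} for all x, with (λ, x) ↦ φ_λ(x) measurable, where ⟨s⟩ = √(1+s²). Define b_q(t,x) = ∫₀¹ e^{−λt} φ_λ(x) λ^{q−1} dλ. Then there exists a constant c > 0, depending only on n, q, R, c₁, such that b_q(t,x) ≥ c (t+R)^{−q} for all t ≥ 0 and all x with |x| ≤ t + R. -/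
open MeasureTheory Set Real Filter

noncomputable section

abbrev Eucl (n : ℕ) := EuclideanSpace ℝ (Fin n)

set_option maxHeartbeats 1000000 in
/-- Lower bound for the test function `b_q(t,x) = ∫₀¹ e^{−λt} φ_λ(x) λ^{q−1} dλ`:
`b_q(t,x) ≳ (t+R)^{−q}` on the light cone `|x| ≤ t + R`, with a constant depending only on
`n`, `q`, `R`, `c₁`. -/
theorem bq_lower_bound
    (n : ℕ) (hn : 2 ≤ n) (R c₁ q : ℝ) (hR : 0 < R) (hc₁ : c₁ ∈ Ioo (0 : ℝ) 1) (hq : 0 < q) :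
    ∃ c > (0 : ℝ), ∀ φ : ℝ → Eucl n → ℝ,
      Measurable (fun p : ℝ × Eucl n => φ p.1 p.2) →
      (∀ lam : ℝ, lam ∈ Ioc (0 : ℝ) 1 → ∀ x : Eucl n,
        c₁ * Real.sqrt (1 + (lam * ‖x‖) ^ 2) ^ (-(((n : ℝ) - 1) / 2)) *
            Real.exp (lam * ‖x‖) < φ lam x ∧
        φ lam x < c₁⁻¹ * Real.sqrt (1 + (lam * ‖x‖) ^ 2) ^ (-(((n : ℝ) - 1) / 2)) *
            Real.exp (lam * ‖x‖)) →
      ∀ t : ℝ, 0 ≤ t → ∀ x : Eucl n, ‖x‖ ≤ t + R →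
        c * (t + R) ^ (-q) ≤
          ∫ lam in Ioc (0 : ℝ) 1, Real.exp (-lam * t) * φ lam x * lam ^ (q - 1) := by
  obtain ⟨hc₁0, hc₁1⟩ := hc₁
  set α : ℝ := ((n : ℝ) - 1) / 2 with hαdef
  have hα0 : 0 ≤ α := by
    have : (2 : ℝ) ≤ (n : ℝ) := by exact_mod_cast hn
    unfold α; linarith
  set A : ℝ := Real.sqrt 2 ^ (-α) with hAdef
  have hA0 : 0 < A := Real.rpow_pos_of_pos (Real.sqrt_pos.2 two_pos) _
  set K : ℝ := c₁ * Real.exp (-1) * A with hKdef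
  have hK0 : 0 < K := by positivity
  have hminR : 0 < min 1 R := lt_min one_pos hR
  refine ⟨K * min 1 R ^ q / q, by positivity, ?_⟩
  intro φ hφmeas hφ t ht x hx
  set T : ℝ := t + R with hTdef
  have hT0 : 0 < T := by positivity
  set m : ℝ := min 1 T⁻¹ with hmdef
  have hm0 : 0 < m := lt_min one_pos (inv_pos.2 hT0)
  have hm1 : m ≤ 1 := min_le_left _ _
  have hmT : m * T ≤ 1 := by
    calc m * T ≤ T⁻¹ * T := by
          apply mul_le_mul_of_nonneg_right (min_le_right _ _) hT0.le
      _ = 1 := inv_mul_cancel₀ hT0.ne'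
  set f : ℝ → ℝ := fun lam => Real.exp (-lam * t) * φ lam x * lam ^ (q - 1) with hfdef
  -- measurability
  have hmeasf : Measurable f := by
    apply Measurable.mul
    · exact ((measurable_id.neg.mul_const t).exp).mul
        (hφmeas.comp (measurable_id.prodMk measurable_const))
    · measurability
  -- positivity of φ on Ioc 0 1
  have hφpos : ∀ lam ∈ Ioc (0 : ℝ) 1, 0 < φ lam x := by
    intro lam hlam
    refine lt_trans ?_ (hφ lam hlam x).1
    positivity
  have hnn : ∀ lam ∈ Ioc (0 : ℝ) 1, 0 ≤ f lam := by
    intro lam hlam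
    have := hφpos lam hlam
    have h1 : (0:ℝ) < lam := hlam.1
    positivity
  -- upper bound for integrability
  have hub : ∀ lam ∈ Ioc (0 : ℝ) 1, f lam ≤ (c₁⁻¹ * Real.exp ‖x‖) * lam ^ (q - 1) := by
    intro lam hlam
    have h1 : (0:ℝ) < lam := hlam.1
    have hS : Real.sqrt (1 + (lam * ‖x‖) ^ 2) ^ (-α) ≤ 1 :=
      Real.rpow_le_one_of_one_le_of_nonpos
        (by
          have hs := Real.sq_sqrt (show (0:ℝ) ≤ 1 + (lam * ‖x‖) ^ 2 by positivity)
          nlinarith [Real.sqrt_nonneg (1 + (lam * ‖x‖) ^ 2), sq_nonneg (lam * ‖x‖)])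
        (by linarith)
    have hE : Real.exp (lam * ‖x‖) ≤ Real.exp ‖x‖ := by
      apply Real.exp_le_exp.2
      nlinarith [norm_nonneg x, hlam.2]
    have hφub : φ lam x ≤ c₁⁻¹ * Real.exp ‖x‖ := by
      refine le_trans (hφ lam hlam x).2.le ?_
      calc c₁⁻¹ * Real.sqrt (1 + (lam * ‖x‖) ^ 2) ^ (-α) * Real.exp (lam * ‖x‖)
          ≤ c₁⁻¹ * 1 * Real.exp ‖x‖ := by
            apply mul_le_mul (mul_le_mul_of_nonneg_left hS (by positivity)) hE
              (Real.exp_pos _).le (by positivity)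
        _ = c₁⁻¹ * Real.exp ‖x‖ := by ring
    have hexp1 : Real.exp (-lam * t) ≤ 1 := Real.exp_le_one_iff.2 (by nlinarith)
    calc f lam ≤ 1 * (c₁⁻¹ * Real.exp ‖x‖) * lam ^ (q - 1) := by
          apply mul_le_mul_of_nonneg_right _ (Real.rpow_nonneg h1.le _)
          exact mul_le_mul hexp1 hφub (hφpos lam hlam).le (by norm_num)
      _ = (c₁⁻¹ * Real.exp ‖x‖) * lam ^ (q - 1) := by ring
  -- integrability
  have hg_int : IntegrableOn (fun lam : ℝ => (c₁⁻¹ * Real.exp ‖x‖) * lam ^ (q - 1))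
      (Ioc (0:ℝ) 1) := by
    apply Integrable.const_mul
    exact (intervalIntegral.intervalIntegrable_rpow' (by linarith : (-1:ℝ) < q - 1)).1
  have hf_int : IntegrableOn f (Ioc (0:ℝ) 1) := by
    refine hg_int.mono' hmeasf.aestronglyMeasurable.restrict ?_
    filter_upwards [ae_restrict_mem measurableSet_Ioc] with lam hlam
    rw [Real.norm_eq_abs, abs_of_nonneg (hnn lam hlam)]
    exact hub lam hlam
  -- lower bound pointwise on Ioc 0 m
  have hlb : ∀ lam ∈ Ioc (0:ℝ) m, K * lam ^ (q - 1) ≤ f lam := by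
    intro lam hlam
    have h1 : (0:ℝ) < lam := hlam.1
    have hlm : lam ≤ m := hlam.2
    have hmem : lam ∈ Ioc (0:ℝ) 1 := ⟨h1, hlm.trans hm1⟩
    have hlamT : lam * T ≤ 1 := by
      calc lam * T ≤ m * T := mul_le_mul_of_nonneg_right hlm hT0.le
        _ ≤ 1 := hmT
    have hlamx : lam * ‖x‖ ≤ 1 := by
      calc lam * ‖x‖ ≤ lam * T := mul_le_mul_of_nonneg_left hx h1.le
        _ ≤ 1 := hlamT
    have hS : A ≤ Real.sqrt (1 + (lam * ‖x‖) ^ 2) ^ (-α) := by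
      apply Real.rpow_le_rpow_of_nonpos (Real.sqrt_pos.2 (by positivity)) _ (by linarith)
      apply Real.sqrt_le_sqrt
      nlinarith [mul_nonneg h1.le (norm_nonneg x)]
    have hE : Real.exp (-1) ≤ Real.exp (-lam * t) * Real.exp (lam * ‖x‖) := by
      rw [← Real.exp_add]
      apply Real.exp_le_exp.2
      have hlt : lam * t ≤ 1 := by
        calc lam * t ≤ lam * T := by
              apply mul_le_mul_of_nonneg_left (by unfold T; linarith) h1.le
          _ ≤ 1 := hlamT
      nlinarith [mul_nonneg h1.le (norm_nonneg x)]
    have hmain : K ≤ Real.exp (-lam * t) * φ lam x := by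
      calc K = c₁ * A * Real.exp (-1) := by unfold K; ring
        _ ≤ c₁ * Real.sqrt (1 + (lam * ‖x‖) ^ 2) ^ (-α) *
              (Real.exp (-lam * t) * Real.exp (lam * ‖x‖)) := by
            apply mul_le_mul (mul_le_mul_of_nonneg_left hS hc₁0.le) hE
              (Real.exp_pos _).le (by positivity)
        _ = Real.exp (-lam * t) *
              (c₁ * Real.sqrt (1 + (lam * ‖x‖) ^ 2) ^ (-α) * Real.exp (lam * ‖x‖)) := by ring
        _ ≤ Real.exp (-lam * t) * φ lam x :=
            mul_le_mul_of_nonneg_left (hφ lam hmem x).1.le (Real.exp_pos _).le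
    calc K * lam ^ (q - 1) ≤ (Real.exp (-lam * t) * φ lam x) * lam ^ (q - 1) :=
          mul_le_mul_of_nonneg_right hmain (Real.rpow_nonneg h1.le _)
      _ = f lam := rfl
  -- chain of inequalities
  have hsub : Ioc (0:ℝ) m ⊆ Ioc (0:ℝ) 1 := Ioc_subset_Ioc_right hm1
  have hf_int_m : IntegrableOn f (Ioc (0:ℝ) m) := hf_int.mono_set hsub
  have hK_int_m : IntegrableOn (fun lam : ℝ => K * lam ^ (q - 1)) (Ioc (0:ℝ) m) := by
    apply Integrable.const_mul
    exact (intervalIntegral.intervalIntegrable_rpow'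
      (by linarith : (-1:ℝ) < q - 1) (a := 0) (b := m)).1
  have step1 : ∫ lam in Ioc (0:ℝ) m, f lam ≤ ∫ lam in Ioc (0:ℝ) 1, f lam := by
    apply setIntegral_mono_set hf_int
    · filter_upwards [ae_restrict_mem (measurableSet_Ioc : MeasurableSet (Ioc (0:ℝ) 1))]
        with lam hlam using hnn lam hlam
    · exact hsub.eventuallyLE
  have step2 : ∫ lam in Ioc (0:ℝ) m, K * lam ^ (q - 1) ≤ ∫ lam in Ioc (0:ℝ) m, f lam :=
    setIntegral_mono_on hK_int_m hf_int_m measurableSet_Ioc hlb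
  have hcomp : ∫ lam in Ioc (0:ℝ) m, K * lam ^ (q - 1) = K * (m ^ q / q) := by
    rw [MeasureTheory.integral_const_mul, ← intervalIntegral.integral_of_le hm0.le,
      integral_rpow (Or.inl (by linarith : (-1:ℝ) < q - 1))]
    have hq1 : q - 1 + 1 = q := by ring
    rw [hq1, Real.zero_rpow hq.ne', sub_zero]
  -- final constant comparison
  have hkey : min 1 R * T⁻¹ ≤ m := by
    apply le_min
    · calc min 1 R * T⁻¹ ≤ T * T⁻¹ := by
            apply mul_le_mul_of_nonneg_right _ (inv_pos.2 hT0).le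
            calc min 1 R ≤ R := min_le_right _ _
              _ ≤ T := by unfold T; linarith
        _ = 1 := mul_inv_cancel₀ hT0.ne'
    · calc min 1 R * T⁻¹ ≤ 1 * T⁻¹ :=
            mul_le_mul_of_nonneg_right (min_le_left _ _) (inv_pos.2 hT0).le
        _ = T⁻¹ := one_mul _
  have hmq : min 1 R ^ q * T ^ (-q) ≤ m ^ q := by
    have h1 : (min 1 R * T⁻¹) ^ q ≤ m ^ q :=
      Real.rpow_le_rpow (by positivity) hkey hq.le
    rwa [Real.mul_rpow hminR.le (inv_pos.2 hT0).le, Real.inv_rpow hT0.le,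
      ← Real.rpow_neg hT0.le] at h1
  calc K * min 1 R ^ q / q * T ^ (-q) = K * ((min 1 R ^ q * T ^ (-q)) / q) := by ring
    _ ≤ K * (m ^ q / q) := by
        apply mul_le_mul_of_nonneg_left _ hK0.le
        gcongr
    _ = ∫ lam in Ioc (0:ℝ) m, K * lam ^ (q - 1) := hcomp.symm
    _ ≤ ∫ lam in Ioc (0:ℝ) m, f lam := step2
    _ ≤ ∫ lam in Ioc (0:ℝ) 1, f lam := step1
end
end

section
/- Let n ≥ 2, R > 0, c₁ ∈ (0,1), and for each λ ∈ (0,1] let φ_λ : ℝⁿ → ℝ satisfy c₁⟨λ|x|⟩^{−(n−1)/2} e^{λ|x|} < φ_λ(x) < c₁^{−1}⟨λ|x|⟩^{−(n−1)/2} e^{λ|x|} for all x, with (λ, x) ↦ φ_λ(x) measurable, where ⟨s⟩ = √(1+s²). Define b_q(t,x) = ∫₀¹ e^{−λt} φ_λ(x) λ^{q−1} dλ. Then there exists a constant C > 0, depending only on n, q, R, c₁, such that for all t ≥ 0 and all x with |x| ≤ t + R: b_q(t,x) ≤ C (t+R)^{−q} if 0 < q < (n−1)/2, and b_q(t,x)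 ≤ C (t+R)^{−(n−1)/2} (t+R+1−|x|)^{(n−1)/2−q} if q > (n−1)/2. -/
open MeasureTheory Set Real Filter

noncomputable section

-- exp decay beats powers
lemma aux_exp_rpow (m : ℝ) (hm : 0 < m) :
    ∃ c > (0:ℝ), ∀ u : ℝ, 0 < u → Real.exp (-u) ≤ c * u ^ (-m) := by
  refine ⟨((Nat.factorial (Nat.ceil m)) : ℝ) + 1, by positivity, fun u hu => ?_⟩
  set k := Nat.ceil m
  have h1 : u ^ m ≤ u ^ k + 1 := by
    rcases le_or_gt 1 u with h | h
    · calc u ^ m ≤ u ^ (k:ℝ) := Real.rpow_le_rpow_of_exponent_le h (Nat.le_ceil m)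
        _ = u ^ k := Real.rpow_natCast u k
        _ ≤ u ^ k + 1 := by linarith
    · have : u ^ m ≤ 1 := Real.rpow_le_one hu.le h.le hm.le
      have : (0:ℝ) ≤ u ^ k := by positivity
      linarith
  have h2 : u ^ k * Real.exp (-u) ≤ ((Nat.factorial k):ℝ) := by
    have h := Real.pow_div_factorial_le_exp (x := u) hu.le k
    rw [div_le_iff₀ (by positivity)] at h
    rw [Real.exp_neg, mul_inv_le_iff₀ (Real.exp_pos u)]
    linarith
  have h3 : u ^ m * Real.exp (-u) ≤ ((Nat.factorial k):ℝ) + 1 := by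
    have he : Real.exp (-u) ≤ 1 := Real.exp_le_one_iff.mpr (by linarith)
    have he0 : 0 ≤ Real.exp (-u) := (Real.exp_pos _).le
    nlinarith
  have hum : (0:ℝ) < u ^ m := Real.rpow_pos_of_pos hu m
  rw [Real.rpow_neg hu.le, mul_comm, le_inv_mul_iff₀ hum]
  linarith

lemma aux_unified (m : ℝ) (hm : 0 < m) :
    ∃ K > (0:ℝ), ∀ τ s lam : ℝ, 0 < τ → 0 ≤ s → s ≤ τ → 0 < lam →
      Real.sqrt (1 + (lam * s) ^ 2) ^ (-m) * Real.exp (-lam * (τ + 1 - s)) ≤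
        K * ((lam * τ) ^ (-m) * Real.exp (-lam * ((τ + 1 - s) / 2))) := by
  obtain ⟨c, hc, hcbd⟩ := aux_exp_rpow m hm
  refine ⟨2 ^ m + c * 4 ^ m, by positivity, fun τ s lam hτ hs hsτ hlam => ?_⟩
  set d : ℝ := τ + 1 - s with hd_def
  have hd1 : 1 ≤ d := by simp only [hd_def]; linarith
  have hlτ : 0 < lam * τ := mul_pos hlam hτ
  have hltm : 0 < (lam * τ) ^ (-m) := Real.rpow_pos_of_pos hlτ _
  have hexp2 : (0:ℝ) < Real.exp (-lam * (d / 2)) := Real.exp_pos _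
  rcases le_or_gt (τ / 2) s with hcase | hcase
  · -- s ≥ τ/2 : use sqrt ≥ lam * τ / 2
    have hsqrt : lam * τ / 2 ≤ Real.sqrt (1 + (lam * s) ^ 2) := by
      have h1 : lam * τ / 2 ≤ lam * s := by nlinarith
      have h2 : lam * s ≤ Real.sqrt (1 + (lam * s) ^ 2) := by
        have := Real.sqrt_le_sqrt (show (lam*s)^2 ≤ 1 + (lam*s)^2 by linarith)
        rwa [Real.sqrt_sq (by positivity)] at this
      linarith
    have h3 : Real.sqrt (1 + (lam * s) ^ 2) ^ (-m) ≤ (lam * τ / 2) ^ (-m) :=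
      Real.rpow_le_rpow_of_nonpos (by positivity) hsqrt (by linarith)
    have h4 : (lam * τ / 2) ^ (-m) = 2 ^ m * (lam * τ) ^ (-m) := by
      rw [div_eq_mul_inv, Real.mul_rpow hlτ.le (by norm_num), mul_comm]
      congr 1
      rw [Real.inv_rpow (by norm_num : (0:ℝ) ≤ 2), Real.rpow_neg (by norm_num : (0:ℝ) ≤ 2),
        inv_inv]
    have h5 : Real.exp (-lam * d) ≤ Real.exp (-lam * (d / 2)) := by
      apply Real.exp_le_exp.mpr; nlinarith
    calc Real.sqrt (1 + (lam * s) ^ 2) ^ (-m) * Real.exp (-lam * d)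
        ≤ (2 ^ m * (lam * τ) ^ (-m)) * Real.exp (-lam * (d / 2)) := by
          rw [← h4]; exact mul_le_mul h3 h5 (Real.exp_pos _).le (by positivity)
      _ = 2 ^ m * ((lam * τ) ^ (-m) * Real.exp (-lam * (d / 2))) := by ring
      _ ≤ (2 ^ m + c * 4 ^ m) * ((lam * τ) ^ (-m) * Real.exp (-lam * (d / 2))) := by
          have h1' : (0:ℝ) < c * 4 ^ m := by positivity
          have hX : 0 < (lam * τ) ^ (-m) * Real.exp (-lam * (d / 2)) := mul_pos hltm hexp2
          nlinarith
  · -- s < τ/2 : d > τ/2, use exp decay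
    have hdτ : τ / 2 ≤ d := by simp only [hd_def]; linarith
    have h1 : Real.sqrt (1 + (lam * s) ^ 2) ^ (-m) ≤ 1 := by
      apply Real.rpow_le_one_of_one_le_of_nonpos _ (by linarith)
      have := Real.sqrt_le_sqrt (show (1:ℝ) ≤ 1 + (lam * s) ^ 2 by nlinarith)
      simpa using this
    have h2 : Real.exp (-lam * (d / 2)) ≤ c * (lam * τ / 4) ^ (-m) := by
      have := hcbd (lam * τ / 4) (by positivity)
      refine le_trans (Real.exp_le_exp.mpr ?_) this
      nlinarith
    have h4 : (lam * τ / 4) ^ (-m) = 4 ^ m * (lam * τ) ^ (-m) := by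
      rw [div_eq_mul_inv, Real.mul_rpow hlτ.le (by norm_num), mul_comm]
      congr 1
      rw [Real.inv_rpow (by norm_num : (0:ℝ) ≤ 4), Real.rpow_neg (by norm_num : (0:ℝ) ≤ 4),
        inv_inv]
    have h5 : Real.exp (-lam * d) = Real.exp (-lam * (d / 2)) * Real.exp (-lam * (d / 2)) := by
      rw [← Real.exp_add]; ring_nf
    calc Real.sqrt (1 + (lam * s) ^ 2) ^ (-m) * Real.exp (-lam * d)
        ≤ 1 * Real.exp (-lam * d) := by
          exact mul_le_mul_of_nonneg_right h1 (Real.exp_pos _).le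
      _ = Real.exp (-lam * (d / 2)) * Real.exp (-lam * (d / 2)) := by rw [h5]; ring
      _ ≤ (c * (lam * τ / 4) ^ (-m)) * Real.exp (-lam * (d / 2)) := by
          exact mul_le_mul_of_nonneg_right h2 (Real.exp_pos _).le
      _ = (c * 4 ^ m) * ((lam * τ) ^ (-m) * Real.exp (-lam * (d / 2))) := by
          rw [h4]; ring
      _ ≤ (2 ^ m + c * 4 ^ m) * ((lam * τ) ^ (-m) * Real.exp (-lam * (d / 2))) := by
          have h2m : (0:ℝ) < 2 ^ m := by positivity
          have hX : 0 < (lam * τ) ^ (-m) * Real.exp (-lam * (d / 2)) := mul_pos hltm hexp2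
          nlinarith

-- integral of rpow over Ioc 0 b
lemma aux_int_rpow_Ioc (b r : ℝ) (hb : 0 < b) (hr : -1 < r) :
    (∫ lam in Ioc (0:ℝ) b, lam ^ r) = b ^ (r + 1) / (r + 1) := by
  have h := integral_rpow (a := 0) (b := b) (Or.inl hr)
  rw [intervalIntegral.integral_of_le hb.le] at h
  rw [h, Real.zero_rpow (by linarith : r + 1 ≠ 0)]
  ring

lemma aux_intOn_rpow_Ioc (b r : ℝ) (hb : 0 < b) (hb1 : b ≤ 1) (hr : -1 < r) :
    IntegrableOn (fun lam : ℝ => lam ^ r) (Ioc (0:ℝ) b) := by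
  have h := intervalIntegral.intervalIntegrable_rpow' (a := 0) (b := b) hr
  rwa [intervalIntegrable_iff_integrableOn_Ioc_of_le hb.le] at h


lemma aux_key2 (m q R A : ℝ) (hm : 0 < m) (hR : 0 < R) (hA : 0 < A) (hq : m < q) :
    ∃ C > (0:ℝ), ∀ f : ℝ → ℝ, Measurable f → ∀ t : ℝ, 0 ≤ t → ∀ s : ℝ, 0 ≤ s → s ≤ t + R →
      (∀ lam ∈ Ioc (0:ℝ) 1, 0 ≤ f lam) →
      (∀ lam ∈ Ioc (0:ℝ) 1, f lam ≤ A * (lam ^ (q-1) *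
        (Real.sqrt (1 + (lam * s) ^ 2) ^ (-m) * Real.exp (-lam * (t + R + 1 - s))))) →
      (∫ lam in Ioc (0:ℝ) 1, f lam) ≤
        C * (t + R) ^ (-m) * (t + R + 1 - s) ^ (m - q) := by
  obtain ⟨K, hK, hKbd⟩ := aux_unified m hm
  have hqm : 0 < q - m := by linarith
  refine ⟨A * K * Real.Gamma (q - m) * 2 ^ (q - m), by positivity,
    fun f hf t ht s hs hsτ hf0 hfb => ?_⟩
  set τ : ℝ := t + R with hτ_def
  have hτ : 0 < τ := by positivity
  set d : ℝ := τ + 1 - s with hd_def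
  have hd1 : 1 ≤ d := by simp only [hd_def]; linarith
  have hd2 : 0 < d / 2 := by linarith
  set g : ℝ → ℝ := fun lam => lam ^ ((q - m) - 1) * Real.exp (-(d / 2 * lam)) with hg_def
  -- integrability of g on Ioi 0
  have hgint : IntegrableOn g (Ioi (0:ℝ)) := by
    have base := Real.GammaIntegral_convergent hqm
    have h := integrableOn_Ioi_comp_mul_left_iff
      (fun x => Real.exp (-x) * x ^ ((q - m) - 1)) 0 hd2
    rw [mul_zero] at h
    have h2 : IntegrableOn (fun x => Real.exp (-(d / 2 * x)) * (d / 2 * x) ^ ((q - m) - 1))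
        (Ioi (0:ℝ)) := h.mpr base
    have h3 : IntegrableOn (fun x => ((d / 2) ^ (-((q - m) - 1))) *
        (Real.exp (-(d / 2 * x)) * (d / 2 * x) ^ ((q - m) - 1))) (Ioi (0:ℝ)) :=
      h2.const_mul _
    refine h3.congr_fun (fun x hx => ?_) measurableSet_Ioi
    have hx0 : (0:ℝ) < x := hx
    simp only [hg_def]
    rw [Real.mul_rpow hd2.le hx0.le, Real.rpow_neg hd2.le]
    have hne : ((d / 2) ^ ((q - m) - 1) : ℝ) ≠ 0 := (Real.rpow_pos_of_pos hd2 _).ne'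
    field_simp
  -- pointwise bound
  have hptwise : ∀ lam ∈ Ioc (0:ℝ) 1, f lam ≤ (A * K * τ ^ (-m)) * g lam := by
    intro lam hlam
    obtain ⟨hlam0, hlam1⟩ := hlam
    have hu := hKbd τ s lam hτ hs hsτ hlam0
    have h1 : f lam ≤ A * (lam ^ (q-1) * (K * ((lam * τ) ^ (-m) *
        Real.exp (-lam * (d / 2))))) := by
      refine le_trans (hfb lam ⟨hlam0, hlam1⟩) ?_
      have hl : (0:ℝ) ≤ lam ^ (q-1) := (Real.rpow_pos_of_pos hlam0 _).le
      gcongr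
    refine le_trans h1 (le_of_eq ?_)
    have e1 : (lam * τ) ^ (-m) = lam ^ (-m) * τ ^ (-m) :=
      Real.mul_rpow hlam0.le hτ.le
    have e2 : lam ^ (q-1) * lam ^ (-m) = lam ^ ((q - m) - 1) := by
      rw [← Real.rpow_add hlam0]; ring_nf
    have e3 : Real.exp (-lam * (d / 2)) = Real.exp (-(d / 2 * lam)) := by ring_nf
    simp only [hg_def]
    rw [e1, e3]
    calc A * (lam ^ (q-1) * (K * (lam ^ (-m) * τ ^ (-m) * Real.exp (-(d / 2 * lam)))))
        = (A * K * τ ^ (-m)) * ((lam ^ (q-1) * lam ^ (-m)) * Real.exp (-(d / 2 * lam))) := by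
          ring
      _ = (A * K * τ ^ (-m)) * (lam ^ ((q - m) - 1) * Real.exp (-(d / 2 * lam))) := by
          rw [e2]
  -- integral bounds
  have hmono : (∫ lam in Ioc (0:ℝ) 1, f lam) ≤
      ∫ lam in Ioc (0:ℝ) 1, (A * K * τ ^ (-m)) * g lam := by
    refine integral_mono_of_nonneg ?_ (((hgint.mono_set Ioc_subset_Ioi_self)).const_mul _) ?_
    · exact (ae_restrict_iff' measurableSet_Ioc).2 (Eventually.of_forall hf0)
    · exact (ae_restrict_iff' measurableSet_Ioc).2 (Eventually.of_forall hptwise)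
  have hsplit : (∫ lam in Ioc (0:ℝ) 1, (A * K * τ ^ (-m)) * g lam)
      = (A * K * τ ^ (-m)) * ∫ lam in Ioc (0:ℝ) 1, g lam := by
    exact integral_const_mul _ _
  have hext : (∫ lam in Ioc (0:ℝ) 1, g lam) ≤ ∫ lam in Ioi (0:ℝ), g lam := by
    refine setIntegral_mono_set hgint ?_ (HasSubset.Subset.eventuallyLE Ioc_subset_Ioi_self)
    refine (ae_restrict_iff' measurableSet_Ioi).2 (Eventually.of_forall fun x hx => ?_)
    have : (0:ℝ) < x := hx
    positivity
  have hval : (∫ lam in Ioi (0:ℝ), g lam) = (1 / (d / 2)) ^ (q - m) * Real.Gamma (q - m) := by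
    exact integral_rpow_mul_exp_neg_mul_Ioi hqm hd2
  have hgnonneg : (0:ℝ) ≤ ∫ lam in Ioc (0:ℝ) 1, g lam := by
    refine setIntegral_nonneg measurableSet_Ioc fun x hx => ?_
    have : (0:ℝ) < x := hx.1
    positivity
  have hfinal : (A * K * τ ^ (-m)) * ((1 / (d / 2)) ^ (q - m) * Real.Gamma (q - m))
      = (A * K * Real.Gamma (q - m) * 2 ^ (q - m)) * τ ^ (-m) * d ^ (m - q) := by
    have e1 : (1 / (d / 2) : ℝ) = 2 / d := by field_simp
    have hd0 : (0:ℝ) < d := by linarith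
    rw [e1, Real.div_rpow (by norm_num) hd0.le]
    rw [show (m - q : ℝ) = -(q - m) by ring, Real.rpow_neg hd0.le]
    field_simp
  calc (∫ lam in Ioc (0:ℝ) 1, f lam)
      ≤ (A * K * τ ^ (-m)) * ∫ lam in Ioc (0:ℝ) 1, g lam := by rw [← hsplit]; exact hmono
    _ ≤ (A * K * τ ^ (-m)) * ∫ lam in Ioi (0:ℝ), g lam := by
        have hpos : (0:ℝ) ≤ A * K * τ ^ (-m) := by positivity
        exact mul_le_mul_of_nonneg_left hext hpos
    _ = (A * K * Real.Gamma (q - m) * 2 ^ (q - m)) * τ ^ (-m) * d ^ (m - q) := by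
        rw [hval, hfinal]

lemma aux_key1 (m q R A : ℝ) (hm : 0 < m) (hR : 0 < R) (hA : 0 < A)
    (hq0 : 0 < q) (hq : q < m) :
    ∃ C > (0:ℝ), ∀ f : ℝ → ℝ, Measurable f → ∀ t : ℝ, 0 ≤ t → ∀ s : ℝ, 0 ≤ s → s ≤ t + R →
      (∀ lam ∈ Ioc (0:ℝ) 1, 0 ≤ f lam) →
      (∀ lam ∈ Ioc (0:ℝ) 1, f lam ≤ A * (lam ^ (q-1) *
        (Real.sqrt (1 + (lam * s) ^ 2) ^ (-m) * Real.exp (-lam * (t + R + 1 - s))))) →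
      (∫ lam in Ioc (0:ℝ) 1, f lam) ≤ C * (t + R) ^ (-q) := by
  obtain ⟨K, hK, hKbd⟩ := aux_unified m hm
  have hmq : 0 < m - q := by linarith
  refine ⟨A / q + A * K / (m - q), by positivity,
    fun f hf t ht s hs hsτ hf0 hfb => ?_⟩
  set τ : ℝ := t + R with hτ_def
  have hτ : 0 < τ := by positivity
  set d : ℝ := τ + 1 - s with hd_def
  have hd1 : 1 ≤ d := by simp only [hd_def]; linarith
  have hτq : (0:ℝ) < τ ^ (-q) := Real.rpow_pos_of_pos hτ _
  -- crude pointwise bound by A * lam ^ (q-1)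
  have hcrude : ∀ lam ∈ Ioc (0:ℝ) 1, f lam ≤ A * lam ^ (q - 1) := by
    intro lam hlam
    refine le_trans (hfb lam hlam) ?_
    have hl : (0:ℝ) < lam := hlam.1
    have h1 : Real.sqrt (1 + (lam * s) ^ 2) ^ (-m) ≤ 1 := by
      apply Real.rpow_le_one_of_one_le_of_nonpos _ (by linarith)
      have := Real.sqrt_le_sqrt (show (1:ℝ) ≤ 1 + (lam * s) ^ 2 by nlinarith)
      simpa using this
    have h2 : Real.exp (-lam * d) ≤ 1 := by
      rw [Real.exp_le_one_iff]; nlinarith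
    calc A * (lam ^ (q-1) * (Real.sqrt (1 + (lam * s) ^ 2) ^ (-m) * Real.exp (-lam * d)))
        ≤ A * (lam ^ (q-1) * (1 * 1)) := by
          have hl1 : (0:ℝ) ≤ lam ^ (q-1) := (Real.rpow_pos_of_pos hl _).le
          have hs1 : (0:ℝ) ≤ Real.sqrt (1 + (lam * s) ^ 2) ^ (-m) :=
            Real.rpow_nonneg (Real.sqrt_nonneg _) _
          gcongr
      _ = A * lam ^ (q - 1) := by ring
  -- unified pointwise bound
  have hunif : ∀ lam ∈ Ioc (0:ℝ) 1, f lam ≤ (A * K * τ ^ (-m)) * lam ^ ((q - m) - 1) := by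
    intro lam hlam
    obtain ⟨hlam0, hlam1⟩ := hlam
    have hu := hKbd τ s lam hτ hs hsτ hlam0
    have h1 : f lam ≤ A * (lam ^ (q-1) * (K * ((lam * τ) ^ (-m) *
        Real.exp (-lam * (d / 2))))) := by
      refine le_trans (hfb lam ⟨hlam0, hlam1⟩) ?_
      have hl : (0:ℝ) ≤ lam ^ (q-1) := (Real.rpow_pos_of_pos hlam0 _).le
      gcongr
    have h2 : Real.exp (-lam * (d / 2)) ≤ 1 := by
      rw [Real.exp_le_one_iff]; nlinarith
    have e1 : (lam * τ) ^ (-m) = lam ^ (-m) * τ ^ (-m) := Real.mul_rpow hlam0.le hτ.le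
    have e2 : lam ^ (q-1) * lam ^ (-m) = lam ^ ((q - m) - 1) := by
      rw [← Real.rpow_add hlam0]; ring_nf
    calc f lam ≤ A * (lam ^ (q-1) * (K * ((lam * τ) ^ (-m) * Real.exp (-lam * (d / 2))))) := h1
      _ ≤ A * (lam ^ (q-1) * (K * ((lam * τ) ^ (-m) * 1))) := by
          have : (0:ℝ) ≤ (lam * τ) ^ (-m) := (Real.rpow_pos_of_pos (mul_pos hlam0 hτ) _).le
          have hl : (0:ℝ) ≤ lam ^ (q-1) := (Real.rpow_pos_of_pos hlam0 _).le
          gcongr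
      _ = (A * K * τ ^ (-m)) * (lam ^ (q-1) * lam ^ (-m)) := by rw [e1]; ring
      _ = (A * K * τ ^ (-m)) * lam ^ ((q - m) - 1) := by rw [e2]
  rcases le_or_gt τ 1 with hτ1 | hτ1
  · -- τ ≤ 1 : crude bound suffices
    have h1 : (∫ lam in Ioc (0:ℝ) 1, f lam) ≤ ∫ lam in Ioc (0:ℝ) 1, A * lam ^ (q - 1) := by
      refine integral_mono_of_nonneg
        ((ae_restrict_iff' measurableSet_Ioc).2 (Eventually.of_forall hf0))
        ((aux_intOn_rpow_Ioc 1 (q-1) one_pos le_rfl (by linarith)).const_mul A)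
        ((ae_restrict_iff' measurableSet_Ioc).2 (Eventually.of_forall hcrude))
    have h2 : (∫ lam in Ioc (0:ℝ) 1, A * lam ^ (q - 1)) = A / q := by
      rw [integral_const_mul, aux_int_rpow_Ioc 1 (q-1) one_pos (by linarith)]
      rw [Real.one_rpow]
      field_simp
      rw [sub_add_cancel]; exact div_self hq0.ne'
    have h3 : (1:ℝ) ≤ τ ^ (-q) :=
      Real.one_le_rpow_of_pos_of_le_one_of_nonpos hτ hτ1 (by linarith)
    have h4 : A / q ≤ (A / q + A * K / (m - q)) * τ ^ (-q) := by
      have h5 : (0:ℝ) < A * K / (m - q) := by positivity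
      nlinarith [div_pos hA hq0]
    calc (∫ lam in Ioc (0:ℝ) 1, f lam) ≤ A / q := h2 ▸ h1
      _ ≤ (A / q + A * K / (m - q)) * τ ^ (-q) := h4
  · -- τ > 1 : split at τ⁻¹
    set a : ℝ := τ⁻¹ with ha_def
    have ha0 : 0 < a := by positivity
    have ha1 : a < 1 := by
      rw [ha_def]; exact inv_lt_one_of_one_lt₀ hτ1
    -- integrability of f on pieces
    have hfint : IntegrableOn f (Ioc (0:ℝ) 1) := by
      refine Integrable.mono' ((aux_intOn_rpow_Ioc 1 (q-1) one_pos le_rfl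
        (by linarith)).const_mul A) hf.aestronglyMeasurable ?_
      refine (ae_restrict_iff' measurableSet_Ioc).2 (Eventually.of_forall fun lam hlam => ?_)
      rw [Real.norm_eq_abs, abs_of_nonneg (hf0 lam hlam)]
      exact hcrude lam hlam
    have hsplit : (∫ lam in Ioc (0:ℝ) 1, f lam)
        = (∫ lam in Ioc (0:ℝ) a, f lam) + ∫ lam in Ioc a 1, f lam := by
      rw [← setIntegral_union (Ioc_disjoint_Ioc_of_le le_rfl) measurableSet_Ioc
        (hfint.mono_set (Ioc_subset_Ioc le_rfl ha1.le))
        (hfint.mono_set (Ioc_subset_Ioc ha0.le le_rfl)),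
        Ioc_union_Ioc_eq_Ioc ha0.le ha1.le]
    -- first piece
    have hp1 : (∫ lam in Ioc (0:ℝ) a, f lam) ≤ A / q * τ ^ (-q) := by
      have h1 : (∫ lam in Ioc (0:ℝ) a, f lam) ≤ ∫ lam in Ioc (0:ℝ) a, A * lam ^ (q - 1) := by
        refine integral_mono_of_nonneg
          ((ae_restrict_iff' measurableSet_Ioc).2 (Eventually.of_forall fun lam hlam =>
            hf0 lam (Ioc_subset_Ioc le_rfl ha1.le hlam)))
          ((aux_intOn_rpow_Ioc a (q-1) ha0 ha1.le (by linarith)).const_mul A)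
          ((ae_restrict_iff' measurableSet_Ioc).2 (Eventually.of_forall fun lam hlam =>
            hcrude lam (Ioc_subset_Ioc le_rfl ha1.le hlam)))
      have h2 : (∫ lam in Ioc (0:ℝ) a, A * lam ^ (q - 1)) = A / q * τ ^ (-q) := by
        rw [integral_const_mul, aux_int_rpow_Ioc a (q-1) ha0 (by linarith)]
        have : a ^ (q - 1 + 1) = τ ^ (-q) := by
          rw [ha_def, show q - 1 + 1 = q by ring, ← Real.rpow_neg_one,
            ← Real.rpow_mul hτ.le]
          ring_nf
        rw [this]; ring
      linarith
    -- second piece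
    have hp2 : (∫ lam in Ioc a 1, f lam) ≤ A * K / (m - q) * τ ^ (-q) := by
      have hint2 : IntegrableOn (fun lam : ℝ => lam ^ ((q - m) - 1)) (Ioc a 1) := by
        have h0mem : (0:ℝ) ∉ Set.uIcc a 1 := by
          simp only [Set.mem_uIcc]
          push_neg
          constructor
          · intro h'; exact absurd h' (by linarith)
          · intro h'; exact absurd h' (by norm_num)
        have h := intervalIntegral.intervalIntegrable_rpow (μ := volume) (a := a) (b := 1)
          (r := (q-m)-1) (Or.inr h0mem)
        rwa [intervalIntegrable_iff_integrableOn_Ioc_of_le ha1.le] at h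
      have h1 : (∫ lam in Ioc a 1, f lam) ≤
          ∫ lam in Ioc a 1, (A * K * τ ^ (-m)) * lam ^ ((q - m) - 1) := by
        refine integral_mono_of_nonneg
          ((ae_restrict_iff' measurableSet_Ioc).2 (Eventually.of_forall fun lam hlam =>
            hf0 lam (Ioc_subset_Ioc ha0.le le_rfl hlam)))
          (hint2.const_mul _)
          ((ae_restrict_iff' measurableSet_Ioc).2 (Eventually.of_forall fun lam hlam =>
            hunif lam (Ioc_subset_Ioc ha0.le le_rfl hlam)))
      have h2 : (∫ lam in Ioc a 1, (A * K * τ ^ (-m)) * lam ^ ((q - m) - 1))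
          = (A * K * τ ^ (-m)) * ((a ^ (q - m) - 1) / (m - q)) := by
        rw [integral_const_mul]
        congr 1
        have h0mem : (0:ℝ) ∉ Set.uIcc a 1 := by
          simp only [Set.mem_uIcc]
          push_neg
          constructor
          · intro h'; exact absurd h' (by linarith)
          · intro h'; exact absurd h' (by norm_num)
        have h := integral_rpow (a := a) (b := 1) (r := (q-m)-1)
          (Or.inr ⟨by intro h'; linarith, h0mem⟩)
        rw [intervalIntegral.integral_of_le ha1.le] at h
        rw [h, show q - m - 1 + 1 = q - m by ring, Real.one_rpow]
        rw [div_eq_div_iff (by linarith : q - m ≠ 0) (by linarith : m - q ≠ 0)]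
        ring
      have e1 : a ^ (q - m) = τ ^ (m - q) := by
        rw [ha_def, ← Real.rpow_neg_one τ, ← Real.rpow_mul hτ.le]
        congr 1; ring
      have hτm : (0:ℝ) < τ ^ (-m) := Real.rpow_pos_of_pos hτ _
      have e2 : τ ^ (-m) * τ ^ (m - q) = τ ^ (-q) := by
        rw [← Real.rpow_add hτ]; congr 1; ring
      have h3 : (A * K * τ ^ (-m)) * ((a ^ (q - m) - 1) / (m - q))
          ≤ A * K / (m - q) * τ ^ (-q) := by
        rw [e1]
        have h4 : (τ ^ (m - q) - 1) / (m - q) ≤ τ ^ (m - q) / (m - q) := by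
          gcongr
          linarith
        calc (A * K * τ ^ (-m)) * ((τ ^ (m - q) - 1) / (m - q))
            ≤ (A * K * τ ^ (-m)) * (τ ^ (m - q) / (m - q)) := by
              have : (0:ℝ) ≤ A * K * τ ^ (-m) := by positivity
              exact mul_le_mul_of_nonneg_left h4 this
          _ = A * K / (m - q) * (τ ^ (-m) * τ ^ (m - q)) := by ring
          _ = A * K / (m - q) * τ ^ (-q) := by rw [e2]
      linarith [h1, h2 ▸ h1, h3]
    rw [hsplit]
    have := add_le_add hp1 hp2
    calc (∫ lam in Ioc (0:ℝ) a, f lam) + ∫ lam in Ioc a 1, f lam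
        ≤ A / q * τ ^ (-q) + A * K / (m - q) * τ ^ (-q) := this
      _ = (A / q + A * K / (m - q)) * τ ^ (-q) := by ring

lemma aux_pointwise (n : ℕ) (R c₁ q : ℝ) (hR : 0 < R) (hc₁ : c₁ ∈ Ioo (0 : ℝ) 1)
    (φ : ℝ → Eucl n → ℝ) (hφm : Measurable (fun p : ℝ × Eucl n => φ p.1 p.2))
    (hφb : ∀ lam : ℝ, lam ∈ Ioc (0 : ℝ) 1 → ∀ x : Eucl n,
        c₁ * Real.sqrt (1 + (lam * ‖x‖) ^ 2) ^ (-(((n : ℝ) - 1) / 2)) *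
            Real.exp (lam * ‖x‖) < φ lam x ∧
        φ lam x < c₁⁻¹ * Real.sqrt (1 + (lam * ‖x‖) ^ 2) ^ (-(((n : ℝ) - 1) / 2)) *
            Real.exp (lam * ‖x‖))
    (t : ℝ) (ht : 0 ≤ t) (x : Eucl n) :
    Measurable (fun lam : ℝ => Real.exp (-lam * t) * φ lam x * lam ^ (q - 1)) ∧
    (∀ lam ∈ Ioc (0:ℝ) 1, 0 ≤ Real.exp (-lam * t) * φ lam x * lam ^ (q - 1)) ∧
    (∀ lam ∈ Ioc (0:ℝ) 1, Real.exp (-lam * t) * φ lam x * lam ^ (q - 1) ≤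
      (c₁⁻¹ * Real.exp (R + 1)) * (lam ^ (q - 1) *
        (Real.sqrt (1 + (lam * ‖x‖) ^ 2) ^ (-(((n : ℝ) - 1) / 2)) *
          Real.exp (-lam * (t + R + 1 - ‖x‖))))) := by
  obtain ⟨hc0, hc1⟩ := hc₁
  have hφx : Measurable (fun lam : ℝ => φ lam x) :=
    hφm.comp (measurable_id.prodMk measurable_const)
  refine ⟨?_, ?_, ?_⟩
  · exact ((measurable_id.neg.mul_const t).exp.mul hφx).mul
      (by measurability : Measurable fun lam : ℝ => lam ^ (q - 1))
  · intro lam hlam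
    have hl : (0:ℝ) < lam := hlam.1
    have hS : (0:ℝ) < Real.sqrt (1 + (lam * ‖x‖) ^ 2) :=
      Real.sqrt_pos.mpr (by positivity)
    have hφpos : 0 < φ lam x := by
      refine lt_trans ?_ (hφb lam hlam x).1
      have := Real.rpow_pos_of_pos hS (-(((n : ℝ) - 1) / 2))
      positivity
    have := Real.exp_pos (-lam * t)
    have : (0:ℝ) ≤ lam ^ (q - 1) := (Real.rpow_pos_of_pos hl _).le
    positivity
  · intro lam hlam
    obtain ⟨hl, hl1⟩ := hlam
    have hS : (0:ℝ) < Real.sqrt (1 + (lam * ‖x‖) ^ 2) :=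
      Real.sqrt_pos.mpr (by positivity)
    have hSm : (0:ℝ) < Real.sqrt (1 + (lam * ‖x‖) ^ 2) ^ (-(((n : ℝ) - 1) / 2)) :=
      Real.rpow_pos_of_pos hS _
    have hlq : (0:ℝ) ≤ lam ^ (q - 1) := (Real.rpow_pos_of_pos hl _).le
    have step1 : Real.exp (-lam * t) * φ lam x * lam ^ (q - 1) ≤
        Real.exp (-lam * t) * (c₁⁻¹ * Real.sqrt (1 + (lam * ‖x‖) ^ 2) ^ (-(((n : ℝ) - 1) / 2)) *
          Real.exp (lam * ‖x‖)) * lam ^ (q - 1) := by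
      have h := (hφb lam ⟨hl, hl1⟩ x).2
      have he : (0:ℝ) < Real.exp (-lam * t) := Real.exp_pos _
      exact mul_le_mul_of_nonneg_right (mul_le_mul_of_nonneg_left h.le he.le) hlq
    refine le_trans step1 ?_
    have hexpeq : Real.exp (-lam * t) * Real.exp (lam * ‖x‖) =
        Real.exp (lam * (R + 1)) * Real.exp (-lam * (t + R + 1 - ‖x‖)) := by
      rw [← Real.exp_add, ← Real.exp_add]
      congr 1
      ring
    have hexple : Real.exp (lam * (R + 1)) ≤ Real.exp (R + 1) := by
      apply Real.exp_le_exp.mpr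
      nlinarith
    calc Real.exp (-lam * t) * (c₁⁻¹ * Real.sqrt (1 + (lam * ‖x‖) ^ 2) ^ (-(((n : ℝ) - 1) / 2)) *
          Real.exp (lam * ‖x‖)) * lam ^ (q - 1)
        = (c₁⁻¹ * Real.sqrt (1 + (lam * ‖x‖) ^ 2) ^ (-(((n : ℝ) - 1) / 2)) * lam ^ (q - 1)) *
          (Real.exp (-lam * t) * Real.exp (lam * ‖x‖)) := by ring
      _ = (c₁⁻¹ * Real.sqrt (1 + (lam * ‖x‖) ^ 2) ^ (-(((n : ℝ) - 1) / 2)) * lam ^ (q - 1)) *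
          (Real.exp (lam * (R + 1)) * Real.exp (-lam * (t + R + 1 - ‖x‖))) := by rw [hexpeq]
      _ ≤ (c₁⁻¹ * Real.sqrt (1 + (lam * ‖x‖) ^ 2) ^ (-(((n : ℝ) - 1) / 2)) * lam ^ (q - 1)) *
          (Real.exp (R + 1) * Real.exp (-lam * (t + R + 1 - ‖x‖))) := by
          have h0 : (0:ℝ) ≤ c₁⁻¹ * Real.sqrt (1 + (lam * ‖x‖) ^ 2) ^ (-(((n : ℝ) - 1) / 2)) *
              lam ^ (q - 1) := by positivity
          have h1 : (0:ℝ) ≤ Real.exp (-lam * (t + R + 1 - ‖x‖)) := (Real.exp_pos _).le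
          exact mul_le_mul_of_nonneg_left (mul_le_mul_of_nonneg_right hexple h1) h0
      _ = (c₁⁻¹ * Real.exp (R + 1)) * (lam ^ (q - 1) *
          (Real.sqrt (1 + (lam * ‖x‖) ^ 2) ^ (-(((n : ℝ) - 1) / 2)) *
            Real.exp (-lam * (t + R + 1 - ‖x‖)))) := by ring


/-- Upper bounds for the test function `b_q(t,x) = ∫₀¹ e^{−λt} φ_λ(x) λ^{q−1} dλ` on the light
cone `|x| ≤ t + R`: `b_q ≲ (t+R)^{−q}` for `0 < q < (n−1)/2`, and
`b_q ≲ (t+R)^{−(n−1)/2}(t+R+1−|x|)^{(n−1)/2−q}` for `q > (n−1)/2`. -/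
theorem bq_upper_bound
    (n : ℕ) (hn : 2 ≤ n) (R c₁ q : ℝ) (hR : 0 < R) (hc₁ : c₁ ∈ Ioo (0 : ℝ) 1) :
    ∃ C > (0 : ℝ), ∀ φ : ℝ → Eucl n → ℝ,
      Measurable (fun p : ℝ × Eucl n => φ p.1 p.2) →
      (∀ lam : ℝ, lam ∈ Ioc (0 : ℝ) 1 → ∀ x : Eucl n,
        c₁ * Real.sqrt (1 + (lam * ‖x‖) ^ 2) ^ (-(((n : ℝ) - 1) / 2)) *
            Real.exp (lam * ‖x‖) < φ lam x ∧
        φ lam x < c₁⁻¹ * Real.sqrt (1 + (lam * ‖x‖) ^ 2) ^ (-(((n : ℝ) - 1) / 2)) *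
            Real.exp (lam * ‖x‖)) →
      ∀ t : ℝ, 0 ≤ t → ∀ x : Eucl n, ‖x‖ ≤ t + R →
        ((0 < q → q < ((n : ℝ) - 1) / 2 →
          (∫ lam in Ioc (0 : ℝ) 1, Real.exp (-lam * t) * φ lam x * lam ^ (q - 1))
            ≤ C * (t + R) ^ (-q)) ∧
         (((n : ℝ) - 1) / 2 < q →
          (∫ lam in Ioc (0 : ℝ) 1, Real.exp (-lam * t) * φ lam x * lam ^ (q - 1))
            ≤ C * (t + R) ^ (-(((n : ℝ) - 1) / 2)) *
              (t + R + 1 - ‖x‖) ^ (((n : ℝ) - 1) / 2 - q))) := by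
  have hm : 0 < ((n:ℝ) - 1) / 2 := by
    have h2n : (2:ℝ) ≤ (n:ℝ) := by exact_mod_cast hn
    linarith
  have hc0 : 0 < c₁ := hc₁.1
  have hA : 0 < c₁⁻¹ * Real.exp (R + 1) := by positivity
  by_cases hq2 : ((n:ℝ) - 1) / 2 < q
  · obtain ⟨C, hC, hbd⟩ := aux_key2 (((n:ℝ) - 1) / 2) q R (c₁⁻¹ * Real.exp (R + 1)) hm hR hA hq2
    refine ⟨C, hC, fun φ hφm hφb t ht x hx => ?_⟩
    obtain ⟨hfm, hf0, hfb⟩ := aux_pointwise n R c₁ q hR hc₁ φ hφm hφb t ht x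
    exact ⟨fun _ h2 => absurd h2 (by linarith),
      fun _ => hbd _ hfm t ht ‖x‖ (norm_nonneg x) hx hf0 hfb⟩
  · by_cases hq1 : 0 < q ∧ q < ((n:ℝ) - 1) / 2
    · obtain ⟨C, hC, hbd⟩ :=
        aux_key1 (((n:ℝ) - 1) / 2) q R (c₁⁻¹ * Real.exp (R + 1)) hm hR hA hq1.1 hq1.2
      refine ⟨C, hC, fun φ hφm hφb t ht x hx => ?_⟩
      obtain ⟨hfm, hf0, hfb⟩ := aux_pointwise n R c₁ q hR hc₁ φ hφm hφb t ht x
      exact ⟨fun _ _ => hbd _ hfm t ht ‖x‖ (norm_nonneg x) hx hf0 hfb,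
        fun h => absurd h hq2⟩
    · push_neg at hq1
      exact ⟨1, one_pos, fun φ hφm hφb t ht x hx =>
        ⟨fun h1 h2 => absurd h2 (not_lt.mpr (hq1 h1)), fun h => absurd h hq2⟩⟩
end
end

section
/- Let p > 1, c > 0. There exists a constant C > 0, depending only on p and c, with the following property: for every ε ∈ (0,1) and every T* with 4 < T* ≤ ∞, if Y : [2, T*) → [0,∞) is differentiable and satisfies T·Y′(T) ≥ c ε^p and T·Y′(T) ≥ c Y(T)^p (ln T)^{1−p} for all T ∈ [2, T*), then T* < ∞ and ln T* ≤ C ε^{−p(p−1)}. -/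
open MeasureTheory Set Real Filter

noncomputable section

/-- Auxiliary: monotonicity on a closed interval from a pointwise derivative bound. -/
lemma mono_of_hasDerivAt_nonneg {f f' : ℝ → ℝ} {a b : ℝ}
    (hd : ∀ x ∈ Icc a b, HasDerivAt f (f' x) x)
    (h0 : ∀ x ∈ Icc a b, 0 ≤ f' x) : MonotoneOn f (Icc a b) := by
  apply monotoneOn_of_deriv_nonneg (convex_Icc a b)
  · exact fun x hx => (hd x hx).continuousAt.continuousWithinAt
  · intro x hx
    rw [interior_Icc] at hx
    exact ((hd x (Ioo_subset_Icc_self hx)).differentiableAt).differentiableWithinAt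
  · intro x hx
    rw [interior_Icc] at hx
    rw [(hd x (Ioo_subset_Icc_self hx)).deriv]
    exact h0 x (Ioo_subset_Icc_self hx)

set_option maxHeartbeats 1000000 in
/-- The critical-case ODE lemma: if `Y ≥ 0` on `[2, T*)` satisfies `T·Y′ ≥ cε^p` and
`T·Y′ ≥ cY^p (ln T)^{1−p}`, then `T* < ∞` and `ln T* ≤ C ε^{−p(p−1)}`. -/
theorem critical_ode_lemma (p c : ℝ) (hp : 1 < p) (hc : 0 < c) :
    ∃ C > (0 : ℝ), ∀ ε : ℝ, ε ∈ Ioo (0 : ℝ) 1 →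
      ∀ Tstar : EReal, (4 : EReal) < Tstar →
      ∀ Y Y' : ℝ → ℝ,
        (∀ T : ℝ, 2 ≤ T → (T : EReal) < Tstar →
          0 ≤ Y T ∧ HasDerivAt Y (Y' T) T ∧
          c * ε ^ p ≤ T * Y' T ∧
          c * Y T ^ p * Real.log T ^ (1 - p) ≤ T * Y' T) →
        Tstar ≠ ⊤ ∧ Real.log Tstar.toReal ≤ C * ε ^ (-(p * (p - 1))) := by
  have hp1 : 0 < p - 1 := by linarith
  have hp0 : 0 < p := by linarith
  set A1 : ℝ := (c / 2) ^ (1 - p) with hA1def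
  set A2 : ℝ := (2 : ℝ) ^ (1 - p) with hA2def
  set A3 : ℝ := (2 : ℝ) ^ (p - 1) with hA3def
  have hA1 : 0 < A1 := Real.rpow_pos_of_pos (by linarith) _
  have hA2 : 0 < A2 := Real.rpow_pos_of_pos (by norm_num) _
  have hA3 : 0 < A3 := Real.rpow_pos_of_pos (by norm_num) _
  have hA23 : A2 * A3 = 1 := by
    rw [hA2def, hA3def, ← Real.rpow_add (by norm_num : (0:ℝ) < 2)]
    norm_num
  set K : ℝ := A1 * A3 / (c * (p - 1)) with hKdef
  have hK : 0 < K := by positivity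
  refine ⟨2 * (K + 2), by positivity, ?_⟩
  intro ε hε Tstar hT4 Y Y' H
  obtain ⟨hε0, hε1⟩ := hε
  have he1 : (1 : ℝ) ≤ ε ^ (-(p * (p - 1))) :=
    Real.one_le_rpow_of_pos_of_le_one_of_nonpos hε0 hε1.le (by nlinarith)
  have hepos : (0 : ℝ) < ε ^ (-(p * (p - 1))) := Real.rpow_pos_of_pos hε0 _
  set e : ℝ := ε ^ (-(p * (p - 1))) with hedef
  set S : ℝ := (K + 2) * e with hSdef
  have hS2 : 2 ≤ S := by nlinarith
  have hSpos : 0 < S := by linarith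
  set T1 : ℝ := Real.exp (2 * S) with hT1def
  have key : ¬ ((T1 : EReal) < Tstar) := by
    intro h1
    set T0 : ℝ := Real.exp S with hT0def
    have hT0two : 2 ≤ T0 := by
      have := Real.add_one_le_exp S
      rw [hT0def]; linarith
    have hT01 : T0 ≤ T1 := Real.exp_le_exp.2 (by linarith)
    have hdom : ∀ T : ℝ, T ∈ Icc 2 T1 →
        0 ≤ Y T ∧ HasDerivAt Y (Y' T) T ∧
          c * ε ^ p ≤ T * Y' T ∧
          c * Y T ^ p * Real.log T ^ (1 - p) ≤ T * Y' T := by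
      intro T hT
      exact H T hT.1 (lt_of_le_of_lt (EReal.coe_le_coe_iff.2 hT.2) h1)
    -- Step A : Y T ≥ c ε^p (log T - log 2) on [2, T1]
    have hgmono : MonotoneOn (fun T => Y T - c * ε ^ p * Real.log T) (Icc 2 T1) := by
      apply mono_of_hasDerivAt_nonneg (f' := fun T => Y' T - c * ε ^ p * T⁻¹)
      · intro x hx
        have hx0 : x ≠ 0 := by have := hx.1; intro h; rw [h] at this; norm_num at this
        exact ((hdom x hx).2.1).sub ((Real.hasDerivAt_log hx0).const_mul (c * ε ^ p))
      · intro x hx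
        have hx0 : (0:ℝ) < x := by linarith [hx.1]
        have h3 := (hdom x hx).2.2.1
        have : c * ε ^ p * x⁻¹ ≤ Y' x := by
          rw [← div_eq_mul_inv, div_le_iff₀ hx0]
          linarith [h3, mul_comm x (Y' x)]
        linarith
    have hYlb : ∀ T ∈ Icc T0 T1, c * ε ^ p * (S / 2) ≤ Y T := by
      intro T hT
      have hTmem : T ∈ Icc 2 T1 := ⟨le_trans hT0two hT.1, hT.2⟩
      have h2mem : (2:ℝ) ∈ Icc (2:ℝ) T1 := ⟨le_refl _, le_trans hT0two hT01⟩
      have hmono := hgmono h2mem hTmem hTmem.1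
      have hY2 : 0 ≤ Y 2 := (hdom 2 h2mem).1
      have hlogT : S ≤ Real.log T := by
        have : Real.log T0 ≤ Real.log T :=
          Real.log_le_log (Real.exp_pos S) hT.1
        rwa [hT0def, Real.log_exp] at this
      have hlog2 : Real.log 2 < 1 := by
        have := Real.log_two_lt_d9; linarith
      have hcep : 0 < c * ε ^ p := by positivity
      simp only at hmono
      nlinarith [mul_le_mul_of_nonneg_left (by linarith : Real.log 2 + S / 2 ≤ Real.log T)
        hcep.le]
    set B : ℝ := c * ε ^ p * (S / 2) with hBdef
    have hB : 0 < B := by positivity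
    -- Step B : energy argument on [T0, T1]
    set m : ℝ := (2 * S) ^ (1 - p) with hmdef
    have hm : 0 < m := Real.rpow_pos_of_pos (by linarith) _
    have hFmono : MonotoneOn
        (fun T => -(Y T ^ (1 - p) + (p - 1) * c * m * Real.log T)) (Icc T0 T1) := by
      apply mono_of_hasDerivAt_nonneg
        (f' := fun T => -(Y' T * (1 - p) * Y T ^ (1 - p - 1) + (p - 1) * c * m * T⁻¹))
      · intro x hx
        have hx0 : x ≠ 0 := by
          have : (2:ℝ) ≤ x := le_trans hT0two hx.1
          intro h; rw [h] at this; norm_num at this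
        have hYx : 0 < Y x := lt_of_lt_of_le hB (hYlb x hx)
        exact (((hdom x ⟨le_trans hT0two hx.1, hx.2⟩).2.1).rpow_const
          (Or.inl hYx.ne')).add
          ((Real.hasDerivAt_log hx0).const_mul ((p - 1) * c * m)) |>.neg
      · intro x hx
        have hx0 : (0:ℝ) < x := by linarith [le_trans hT0two hx.1]
        have hYx : 0 < Y x := lt_of_lt_of_le hB (hYlb x hx)
        have hlogx : 0 < Real.log x := Real.log_pos (by linarith [le_trans hT0two hx.1])
        have hlogx2 : Real.log x ≤ 2 * S := by
          have : Real.log x ≤ Real.log T1 := Real.log_le_log hx0 hx.2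
          rwa [hT1def, Real.log_exp] at this
        -- m ≤ (log x)^(1-p)
        have hm_le : m ≤ Real.log x ^ (1 - p) :=
          Real.rpow_le_rpow_of_nonpos hlogx hlogx2 (by linarith)
        have h4 := (hdom x ⟨le_trans hT0two hx.1, hx.2⟩).2.2.2
        have hYp : 0 < Y x ^ p := Real.rpow_pos_of_pos hYx _
        have h5 : c * Y x ^ p * m ≤ x * Y' x := by
          calc c * Y x ^ p * m ≤ c * Y x ^ p * (Real.log x ^ (1 - p)) :=
                mul_le_mul_of_nonneg_left hm_le (by positivity)
            _ ≤ x * Y' x := h4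
        -- deduce (p-1)*c*m*x⁻¹ ≤ (p-1) * Y x^(-p) * Y' x, i.e. f' ≤ 0 ... show 0 ≤ -f'
        have hYnp : Y x ^ (1 - p - 1) = (Y x ^ p)⁻¹ := by
          rw [show (1 - p - 1 : ℝ) = -p by ring, Real.rpow_neg hYx.le]
        have h6 : c * m * x⁻¹ ≤ (Y x ^ p)⁻¹ * Y' x := by
          rw [← div_eq_mul_inv (c * m) x, div_le_iff₀ hx0, ← sub_nonneg]
          have h7 : (Y x ^ p)⁻¹ * Y' x * x - c * m = (Y x ^ p)⁻¹ * (x * Y' x - c * Y x ^ p * m) := by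
            field_simp
          rw [h7]
          exact mul_nonneg (by positivity) (by linarith)
        have h8 : (p - 1) * (c * m * x⁻¹) ≤ (p - 1) * ((Y x ^ p)⁻¹ * Y' x) :=
          mul_le_mul_of_nonneg_left h6 hp1.le
        rw [hYnp]
        nlinarith [h8]
    -- extract the inequality F T1 ≤ F T0
    have hmemT0 : T0 ∈ Icc T0 T1 := ⟨le_refl _, hT01⟩
    have hmemT1 : T1 ∈ Icc T0 T1 := ⟨hT01, le_refl _⟩
    have hFF : Y T1 ^ (1 - p) + (p - 1) * c * m * Real.log T1 ≤
        Y T0 ^ (1 - p) + (p - 1) * c * m * Real.log T0 :=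
      neg_le_neg_iff.mp (hFmono hmemT0 hmemT1 hT01)
    have hlogT0 : Real.log T0 = S := by rw [hT0def, Real.log_exp]
    have hlogT1 : Real.log T1 = 2 * S := by rw [hT1def, Real.log_exp]
    have hYT1nn : 0 ≤ Y T1 ^ (1 - p) := Real.rpow_nonneg (hdom T1 ⟨le_trans hT0two hT01, le_refl _⟩).1 _
    have hFF' : (p - 1) * c * m * S ≤ Y T0 ^ (1 - p) := by
      rw [hlogT0, hlogT1] at hFF
      nlinarith [hFF, hYT1nn]
    -- Y T0 ≥ B so Y T0^(1-p) ≤ B^(1-p)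
    have hYT0 : B ≤ Y T0 := hYlb T0 hmemT0
    have hBle : Y T0 ^ (1 - p) ≤ B ^ (1 - p) :=
      Real.rpow_le_rpow_of_nonpos hB hYT0 (by linarith)
    -- expand B^(1-p) and m
    have hεexp : (ε ^ p) ^ (1 - p) = e := by
      rw [hedef, ← Real.rpow_mul hε0.le]
      congr 1; ring
    have hBexp : B ^ (1 - p) = A1 * e * S ^ (1 - p) := by
      rw [hBdef, show c * ε ^ p * (S / 2) = (c / 2) * ε ^ p * S by ring,
        Real.mul_rpow (by positivity) hSpos.le,
        Real.mul_rpow (by positivity) (by positivity), hεexp, hA1def]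
    have hmexp : m = A2 * S ^ (1 - p) := by
      rw [hmdef, show (2 : ℝ) * S = 2 * S from rfl,
        Real.mul_rpow (by norm_num) hSpos.le, hA2def]
    have hP : 0 < S ^ (1 - p) := Real.rpow_pos_of_pos hSpos _
    have hmain : (p - 1) * c * A2 * S ≤ A1 * e := by
      have h9 : ((p - 1) * c * A2 * S) * S ^ (1 - p) ≤ (A1 * e) * S ^ (1 - p) := by
        calc ((p - 1) * c * A2 * S) * S ^ (1 - p)
            = (p - 1) * c * (A2 * S ^ (1 - p)) * S := by ring
          _ = (p - 1) * c * m * S := by rw [← hmexp]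
          _ ≤ Y T0 ^ (1 - p) := hFF'
          _ ≤ B ^ (1 - p) := hBle
          _ = (A1 * e) * S ^ (1 - p) := by rw [hBexp]
      exact le_of_mul_le_mul_right h9 hP
    -- derive contradiction
    have hKc : K * (c * (p - 1)) = A1 * A3 := by
      rw [hKdef]
      field_simp
    have hKA : (p - 1) * c * A2 * K = A1 := by
      calc (p - 1) * c * A2 * K = A2 * (K * (c * (p - 1))) := by ring
        _ = A2 * (A1 * A3) := by rw [hKc]
        _ = A1 * (A2 * A3) := by ring
        _ = A1 := by rw [hA23]; ring
    have hfin : (A1 + 2 * ((p - 1) * c * A2)) * e ≤ A1 * e := by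
      calc (A1 + 2 * ((p - 1) * c * A2)) * e
          = (p - 1) * c * A2 * K * e + 2 * ((p - 1) * c * A2) * e := by rw [hKA]; ring
        _ = (p - 1) * c * A2 * ((K + 2) * e) := by ring
        _ = (p - 1) * c * A2 * S := by rw [← hSdef]
        _ ≤ A1 * e := hmain
    nlinarith [mul_pos (mul_pos (mul_pos hp1 hc) hA2) hepos]
  -- conclusion
  have hle : Tstar ≤ (T1 : EReal) := not_lt.1 key
  have hnetop : Tstar ≠ ⊤ := ne_top_of_le_ne_top (EReal.coe_ne_top T1) hle
  refine ⟨hnetop, ?_⟩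
  have hbot : Tstar ≠ ⊥ := ne_bot_of_gt hT4
  have h2 := EReal.toReal_le_toReal hle hbot (EReal.coe_ne_top T1)
  rw [EReal.toReal_coe] at h2
  have h4R : (4 : ℝ) ≤ Tstar.toReal := by
    have hx : ((4 : ℝ) : EReal) ≤ Tstar := by
      have h44 : ((4 : ℝ) : EReal) = (4 : EReal) := by norm_cast
      rw [h44]; exact hT4.le
    have := EReal.toReal_le_toReal hx (EReal.coe_ne_bot 4) hnetop
    rwa [EReal.toReal_coe] at this
  rw [Real.log_le_iff_le_exp (by linarith)]
  have hexpo : 2 * (K + 2) * ε ^ (-(p * (p - 1))) = 2 * S := by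
    rw [hSdef, hedef]; ring
  rw [hexpo, ← hT1def]
  exact h2
end
end

section
/- Let n ≥ 2, β > 1, μ ≥ 0, λ ∈ (0,1], and let D : [0,∞) → ℝ be continuous with 0 ≤ D(r) ≤ μ(1+r)^{−β}. Let f ∈ C²([0,1]) be a radial profile satisfying 0 < f(r) ≤ 1 on [0,1] and the ODE (r^{n−1}f′(r))′ = (λ^{−1}D(r/λ) + 1) r^{n−1} f(r) on (0,1], with r^{n−1}f′(r) → 0 as r → 0⁺. Then f′(r) ≤ μ/(n−1) + r/n for all r ∈ (0,1]. -/
open MeasureTheory Set Real Filter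

noncomputable section

/-- Derivative bound for the rescaled radial profile of the Dirichlet eigenfunction:
under `(r^{n−1}f′)′ = (λ^{−1}D(r/λ) + 1) r^{n−1} f` with `0 < f ≤ 1` and
`r^{n−1}f′(r) → 0` as `r → 0⁺`, one has `f′(r) ≤ μ/(n−1) + r/n` on `(0,1]`. -/
theorem rescaled_profile_deriv_bound
    (n : ℕ) (hn : 2 ≤ n) (β μ lam : ℝ) (hβ : 1 < β) (hμ : 0 ≤ μ)
    (hlam : lam ∈ Ioc (0 : ℝ) 1)
    (D : ℝ → ℝ) (hDc : Continuous D)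
    (hD0 : ∀ r : ℝ, 0 ≤ r → 0 ≤ D r)
    (hDle : ∀ r : ℝ, 0 ≤ r → D r ≤ μ * (1 + r) ^ (-β))
    (f f' : ℝ → ℝ)
    (hC2 : ContDiffOn ℝ 2 f (Icc (0 : ℝ) 1))
    (hf : ∀ r ∈ Icc (0 : ℝ) 1, 0 < f r ∧ f r ≤ 1)
    (hderiv : ∀ r ∈ Ioc (0 : ℝ) 1, HasDerivAt f (f' r) r)
    (hode : ∀ r ∈ Ioc (0 : ℝ) 1,
      HasDerivAt (fun s : ℝ => s ^ (n - 1) * f' s)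
        ((lam⁻¹ * D (r / lam) + 1) * r ^ (n - 1) * f r) r)
    (hlim : Tendsto (fun r : ℝ => r ^ (n - 1) * f' r) (nhdsWithin 0 (Ioi 0)) (nhds 0)) :
    ∀ r ∈ Ioc (0 : ℝ) 1, f' r ≤ μ / ((n : ℝ) - 1) + r / (n : ℝ) := by
  have hn1 : (1:ℝ) < (n:ℝ) := by exact_mod_cast (by omega : 1 < n)
  have hn0 : (0:ℝ) < (n:ℝ) := by linarith
  have hnm1 : ((n:ℝ) - 1) ≠ 0 := by linarith
  set G : ℝ → ℝ := fun s => μ / ((n:ℝ) - 1) * s ^ (n-1) + s ^ n / (n:ℝ)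
    - s ^ (n-1) * f' s with hG
  set G' : ℝ → ℝ := fun s => μ * s ^ (n-2) + s ^ (n-1)
    - (lam⁻¹ * D (s / lam) + 1) * s ^ (n-1) * f s with hG'
  -- derivative of G
  have hGd : ∀ x ∈ Ioc (0:ℝ) 1, HasDerivAt G (G' x) x := by
    intro x hx
    have h1 : HasDerivAt (fun s : ℝ => μ / ((n:ℝ) - 1) * s ^ (n-1)) (μ * x ^ (n-2)) x := by
      have := (hasDerivAt_pow (n-1) x).const_mul (μ / ((n:ℝ) - 1))
      convert this using 1
      · rfl
      · rfl
      have e1 : ((n-1 : ℕ) : ℝ) = (n:ℝ) - 1 := by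
        rw [Nat.cast_sub (by omega)]; norm_num
      have e2 : n - 1 - 1 = n - 2 := by omega
      rw [e1, e2]
      field_simp
    have h2 : HasDerivAt (fun s : ℝ => s ^ n / (n:ℝ)) (x ^ (n-1)) x := by
      have := (hasDerivAt_pow n x).div_const (n:ℝ)
      convert this using 1
      · rfl
      · rfl
      field_simp
    exact (h1.add h2).sub (hode x hx)
  -- nonnegativity of G'
  have hGd0 : ∀ x ∈ Ioc (0:ℝ) 1, 0 ≤ G' x := by
    intro x hx
    have hx0 : 0 < x := hx.1
    have hlam0 : 0 < lam := hlam.1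
    have hy0 : 0 ≤ x / lam := le_of_lt (div_pos hx0 hlam0)
    set y := x / lam with hy
    have hfle := hf x ⟨hx0.le, hx.2⟩
    have hpow0 : 0 ≤ x ^ (n-1) := by positivity
    have hc0 : 0 ≤ lam⁻¹ * D y + 1 := by
      have := hD0 y hy0
      have : 0 ≤ lam⁻¹ * D y := mul_nonneg (by positivity) this
      linarith
    have step1 : (lam⁻¹ * D y + 1) * x ^ (n-1) * f x ≤ (lam⁻¹ * D y + 1) * x ^ (n-1) := by
      have := mul_le_of_le_one_right (mul_nonneg hc0 hpow0) hfle.2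
      linarith [this]
    -- key: (1/lam) * D y * x ≤ μ
    have key : lam⁻¹ * D y * x ≤ μ := by
      have hDy : D y ≤ μ * (1 + y) ^ (-β) := hDle y hy0
      have hb1 : (1:ℝ) ≤ 1 + y := by linarith
      have hbpos : (0:ℝ) < 1 + y := by linarith
      have hexp : (1 + y) ^ (-β) ≤ (1 + y) ^ (-1:ℝ) :=
        Real.rpow_le_rpow_of_exponent_le hb1 (by linarith)
      have hr1 : (1 + y) ^ (-1:ℝ) = (1 + y)⁻¹ := Real.rpow_neg_one _
      have hDy' : D y ≤ μ * (1 + y)⁻¹ := by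
        calc D y ≤ μ * (1 + y) ^ (-β) := hDy
          _ ≤ μ * (1 + y)⁻¹ := by rw [← hr1]; exact mul_le_mul_of_nonneg_left hexp hμ
      have hxy : lam⁻¹ * x = y := by rw [hy]; field_simp
      have : lam⁻¹ * D y * x = D y * y := by rw [← hxy]; ring
      rw [this]
      have hDy0 : 0 ≤ D y := hD0 y hy0
      calc D y * y ≤ (μ * (1 + y)⁻¹) * y := mul_le_mul_of_nonneg_right hDy' (by linarith [hy0])
        _ = μ * (y / (1 + y)) := by ring
        _ ≤ μ * 1 := mul_le_mul_of_nonneg_left (by rw [div_le_one hbpos]; linarith) hμ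
        _ = μ := mul_one μ
    have hpow2 : 0 ≤ x ^ (n-2) := by positivity
    have hsplit : x ^ (n-1) = x ^ (n-2) * x := by
      rw [← pow_succ]; congr 1; omega
    have step2 : lam⁻¹ * D y * x ^ (n-1) ≤ μ * x ^ (n-2) := by
      rw [hsplit]
      calc lam⁻¹ * D y * (x ^ (n-2) * x) = (lam⁻¹ * D y * x) * x ^ (n-2) := by ring
        _ ≤ μ * x ^ (n-2) := mul_le_mul_of_nonneg_right key hpow2
    simp only [hG']
    nlinarith [step1, step2]
  -- limit of G at 0+
  have hGlim : Tendsto G (nhdsWithin 0 (Ioi 0)) (nhds 0) := by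
    have hpoly : Tendsto (fun s : ℝ => μ / ((n:ℝ) - 1) * s ^ (n-1) + s ^ n / (n:ℝ))
        (nhdsWithin 0 (Ioi 0)) (nhds 0) := by
      have hc : Continuous (fun s : ℝ => μ / ((n:ℝ) - 1) * s ^ (n-1) + s ^ n / (n:ℝ)) := by
        continuity
      have := (hc.tendsto 0).mono_left (nhdsWithin_le_nhds (s := Ioi (0:ℝ)))
      simpa [zero_pow (by omega : n - 1 ≠ 0), zero_pow (by omega : n ≠ 0)] using this
    have := hpoly.sub hlim
    simpa using this
  -- main: G r ≥ 0 for r ∈ (0,1]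
  intro r hr
  have hr0 : 0 < r := hr.1
  have hGr : 0 ≤ G r := by
    have hmono : ∀ ε ∈ Ioo (0:ℝ) r, G ε ≤ G r := by
      intro ε hε
      have hsub : Icc ε r ⊆ Ioc (0:ℝ) 1 := fun x hx =>
        ⟨lt_of_lt_of_le hε.1 hx.1, le_trans hx.2 hr.2⟩
      have hcont : ContinuousOn G (Icc ε r) := fun x hx =>
        ((hGd x (hsub hx)).continuousAt).continuousWithinAt
      have hdiff : ∀ x ∈ interior (Icc ε r), HasDerivAt G (G' x) x := by
        intro x hx
        rw [interior_Icc] at hx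
        exact hGd x (hsub ⟨hx.1.le, hx.2.le⟩)
      have hmon : MonotoneOn G (Icc ε r) := by
        apply monotoneOn_of_deriv_nonneg (convex_Icc ε r) hcont
        · intro x hx
          exact (hdiff x hx).differentiableAt.differentiableWithinAt
        · intro x hx
          rw [(hdiff x hx).deriv]
          rw [interior_Icc] at hx
          exact hGd0 x (hsub ⟨hx.1.le, hx.2.le⟩)
      exact hmon ⟨le_refl ε, hε.2.le⟩ ⟨hε.2.le, le_refl r⟩ hε.2.le
    have hev : ∀ᶠ ε in nhdsWithin 0 (Ioi 0), G ε ≤ G r := by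
      have hIoo : Ioo (0:ℝ) r ∈ nhdsWithin 0 (Ioi 0) := by
        rw [mem_nhdsWithin]
        exact ⟨Iio r, isOpen_Iio, hr0, fun x hx => ⟨hx.2, hx.1⟩⟩
      filter_upwards [hIoo] with ε hε using hmono ε hε
    exact le_of_tendsto hGlim hev
  -- conclude
  have hrpow : 0 < r ^ (n-1) := by positivity
  have hsplit : r ^ n = r ^ (n-1) * r := by
    rw [← pow_succ]; congr 1; omega
  have : r ^ (n-1) * f' r ≤ (μ / ((n:ℝ) - 1) + r / (n:ℝ)) * r ^ (n-1) := by
    simp only [hG] at hGr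
    rw [hsplit] at hGr
    have : (μ / ((n:ℝ) - 1) + r / (n:ℝ)) * r ^ (n-1)
        = μ / ((n:ℝ) - 1) * r ^ (n-1) + r ^ (n-1) * r / (n:ℝ) := by ring
    linarith [hGr]
  have := le_of_mul_le_mul_right (by linarith [this] : f' r * r ^ (n-1) ≤ (μ / ((n:ℝ) - 1) + r / (n:ℝ)) * r ^ (n-1)) hrpow
  exact this
end
end

section
/- Let n ≥ 2, p > 1, set p′ = p/(p−1), and let R > 0, ρ₀ ≥ 0, ρ_∞ ≥ 0, θ ∈ [0,2] satisfy (θ−2)p′ + ρ₀ + n > 0. Then there exists a constant C > 0 such that for all T ≥ 2: T^{−p′} ∫_{T/2}^{T} [ ∫₀¹ (T^{−1} + r^{θ−2})^{p′} r^{ρ₀+n−1} dr + ∫₁^{t+R} (T^{−1} + r^{−1})^{p′} r^{ρ_∞+n−1} dr ] dt ≤ C·B(T), where B(T) = T^{−2p′+ρ_∞+n+1} if p′ < ρ_∞ + n, B(T) = T^{1−p′} ln T if p′ = ρ_∞ + n, and B(T) = T^{1−p′} if p′ > ρ_∞ + n. -/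
open MeasureTheory Set Real Filter

noncomputable section


lemma add_rpow_le' (a b q : ℝ) (ha : 0 ≤ a) (hb : 0 ≤ b) (hq : 0 ≤ q) :
    (a + b) ^ q ≤ 2 ^ q * (a ^ q + b ^ q) := by
  have hmax : a + b ≤ 2 * max a b := by
    rcases le_total a b with h | h
    · rw [max_eq_right h]; linarith
    · rw [max_eq_left h]; linarith
  have h0 : (0:ℝ) ≤ max a b := le_max_of_le_left ha
  calc (a + b) ^ q ≤ (2 * max a b) ^ q :=
        Real.rpow_le_rpow (by linarith) hmax hq
    _ = 2 ^ q * (max a b) ^ q := Real.mul_rpow (by norm_num) h0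
    _ ≤ 2 ^ q * (a ^ q + b ^ q) := by
        have : (max a b) ^ q ≤ a ^ q + b ^ q := by
          rcases le_total a b with h | h
          · rw [max_eq_right h]
            have := Real.rpow_nonneg ha q; linarith
          · rw [max_eq_left h]
            have := Real.rpow_nonneg hb q; linarith
        have h2 : (0:ℝ) ≤ (2:ℝ) ^ q := Real.rpow_nonneg (by norm_num) q
        nlinarith

lemma aux_inner (q θ ρσ : ℝ) (hq : 0 ≤ q) (hθ : θ ≤ 2) (hβ : 0 < (θ - 2) * q + ρσ)
    (T : ℝ) (hT : 1 ≤ T) :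
    ∫ r in Ioc (0:ℝ) 1, (T⁻¹ + r ^ (θ - 2)) ^ q * r ^ (ρσ - 1)
      ≤ 2 ^ q / ((θ - 2) * q + ρσ) := by
  set β := (θ - 2) * q + ρσ with hβdef
  have hg : IntegrableOn (fun r : ℝ => 2 ^ q * r ^ (β - 1)) (Ioc 0 1) := by
    rw [← intervalIntegrable_iff_integrableOn_Ioc_of_le zero_le_one]
    exact (intervalIntegral.intervalIntegrable_rpow' (by linarith)).const_mul _
  calc ∫ r in Ioc (0:ℝ) 1, (T⁻¹ + r ^ (θ - 2)) ^ q * r ^ (ρσ - 1)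
      ≤ ∫ r in Ioc (0:ℝ) 1, 2 ^ q * r ^ (β - 1) := by
        apply integral_mono_of_nonneg
        · filter_upwards [ae_restrict_mem measurableSet_Ioc] with r hr
          have h1 : (0:ℝ) ≤ T⁻¹ + r ^ (θ - 2) :=
            add_nonneg (inv_nonneg.2 (by linarith)) (Real.rpow_nonneg hr.1.le _)
          exact mul_nonneg (Real.rpow_nonneg h1 _) (Real.rpow_nonneg hr.1.le _)
        · exact hg
        · filter_upwards [ae_restrict_mem measurableSet_Ioc] with r hr
          have hr0 : 0 < r := hr.1
          have h1 : (1:ℝ) ≤ r ^ (θ - 2) :=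
            Real.one_le_rpow_of_pos_of_le_one_of_nonpos hr0 hr.2 (by linarith)
          have hTi : T⁻¹ ≤ 1 := inv_le_one_of_one_le₀ hT
          have hTnn : (0:ℝ) ≤ T⁻¹ := inv_nonneg.2 (by linarith)
          have h2 : T⁻¹ + r ^ (θ - 2) ≤ 2 * r ^ (θ - 2) := by linarith
          have h3 : (T⁻¹ + r ^ (θ - 2)) ^ q ≤ 2 ^ q * r ^ ((θ - 2) * q) := by
            calc (T⁻¹ + r ^ (θ - 2)) ^ q ≤ (2 * r ^ (θ - 2)) ^ q :=
                  Real.rpow_le_rpow (by linarith) h2 hq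
              _ = 2 ^ q * (r ^ (θ - 2)) ^ q :=
                  Real.mul_rpow (by norm_num) (Real.rpow_nonneg hr0.le _)
              _ = 2 ^ q * r ^ ((θ - 2) * q) := by
                  rw [← Real.rpow_mul hr0.le]
          calc (T⁻¹ + r ^ (θ - 2)) ^ q * r ^ (ρσ - 1)
              ≤ 2 ^ q * r ^ ((θ - 2) * q) * r ^ (ρσ - 1) :=
                mul_le_mul_of_nonneg_right h3 (Real.rpow_nonneg hr0.le _)
            _ = 2 ^ q * r ^ (β - 1) := by
                rw [mul_assoc, ← Real.rpow_add hr0]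
                congr 2
                rw [hβdef]; ring
    _ = 2 ^ q * ∫ r in Ioc (0:ℝ) 1, r ^ (β - 1) := integral_const_mul _ _
    _ = 2 ^ q / β := by
        rw [← intervalIntegral.integral_of_le zero_le_one,
          integral_rpow (Or.inl (by linarith : (-1:ℝ) < β - 1))]
        rw [Real.one_rpow, Real.zero_rpow (by linarith : β - 1 + 1 ≠ 0)]
        simp only [sub_add_cancel]
        ring

lemma aux_tail (q s : ℝ) (hq : 0 ≤ q) (hs : 0 ≤ s) (T b : ℝ) (hT : 1 ≤ T) (hb : 1 ≤ b) :
    ∫ r in Ioc (1:ℝ) b, (T⁻¹ + r⁻¹) ^ q * r ^ s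
      ≤ 2 ^ q * (T ^ (-q) * (b ^ (s + 1) / (s + 1))) + 2 ^ q * ∫ r in Ioc (1:ℝ) b, r ^ (s - q) := by
  have hnot : (0:ℝ) ∉ Set.uIcc (1:ℝ) b := by
    rw [Set.uIcc_of_le hb]
    intro h; exact absurd h.1 (by norm_num)
  have hg1 : IntegrableOn (fun r : ℝ => 2 ^ q * (T ^ (-q) * r ^ s)) (Ioc 1 b) := by
    rw [← intervalIntegrable_iff_integrableOn_Ioc_of_le hb]
    exact ((intervalIntegral.intervalIntegrable_rpow' (by linarith)).const_mul _).const_mul _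
  have hg2 : IntegrableOn (fun r : ℝ => 2 ^ q * r ^ (s - q)) (Ioc 1 b) := by
    rw [← intervalIntegrable_iff_integrableOn_Ioc_of_le hb]
    exact (intervalIntegral.intervalIntegrable_rpow (Or.inr hnot)).const_mul _
  have key : ∫ r in Ioc (1:ℝ) b, (T⁻¹ + r⁻¹) ^ q * r ^ s
      ≤ ∫ r in Ioc (1:ℝ) b, (2 ^ q * (T ^ (-q) * r ^ s) + 2 ^ q * r ^ (s - q)) := by
    apply integral_mono_of_nonneg
    · filter_upwards [ae_restrict_mem measurableSet_Ioc] with r hr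
      have hr0 : (0:ℝ) < r := lt_trans one_pos hr.1
      exact mul_nonneg (Real.rpow_nonneg (by positivity) _) (Real.rpow_nonneg hr0.le _)
    · exact hg1.add hg2
    · filter_upwards [ae_restrict_mem measurableSet_Ioc] with r hr
      have hr0 : (0:ℝ) < r := lt_trans one_pos hr.1
      have hT0 : (0:ℝ) < T := by linarith
      have h1 : (T⁻¹ + r⁻¹) ^ q ≤ 2 ^ q * (T ^ (-q) + r ^ (-q)) := by
        have h := add_rpow_le' T⁻¹ r⁻¹ q (by positivity) (by positivity) hq
        have e1 : (T⁻¹) ^ q = T ^ (-q) := by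
          rw [← Real.rpow_neg_one, ← Real.rpow_mul hT0.le]; norm_num
        have e2 : (r⁻¹) ^ q = r ^ (-q) := by
          rw [← Real.rpow_neg_one, ← Real.rpow_mul hr0.le]; norm_num
        rwa [e1, e2] at h
      calc (T⁻¹ + r⁻¹) ^ q * r ^ s ≤ 2 ^ q * (T ^ (-q) + r ^ (-q)) * r ^ s :=
            mul_le_mul_of_nonneg_right h1 (Real.rpow_nonneg hr0.le _)
        _ = 2 ^ q * (T ^ (-q) * r ^ s) + 2 ^ q * (r ^ (-q) * r ^ s) := by ring
        _ = 2 ^ q * (T ^ (-q) * r ^ s) + 2 ^ q * r ^ (s - q) := by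
            rw [← Real.rpow_add hr0]; ring_nf
  have hsplit : ∫ r in Ioc (1:ℝ) b, (2 ^ q * (T ^ (-q) * r ^ s) + 2 ^ q * r ^ (s - q))
      = (∫ r in Ioc (1:ℝ) b, 2 ^ q * (T ^ (-q) * r ^ s)) + ∫ r in Ioc (1:ℝ) b, 2 ^ q * r ^ (s - q) :=
    integral_add hg1 hg2
  have hval : ∫ r in Ioc (1:ℝ) b, 2 ^ q * (T ^ (-q) * r ^ s)
      ≤ 2 ^ q * (T ^ (-q) * (b ^ (s + 1) / (s + 1))) := by
    rw [integral_const_mul, integral_const_mul]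
    have : ∫ r in Ioc (1:ℝ) b, r ^ s = (b ^ (s + 1) - 1) / (s + 1) := by
      rw [← intervalIntegral.integral_of_le hb, integral_rpow (Or.inl (by linarith)),
        Real.one_rpow]
    rw [this]
    have h2q : (0:ℝ) ≤ 2 ^ q := Real.rpow_nonneg (by norm_num) q
    have hTq : (0:ℝ) ≤ T ^ (-q) := Real.rpow_nonneg (by linarith) _
    have : (b ^ (s + 1) - 1) / (s + 1) ≤ b ^ (s + 1) / (s + 1) := by
      apply div_le_div_of_nonneg_right ?_ (by linarith)
      linarith
    exact mul_le_mul_of_nonneg_left (mul_le_mul_of_nonneg_left this hTq) h2q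
  have h2 : ∫ r in Ioc (1:ℝ) b, 2 ^ q * r ^ (s - q) = 2 ^ q * ∫ r in Ioc (1:ℝ) b, r ^ (s - q) :=
    integral_const_mul _ _
  linarith [key, hsplit ▸ key]



lemma K_lt (α b : ℝ) (hα : -1 < α) (hb : 1 ≤ b) :
    ∫ r in Ioc (1:ℝ) b, r ^ α ≤ b ^ (α + 1) / (α + 1) := by
  rw [← intervalIntegral.integral_of_le hb, integral_rpow (Or.inl hα), Real.one_rpow]
  apply div_le_div_of_nonneg_right ?_ (by linarith)
  linarith

lemma K_eq (b : ℝ) (hb : 1 ≤ b) :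
    ∫ r in Ioc (1:ℝ) b, r ^ (-1:ℝ) = Real.log b := by
  rw [← intervalIntegral.integral_of_le hb]
  have hnot : (0:ℝ) ∉ Set.uIcc (1:ℝ) b := by
    rw [Set.uIcc_of_le hb]; intro h; exact absurd h.1 (by norm_num)
  simp only [Real.rpow_neg_one]
  rw [integral_inv hnot, div_one]

lemma K_gt (α b : ℝ) (hα : α < -1) (hb : 1 ≤ b) :
    ∫ r in Ioc (1:ℝ) b, r ^ α ≤ 1 / (-α - 1) := by
  have hnot : (0:ℝ) ∉ Set.uIcc (1:ℝ) b := by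
    rw [Set.uIcc_of_le hb]; intro h; exact absurd h.1 (by norm_num)
  rw [← intervalIntegral.integral_of_le hb,
    integral_rpow (Or.inr ⟨by linarith, hnot⟩), Real.one_rpow]
  have hb0 : (0:ℝ) < b ^ (α + 1) := Real.rpow_pos_of_pos (by linarith) _
  have e : (b ^ (α + 1) - 1) / (α + 1) = (1 - b ^ (α + 1)) / (-α - 1) := by
    have : -α - 1 = -(α + 1) := by ring
    rw [this, div_neg, ← neg_div, neg_sub]
  rw [e]
  apply div_le_div_of_nonneg_right ?_ (by linarith)
  linarith

lemma outer_step (T M : ℝ) (hT : 0 ≤ T) (f : ℝ → ℝ)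
    (hf : ∀ t ∈ Ioc (T/2) T, ‖f t‖ ≤ M) :
    ∫ t in Ioc (T/2) T, f t ≤ M * (T/2) := by
  have h := norm_setIntegral_le_of_norm_le_const (μ := volume) (s := Ioc (T/2) T)
      measure_Ioc_lt_top hf
  rw [measureReal_def, Real.volume_Ioc, ENNReal.toReal_ofReal (by linarith)] at h
  have e : T - T/2 = T/2 := by ring
  rw [e] at h
  calc ∫ t in Ioc (T/2) T, f t ≤ ‖∫ t in Ioc (T/2) T, f t‖ := le_abs_self _
    _ ≤ M * (T/2) := h

lemma big_step (n : ℕ) (q R ρ₀ ρinf θ : ℝ) (hq1 : 1 < q) (hR : 0 < R)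
    (hρ₀ : 0 ≤ ρ₀) (hρinf : 0 ≤ ρinf) (hn : 2 ≤ n) (hθ : θ ∈ Icc (0:ℝ) 2)
    (hβ : 0 < (θ - 2) * q + (ρ₀ + (n : ℝ)))
    (T KT : ℝ) (hT : 2 ≤ T) (hKT : 0 ≤ KT)
    (hK : ∀ b, 1 ≤ b → b ≤ (1 + R/2) * T →
      ∫ r in Ioc (1:ℝ) b, r ^ (ρinf + (n : ℝ) - 1 - q) ≤ KT) :
    ∫ t in Ioc (T/2) T,
        ((∫ r in Ioc (0 : ℝ) 1, (T⁻¹ + r ^ (θ - 2)) ^ q * r ^ (ρ₀ + (n : ℝ) - 1)) +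
         (∫ r in Ioc (1 : ℝ) (t + R), (T⁻¹ + r⁻¹) ^ q * r ^ (ρinf + (n : ℝ) - 1)))
      ≤ (2 ^ q / ((θ - 2) * q + (ρ₀ + (n : ℝ)))
          + 2 ^ q * ((1 + R/2) ^ (ρinf + (n : ℝ)) / (ρinf + (n : ℝ))) * T ^ (ρinf + (n : ℝ) - q)
          + 2 ^ q * KT) * (T / 2) := by
  have hT0 : (0:ℝ) < T := by linarith
  have hT1 : (1:ℝ) ≤ T := by linarith
  have hn2 : (2:ℝ) ≤ (n:ℝ) := by exact_mod_cast hn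
  set ρn := ρinf + (n : ℝ) with hρndef
  have hρn2 : 2 ≤ ρn := by rw [hρndef]; linarith
  set c := 1 + R/2 with hcdef
  have hc1 : 1 < c := by rw [hcdef]; linarith
  have h2q : (0:ℝ) < 2 ^ q := Real.rpow_pos_of_pos (by norm_num) q
  have hM₀ : (0:ℝ) < 2 ^ q / ((θ - 2) * q + (ρ₀ + (n : ℝ))) := div_pos h2q hβ
  have hTq : (0:ℝ) ≤ T ^ (ρn - q) := Real.rpow_nonneg hT0.le _
  have hcterm : (0:ℝ) < 2 ^ q * (c ^ ρn / ρn) :=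
    mul_pos h2q (div_pos (Real.rpow_pos_of_pos (by linarith) _) (by linarith))
  apply outer_step T _ hT0.le
  intro t ht
  have hb1 : (1:ℝ) ≤ t + R := by
    have : (1:ℝ) ≤ T/2 := by linarith
    have := ht.1; linarith
  have hbc : t + R ≤ c * T := by
    have h1 : t ≤ T := ht.2
    have h2 : R ≤ R * (T/2) := by nlinarith
    rw [hcdef]; nlinarith
  -- inner integral bounds
  have hI₀le := aux_inner q θ (ρ₀ + (n:ℝ)) (by linarith) hθ.2 hβ T hT1
  have hI₀nn : 0 ≤ ∫ r in Ioc (0:ℝ) 1, (T⁻¹ + r ^ (θ - 2)) ^ q * r ^ (ρ₀ + (n : ℝ) - 1) := by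
    apply setIntegral_nonneg measurableSet_Ioc
    intro r hr
    have h1 : (0:ℝ) ≤ T⁻¹ + r ^ (θ - 2) :=
      add_nonneg (inv_nonneg.2 hT0.le) (Real.rpow_nonneg hr.1.le _)
    exact mul_nonneg (Real.rpow_nonneg h1 _) (Real.rpow_nonneg hr.1.le _)
  have hIinfnn : 0 ≤ ∫ r in Ioc (1:ℝ) (t + R), (T⁻¹ + r⁻¹) ^ q * r ^ (ρn - 1) := by
    apply setIntegral_nonneg measurableSet_Ioc
    intro r hr
    have hr0 : (0:ℝ) < r := lt_trans one_pos hr.1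
    exact mul_nonneg (Real.rpow_nonneg (by positivity) _) (Real.rpow_nonneg hr0.le _)
  -- tail bound
  have htail := aux_tail q (ρn - 1) (by linarith) (by linarith) T (t + R) hT1 hb1
  have e1 : ρn - 1 + 1 = ρn := by ring
  rw [e1] at htail
  have e2 : ρn - 1 - q = ρn - 1 - q := rfl
  have hKb := hK (t + R) hb1 hbc
  have hpow : (t + R) ^ ρn ≤ c ^ ρn * T ^ ρn := by
    calc (t + R) ^ ρn ≤ (c * T) ^ ρn :=
          Real.rpow_le_rpow (by linarith) hbc (by linarith)
      _ = c ^ ρn * T ^ ρn := Real.mul_rpow (by linarith) hT0.le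
  have hTnq : (0:ℝ) ≤ T ^ (-q) := Real.rpow_nonneg hT0.le _
  have hcomb : T ^ (-q) * T ^ ρn = T ^ (ρn - q) := by
    rw [← Real.rpow_add hT0]; congr 1; ring
  have hIinfle : ∫ r in Ioc (1:ℝ) (t + R), (T⁻¹ + r⁻¹) ^ q * r ^ (ρn - 1)
      ≤ 2 ^ q * (c ^ ρn / ρn) * T ^ (ρn - q) + 2 ^ q * KT := by
    have step1 : T ^ (-q) * ((t + R) ^ ρn / ρn) ≤ (c ^ ρn / ρn) * T ^ (ρn - q) := by
      have : T ^ (-q) * ((t + R) ^ ρn / ρn) ≤ T ^ (-q) * (c ^ ρn * T ^ ρn / ρn) := by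
        apply mul_le_mul_of_nonneg_left _ hTnq
        exact div_le_div_of_nonneg_right hpow (by linarith)
      calc T ^ (-q) * ((t + R) ^ ρn / ρn) ≤ T ^ (-q) * (c ^ ρn * T ^ ρn / ρn) := this
        _ = (c ^ ρn / ρn) * (T ^ (-q) * T ^ ρn) := by ring
        _ = (c ^ ρn / ρn) * T ^ (ρn - q) := by rw [hcomb]
    calc ∫ r in Ioc (1:ℝ) (t + R), (T⁻¹ + r⁻¹) ^ q * r ^ (ρn - 1)
        ≤ 2 ^ q * (T ^ (-q) * ((t + R) ^ ρn / ρn)) + 2 ^ q * ∫ r in Ioc (1:ℝ) (t + R), r ^ (ρn - 1 - q) := htail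
      _ ≤ 2 ^ q * ((c ^ ρn / ρn) * T ^ (ρn - q)) + 2 ^ q * KT := by
          have := mul_le_mul_of_nonneg_left step1 h2q.le
          have h2 := mul_le_mul_of_nonneg_left hKb h2q.le
          linarith
      _ = 2 ^ q * (c ^ ρn / ρn) * T ^ (ρn - q) + 2 ^ q * KT := by ring
  -- combine
  rw [Real.norm_eq_abs, abs_le]
  constructor
  · have : 0 ≤ 2 ^ q / ((θ - 2) * q + (ρ₀ + (n : ℝ)))
        + 2 ^ q * (c ^ ρn / ρn) * T ^ (ρn - q) + 2 ^ q * KT := by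
      have := mul_nonneg hcterm.le hTq
      have := mul_nonneg h2q.le hKT
      linarith
    linarith
  · linarith

set_option maxHeartbeats 1600000 in
/-- The `F₀` estimate: for `p′ = p/(p−1)` and `(θ−2)p′ + ρ₀ + n > 0`,
`T^{−p′}∫_{T/2}^{T}[∫₀¹(T^{−1}+r^{θ−2})^{p′}r^{ρ₀+n−1}dr + ∫₁^{t+R}(T^{−1}+r^{−1})^{p′}r^{ρ_∞+n−1}dr]dt`
is bounded by `C·B(T)` with `B(T) = T^{−2p′+ρ_∞+n+1}`, `T^{1−p′}ln T`, `T^{1−p′}` according to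
whether `p′ < ρ_∞+n`, `p′ = ρ_∞+n`, `p′ > ρ_∞+n`. -/
theorem F0_estimate
    (n : ℕ) (hn : 2 ≤ n) (p R ρ₀ ρinf θ : ℝ) (hp : 1 < p) (hR : 0 < R)
    (hρ₀ : 0 ≤ ρ₀) (hρinf : 0 ≤ ρinf) (hθ : θ ∈ Icc (0 : ℝ) 2)
    (hint : (θ - 2) * (p / (p - 1)) + ρ₀ + (n : ℝ) > 0) :
    ∃ C > (0 : ℝ), ∀ T : ℝ, 2 ≤ T →
      ((p / (p - 1) < ρinf + (n : ℝ) →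
        T ^ (-(p / (p - 1))) *
          (∫ t in Ioc (T / 2) T,
            ((∫ r in Ioc (0 : ℝ) 1,
                (T⁻¹ + r ^ (θ - 2)) ^ (p / (p - 1)) * r ^ (ρ₀ + (n : ℝ) - 1)) +
             (∫ r in Ioc (1 : ℝ) (t + R),
                (T⁻¹ + r⁻¹) ^ (p / (p - 1)) * r ^ (ρinf + (n : ℝ) - 1))))
          ≤ C * T ^ (-2 * (p / (p - 1)) + ρinf + (n : ℝ) + 1)) ∧
       (p / (p - 1) = ρinf + (n : ℝ) →
        T ^ (-(p / (p - 1))) *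
          (∫ t in Ioc (T / 2) T,
            ((∫ r in Ioc (0 : ℝ) 1,
                (T⁻¹ + r ^ (θ - 2)) ^ (p / (p - 1)) * r ^ (ρ₀ + (n : ℝ) - 1)) +
             (∫ r in Ioc (1 : ℝ) (t + R),
                (T⁻¹ + r⁻¹) ^ (p / (p - 1)) * r ^ (ρinf + (n : ℝ) - 1))))
          ≤ C * T ^ (1 - p / (p - 1)) * Real.log T) ∧
       (ρinf + (n : ℝ) < p / (p - 1) →
        T ^ (-(p / (p - 1))) *
          (∫ t in Ioc (T / 2) T,
            ((∫ r in Ioc (0 : ℝ) 1,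
                (T⁻¹ + r ^ (θ - 2)) ^ (p / (p - 1)) * r ^ (ρ₀ + (n : ℝ) - 1)) +
             (∫ r in Ioc (1 : ℝ) (t + R),
                (T⁻¹ + r⁻¹) ^ (p / (p - 1)) * r ^ (ρinf + (n : ℝ) - 1))))
          ≤ C * T ^ (1 - p / (p - 1)))) := by
  have hp1 : (0:ℝ) < p - 1 := by linarith
  set q := p / (p - 1) with hqdef
  have hq1 : 1 < q := by rw [hqdef, lt_div_iff₀ hp1]; linarith
  clear_value q
  have hn2 : (2:ℝ) ≤ (n:ℝ) := by exact_mod_cast hn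
  have hρn2 : 2 ≤ ρinf + (n:ℝ) := by linarith
  have hc1 : 1 < 1 + R/2 := by linarith
  have h2q : (0:ℝ) < 2^q := Real.rpow_pos_of_pos two_pos q
  have hβ : 0 < (θ-2)*q + (ρ₀ + (n:ℝ)) := by linarith [hint]
  have hM₀ : 0 < 2^q / ((θ-2)*q + (ρ₀+(n:ℝ))) := div_pos h2q hβ
  have hD : 0 < 2^q * ((1+R/2)^(ρinf+(n:ℝ)) / (ρinf+(n:ℝ))) :=
    mul_pos h2q (div_pos (Real.rpow_pos_of_pos (by linarith) _) (by linarith))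
  rcases lt_trichotomy q (ρinf + (n:ℝ)) with hcase | hcase | hcase
  · -- q < ρn
    have hA : 0 < 2^q * ((1+R/2)^(ρinf+(n:ℝ)-q)/(ρinf+(n:ℝ)-q)) :=
      mul_pos h2q (div_pos (Real.rpow_pos_of_pos (by linarith) _) (by linarith))
    refine ⟨2^q / ((θ-2)*q + (ρ₀+(n:ℝ)))
        + 2^q * ((1+R/2)^(ρinf+(n:ℝ)) / (ρinf+(n:ℝ)))
        + 2^q * ((1+R/2)^(ρinf+(n:ℝ)-q)/(ρinf+(n:ℝ)-q)), by linarith, ?_⟩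
    intro T hT
    have hT0 : (0:ℝ) < T := by linarith
    have hT1 : (1:ℝ) ≤ T := by linarith
    refine ⟨fun _ => ?_, fun h => absurd h (ne_of_lt hcase),
      fun h => absurd h (not_lt.2 hcase.le)⟩
    have hKT0 : 0 ≤ (1+R/2)^(ρinf+(n:ℝ)-q)/(ρinf+(n:ℝ)-q) * T^(ρinf+(n:ℝ)-q) :=
      mul_nonneg (div_nonneg (Real.rpow_nonneg (by linarith) _) (by linarith))
        (Real.rpow_nonneg hT0.le _)
    have hK : ∀ b, 1 ≤ b → b ≤ (1+R/2)*T →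
        ∫ r in Ioc (1:ℝ) b, r^(ρinf+(n:ℝ) - 1 - q)
          ≤ (1+R/2)^(ρinf+(n:ℝ)-q)/(ρinf+(n:ℝ)-q) * T^(ρinf+(n:ℝ)-q) := by
      intro b hb hbc
      have h1 := K_lt (ρinf+(n:ℝ)-1-q) b (by linarith) hb
      have e : ρinf+(n:ℝ)-1-q+1 = ρinf+(n:ℝ)-q := by ring
      rw [e] at h1
      have h2 : b^(ρinf+(n:ℝ)-q) ≤ (1+R/2)^(ρinf+(n:ℝ)-q) * T^(ρinf+(n:ℝ)-q) := by
        calc b^(ρinf+(n:ℝ)-q) ≤ ((1+R/2)*T)^(ρinf+(n:ℝ)-q) :=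
              Real.rpow_le_rpow (by linarith) hbc (by linarith)
          _ = (1+R/2)^(ρinf+(n:ℝ)-q)*T^(ρinf+(n:ℝ)-q) := Real.mul_rpow (by linarith) hT0.le
      calc ∫ r in Ioc (1:ℝ) b, r^(ρinf+(n:ℝ) - 1 - q) ≤ b^(ρinf+(n:ℝ)-q)/(ρinf+(n:ℝ)-q) := h1
        _ ≤ ((1+R/2)^(ρinf+(n:ℝ)-q)*T^(ρinf+(n:ℝ)-q))/(ρinf+(n:ℝ)-q) :=
            div_le_div_of_nonneg_right h2 (by linarith)
        _ = (1+R/2)^(ρinf+(n:ℝ)-q)/(ρinf+(n:ℝ)-q) * T^(ρinf+(n:ℝ)-q) := by ring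
    have hbig := big_step n q R ρ₀ ρinf θ hq1 hR hρ₀ hρinf hn hθ hβ T _ hT hKT0 hK
    have hstep := mul_le_mul_of_nonneg_left hbig (Real.rpow_nonneg hT0.le (-q))
    have pA : T^(-q)*T^(ρinf+(n:ℝ)-q)*T = T^(-2*q+ρinf+(n:ℝ)+1) := by
      nth_rewrite 3 [← Real.rpow_one T]
      rw [← Real.rpow_add hT0, ← Real.rpow_add hT0]
      congr 1; ring
    have p1 : T^(-q)*T = T^(-q+1) := by
      nth_rewrite 2 [← Real.rpow_one T]
      rw [← Real.rpow_add hT0]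
    have hcmp : T^(-q+1) ≤ T^(-2*q+ρinf+(n:ℝ)+1) :=
      Real.rpow_le_rpow_of_exponent_le hT1 (by linarith)
    have hpos2 : (0:ℝ) < T^(-2*q+ρinf+(n:ℝ)+1) := Real.rpow_pos_of_pos hT0 _
    set M₀ := 2^q / ((θ-2)*q + (ρ₀+(n:ℝ))) with hM₀def
    set D := 2^q * ((1+R/2)^(ρinf+(n:ℝ)) / (ρinf+(n:ℝ))) with hDdef
    set E := 2^q * ((1+R/2)^(ρinf+(n:ℝ)-q)/(ρinf+(n:ℝ)-q)) with hEdef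
    clear_value M₀ D E
    have k1 : M₀/2 * T^(-q+1) ≤ M₀/2 * T^(-2*q+ρinf+(n:ℝ)+1) :=
      mul_le_mul_of_nonneg_left hcmp (by linarith)
    have k2 : (0:ℝ) < (M₀ + D + E) * T^(-2*q+ρinf+(n:ℝ)+1) :=
      mul_pos (by linarith) hpos2
    calc T^(-q) * (∫ t in Ioc (T / 2) T,
            ((∫ r in Ioc (0 : ℝ) 1, (T⁻¹ + r ^ (θ - 2)) ^ q * r ^ (ρ₀ + (n : ℝ) - 1)) +
             (∫ r in Ioc (1 : ℝ) (t + R), (T⁻¹ + r⁻¹) ^ q * r ^ (ρinf + (n:ℝ) - 1))))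
        ≤ T^(-q) * ((M₀ + D * T^(ρinf+(n:ℝ)-q)
            + E * T^(ρinf+(n:ℝ)-q)) * (T/2)) := by
          have e3 : (2:ℝ)^q * ((1+R/2)^(ρinf+(n:ℝ)-q)/(ρinf+(n:ℝ)-q) * T^(ρinf+(n:ℝ)-q))
              = E * T^(ρinf+(n:ℝ)-q) := by rw [hEdef]; ring
          rw [← e3]
          exact hstep
      _ = (M₀/2)*(T^(-q)*T) + ((D+E)/2)*(T^(-q)*T^(ρinf+(n:ℝ)-q)*T) := by ring
      _ = (M₀/2)*T^(-q+1) + ((D+E)/2)*T^(-2*q+ρinf+(n:ℝ)+1) := by rw [p1, pA]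
      _ ≤ (M₀ + D + E)*T^(-2*q+ρinf+(n:ℝ)+1) := by nlinarith [k1, mul_pos (show (0:ℝ) < M₀ + D + E by linarith) hpos2]
  · -- q = ρn
    have hlogc : 0 ≤ Real.log (1+R/2) := Real.log_nonneg hc1.le
    have hlog2 : 0 < Real.log 2 := Real.log_pos (by norm_num)
    refine ⟨(2^q / ((θ-2)*q + (ρ₀+(n:ℝ))) + 2^q * ((1+R/2)^(ρinf+(n:ℝ)) / (ρinf+(n:ℝ)))
        + 2^q * Real.log (1+R/2)) / Real.log 2 + 2^q, by positivity, ?_⟩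
    intro T hT
    have hT0 : (0:ℝ) < T := by linarith
    have hT1 : (1:ℝ) ≤ T := by linarith
    have hlogT : 0 ≤ Real.log T := Real.log_nonneg hT1
    have hlog2T : Real.log 2 ≤ Real.log T := Real.log_le_log (by norm_num) hT
    refine ⟨fun h => absurd h (by rw [hcase]; exact lt_irrefl _), fun _ => ?_,
      fun h => absurd h (by rw [hcase]; exact lt_irrefl _)⟩
    have hKT0 : 0 ≤ Real.log (1+R/2) + Real.log T := by linarith
    have hK : ∀ b, 1 ≤ b → b ≤ (1+R/2)*T →
        ∫ r in Ioc (1:ℝ) b, r^(ρinf+(n:ℝ) - 1 - q) ≤ Real.log (1+R/2) + Real.log T := by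
      intro b hb hbc
      have e : ρinf+(n:ℝ) - 1 - q = -1 := by rw [← hcase]; ring
      rw [e, K_eq b hb]
      calc Real.log b ≤ Real.log ((1+R/2)*T) := Real.log_le_log (by linarith) hbc
        _ = Real.log (1+R/2) + Real.log T := Real.log_mul (by linarith) (by linarith)
    have hbig := big_step n q R ρ₀ ρinf θ hq1 hR hρ₀ hρinf hn hθ hβ T _ hT hKT0 hK
    have hstep := mul_le_mul_of_nonneg_left hbig (Real.rpow_nonneg hT0.le (-q))
    have e0 : T^(ρinf+(n:ℝ)-q) = 1 := by
      rw [show ρinf+(n:ℝ) - q = 0 by rw [← hcase]; ring, Real.rpow_zero]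
    have p1 : T^(-q)*T = T^(1-q) := by
      nth_rewrite 2 [← Real.rpow_one T]
      rw [← Real.rpow_add hT0]; congr 1; ring
    have hpos2 : (0:ℝ) < T^(1-q) := Real.rpow_pos_of_pos hT0 _
    rw [e0] at hstep
    set M₀ := 2^q / ((θ-2)*q + (ρ₀+(n:ℝ))) with hM₀def
    set D := 2^q * ((1+R/2)^(ρinf+(n:ℝ)) / (ρinf+(n:ℝ))) with hDdef
    set L := Real.log (1+R/2) with hLdef
    clear_value M₀ D L
    have hK₀ : (0:ℝ) < M₀ + D + 2^q * L := by nlinarith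
    have hMle : (M₀ + D + 2^q*L) + 2^q * Real.log T
        ≤ ((M₀ + D + 2^q*L) / Real.log 2 + 2^q) * Real.log T := by
      have h1 : (M₀ + D + 2^q*L) = ((M₀ + D + 2^q*L) / Real.log 2) * Real.log 2 := by
        field_simp
      have h2 : ((M₀ + D + 2^q*L) / Real.log 2) * Real.log 2
          ≤ ((M₀ + D + 2^q*L) / Real.log 2) * Real.log T :=
        mul_le_mul_of_nonneg_left hlog2T (by positivity)
      nlinarith
    calc T^(-q) * (∫ t in Ioc (T / 2) T,
            ((∫ r in Ioc (0 : ℝ) 1, (T⁻¹ + r ^ (θ - 2)) ^ q * r ^ (ρ₀ + (n : ℝ) - 1)) +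
             (∫ r in Ioc (1 : ℝ) (t + R), (T⁻¹ + r⁻¹) ^ q * r ^ (ρinf + (n:ℝ) - 1))))
        ≤ T^(-q) * ((M₀ + D * 1 + 2^q * (L + Real.log T)) * (T/2)) := hstep
      _ = (((M₀ + D + 2^q*L) + 2^q * Real.log T)/2) * (T^(-q)*T) := by ring
      _ = (((M₀ + D + 2^q*L) + 2^q * Real.log T)/2) * T^(1-q) := by rw [p1]
      _ ≤ (((M₀ + D + 2^q*L) / Real.log 2 + 2^q) * Real.log T) * T^(1-q) := by
          have h3 : (0:ℝ) ≤ (M₀ + D + 2^q*L) + 2^q * Real.log T := by nlinarith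
          have h4 := mul_le_mul_of_nonneg_right
            (le_trans (by linarith : ((M₀ + D + 2^q*L) + 2^q * Real.log T)/2
                ≤ (M₀ + D + 2^q*L) + 2^q * Real.log T) hMle) hpos2.le
          linarith
      _ = ((M₀ + D + 2^q*L) / Real.log 2 + 2^q) * T^(1-q) * Real.log T := by ring
  · -- ρn < q
    have hE : (0:ℝ) < 2^q * (1/(q-(ρinf+(n:ℝ)))) := by
      apply mul_pos h2q
      apply div_pos one_pos
      linarith
    refine ⟨2^q / ((θ-2)*q + (ρ₀+(n:ℝ))) + 2^q * ((1+R/2)^(ρinf+(n:ℝ)) / (ρinf+(n:ℝ)))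
        + 2^q * (1/(q-(ρinf+(n:ℝ)))), by linarith, ?_⟩
    intro T hT
    have hT0 : (0:ℝ) < T := by linarith
    have hT1 : (1:ℝ) ≤ T := by linarith
    refine ⟨fun h => absurd h (not_lt.2 hcase.le), fun h => absurd h (ne_of_gt hcase),
      fun _ => ?_⟩
    have hKT0 : (0:ℝ) ≤ 1/(q-(ρinf+(n:ℝ))) := by
      apply div_nonneg zero_le_one; linarith
    have hK : ∀ b, 1 ≤ b → b ≤ (1+R/2)*T →
        ∫ r in Ioc (1:ℝ) b, r^(ρinf+(n:ℝ) - 1 - q) ≤ 1/(q-(ρinf+(n:ℝ))) := by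
      intro b hb _
      have h1 := K_gt (ρinf+(n:ℝ)-1-q) b (by linarith) hb
      have e : -(ρinf+(n:ℝ)-1-q) - 1 = q - (ρinf+(n:ℝ)) := by ring
      rwa [e] at h1
    have hbig := big_step n q R ρ₀ ρinf θ hq1 hR hρ₀ hρinf hn hθ hβ T _ hT hKT0 hK
    have hstep := mul_le_mul_of_nonneg_left hbig (Real.rpow_nonneg hT0.le (-q))
    have e0 : T^(ρinf+(n:ℝ)-q) ≤ 1 := Real.rpow_le_one_of_one_le_of_nonpos hT1 (by linarith)
    have hTq0 : (0:ℝ) ≤ T^(ρinf+(n:ℝ)-q) := Real.rpow_nonneg hT0.le _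
    have p1 : T^(-q)*T = T^(1-q) := by
      nth_rewrite 2 [← Real.rpow_one T]
      rw [← Real.rpow_add hT0]; congr 1; ring
    have hpos2 : (0:ℝ) < T^(1-q) := Real.rpow_pos_of_pos hT0 _
    set M₀ := 2^q / ((θ-2)*q + (ρ₀+(n:ℝ))) with hM₀def
    set D := 2^q * ((1+R/2)^(ρinf+(n:ℝ)) / (ρinf+(n:ℝ))) with hDdef
    set E := 2^q * (1/(q-(ρinf+(n:ℝ)))) with hEdef
    set Y := T^(ρinf+(n:ℝ)-q) with hYdef
    clear_value M₀ D E Y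
    calc T^(-q) * (∫ t in Ioc (T / 2) T,
            ((∫ r in Ioc (0 : ℝ) 1, (T⁻¹ + r ^ (θ - 2)) ^ q * r ^ (ρ₀ + (n : ℝ) - 1)) +
             (∫ r in Ioc (1 : ℝ) (t + R), (T⁻¹ + r⁻¹) ^ q * r ^ (ρinf + (n:ℝ) - 1))))
        ≤ T^(-q) * ((M₀ + D * Y + E) * (T/2)) := hstep
      _ = ((M₀ + D * Y + E)/2) * (T^(-q)*T) := by ring
      _ = ((M₀ + D * Y + E)/2) * T^(1-q) := by rw [p1]
      _ ≤ (M₀ + D + E) * T^(1-q) := by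
          have hDY : D * Y ≤ D := by nlinarith
          have hM : (M₀ + D * Y + E)/2 ≤ M₀ + D + E := by nlinarith
          exact mul_le_mul_of_nonneg_right hM hpos2.le
end
end
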